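/- arXiv:2403.03380 — 7 statements merged into one kernel-verified Lean document; each statement's English description precedes it below -/
import Mathlib

section
/- Under the stated assumptions, the infimum over all Borel-measurable estimators φ : E → 𝒜 of the expected loss E[L(Y, φ(X))] equals the integral ∫_E ( inf_{a ∈ 𝒜} ∫_ℝ L(y, a) dκ(x)(y) ) d(P ∘ X⁻¹)(x), where κ is a regular conditional distribution of Y given X (Mathlib's condDistrib). In other words, the minimum estimation error based on X equals the L-conditional entropy H_L(Y | X). -/
open MeasureTheory ProbabilityTheory

/-- The minimum expected loss over all Borel-measurable estimators
`φ : E → 𝒜` of `Y` based on `X` equals the `L`-conditional entropy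
`H_L(Y | X) = ∫ (inf_a ∫ L(y,a) dκ(x)(y)) d(P ∘ X⁻¹)(x)`, where
`κ = condDistrib Y X P` is the regular conditional distribution of `Y` given `X`. -/
theorem min_estimation_error_eq_L_conditional_entropy
    {Ω E 𝒜 : Type*} [MeasurableSpace Ω]
    [MeasurableSpace E] [StandardBorelSpace E]
    [MetricSpace 𝒜] [CompactSpace 𝒜] [Nonempty 𝒜]
    [MeasurableSpace 𝒜] [BorelSpace 𝒜]
    (P : Measure Ω) [IsProbabilityMeasure P]
    (Y : Ω → ℝ) (X : Ω → E) (hY : Measurable Y) (hX : Measurable X)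
    (L : ℝ × 𝒜 → ℝ) (hLmeas : Measurable L)
    (hLbdd : ∃ C : ℝ, ∀ y a, |L (y, a)| ≤ C)
    (hLcont : ∀ y : ℝ, Continuous fun a => L (y, a)) :
    (⨅ φ : {φ : E → 𝒜 // Measurable φ}, ∫ ω, L (Y ω, φ.1 (X ω)) ∂P)
      = ∫ x, (⨅ a : 𝒜, ∫ y, L (y, a) ∂(condDistrib Y X P x)) ∂(P.map X) := by
  classical
  obtain ⟨C, hC⟩ := hLbdd
  have hXY : Measurable fun ω => (X ω, Y ω) := hX.prodMk hY
  set ρ : Measure (E × ℝ) := P.map (fun ω => (X ω, Y ω)) with hρdef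
  have hρ_prob : IsProbabilityMeasure ρ := Measure.isProbabilityMeasure_map hXY.aemeasurable
  have hν_prob : IsProbabilityMeasure (P.map X) := Measure.isProbabilityMeasure_map hX.aemeasurable
  have hκ_eq : condDistrib Y X P = ρ.condKernel := by rw [condDistrib]
  have hfst : ρ.fst = P.map X := Measure.fst_map_prodMk hY
  set g : E → 𝒜 → ℝ := fun x a => ∫ y, L (y, a) ∂(condDistrib Y X P x) with hgdef
  -- measurability of `g · a`
  have hg_meas : ∀ a, Measurable fun x => g x a := by
    intro a
    have : StronglyMeasurable fun p : E × ℝ => L (p.2, a) :=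
      (hLmeas.comp (measurable_snd.prodMk measurable_const)).stronglyMeasurable
    exact this.integral_kernel_prod_right'.measurable
  -- bound on g
  have hg_bdd : ∀ x a, |g x a| ≤ C := by
    intro x a
    have : ‖∫ y, L (y, a) ∂(condDistrib Y X P x)‖ ≤ C * ((condDistrib Y X P x) Set.univ).toReal :=
      norm_integral_le_of_norm_le_const (ae_of_all _ fun y => by
        simpa [Real.norm_eq_abs] using hC y a)
    simpa [Real.norm_eq_abs] using this
  have hC0 : 0 ≤ C := (abs_nonneg _).trans (hC 0 (Classical.arbitrary 𝒜))
  -- continuity of `g x`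
  have hg_cont : ∀ x, Continuous (g x) := by
    intro x
    refine continuous_of_dominated (bound := fun _ => C)
      (fun a => (hLmeas.comp (measurable_id.prodMk measurable_const)).aestronglyMeasurable)
      (fun a => ae_of_all _ fun y => by simpa [Real.norm_eq_abs] using hC y a)
      (integrable_const C) (ae_of_all _ fun y => hLcont y)
  -- dense sequence in 𝒜
  set u : ℕ → 𝒜 := TopologicalSpace.denseSeq 𝒜 with hudef
  have hu : DenseRange u := TopologicalSpace.denseRange_denseSeq 𝒜
  have hbdd : ∀ x, BddBelow (Set.range (g x)) := by
    intro x
    exact ⟨-C, by rintro r ⟨a, rfl⟩; linarith [(abs_le.mp (hg_bdd x a)).1]⟩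
  have hbddn : ∀ x, BddBelow (Set.range fun n => g x (u n)) := by
    intro x
    exact ⟨-C, by rintro r ⟨n, rfl⟩; linarith [(abs_le.mp (hg_bdd x (u n))).1]⟩
  -- countable reduction of the infimum
  have hinf_eq : ∀ x, (⨅ a, g x a) = ⨅ n, g x (u n) := by
    intro x
    refine le_antisymm (le_ciInf fun n => ciInf_le (hbdd x) (u n)) (le_ciInf fun a => ?_)
    refine le_of_forall_pos_le_add fun ε hε => ?_
    obtain ⟨δ, hδ, hδε⟩ := Metric.continuousAt_iff.mp ((hg_cont x).continuousAt (x := a)) ε hε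
    obtain ⟨n, hn⟩ := hu.exists_dist_lt a hδ
    have : dist (g x (u n)) (g x a) < ε := hδε (by rwa [dist_comm] at hn)
    have hlt : g x (u n) < g x a + ε := by
      have := (abs_lt.mp (by rwa [Real.dist_eq] at this)).2
      linarith
    exact (ciInf_le (hbddn x) n).trans hlt.le
  set f : E → ℝ := fun x => ⨅ n, g x (u n) with hfdef
  have hf_meas : Measurable f := Measurable.iInf fun n => hg_meas (u n)
  have hf_bdd : ∀ x, |f x| ≤ C := by
    intro x
    refine abs_le.mpr ⟨le_ciInf fun n => (abs_le.mp (hg_bdd x (u n))).1,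
      (ciInf_le (hbddn x) 0).trans (abs_le.mp (hg_bdd x (u 0))).2⟩
  have hf_int : Integrable f (P.map X) :=
    ⟨hf_meas.aestronglyMeasurable,
      HasFiniteIntegral.of_bounded (C := C) (ae_of_all _ fun x => by
        simpa [Real.norm_eq_abs] using hf_bdd x)⟩
  -- disintegration identity
  have key : ∀ φ : E → 𝒜, Measurable φ →
      ∫ ω, L (Y ω, φ (X ω)) ∂P = ∫ x, g x (φ x) ∂(P.map X) := by
    intro φ hφ
    have hfm : Measurable fun p : E × ℝ => L (p.2, φ p.1) :=
      hLmeas.comp (measurable_snd.prodMk (hφ.comp measurable_fst))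
    have hfi : Integrable (fun p : E × ℝ => L (p.2, φ p.1)) ρ :=
      ⟨hfm.aestronglyMeasurable,
        HasFiniteIntegral.of_bounded (C := C) (ae_of_all _ fun p => by
          simpa [Real.norm_eq_abs] using hC p.2 (φ p.1))⟩
    have h1 : ∫ ω, L (Y ω, φ (X ω)) ∂P = ∫ p : E × ℝ, L (p.2, φ p.1) ∂ρ :=
      (integral_map hXY.aemeasurable hfm.aestronglyMeasurable).symm
    rw [h1, ← Measure.integral_condKernel hfi, hfst]
    refine integral_congr_ae (ae_of_all _ fun x => ?_)
    simp only [hgdef, hκ_eq]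
  have hgφ_int : ∀ φ : E → 𝒜, Measurable φ → Integrable (fun x => g x (φ x)) (P.map X) := by
    intro φ hφ
    have hfm : Measurable fun p : E × ℝ => L (p.2, φ p.1) :=
      hLmeas.comp (measurable_snd.prodMk (hφ.comp measurable_fst))
    have hm : StronglyMeasurable fun x => g x (φ x) := by
      have := hfm.stronglyMeasurable.integral_kernel_prod_right'
        (κ := condDistrib Y X P)
      exact this
    exact ⟨hm.aestronglyMeasurable,
      HasFiniteIntegral.of_bounded (C := C) (ae_of_all _ fun x => by
        simpa [Real.norm_eq_abs] using hg_bdd x (φ x))⟩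
  have hne : Nonempty {φ : E → 𝒜 // Measurable φ} :=
    ⟨⟨fun _ => Classical.arbitrary 𝒜, measurable_const⟩⟩
  have hIbdd : BddBelow (Set.range fun φ : {φ : E → 𝒜 // Measurable φ} =>
      ∫ ω, L (Y ω, φ.1 (X ω)) ∂P) := by
    refine ⟨-C, ?_⟩
    rintro r ⟨φ, rfl⟩
    dsimp only
    rw [key φ.1 φ.2]
    have : ∫ x, (-C : ℝ) ∂(P.map X) ≤ ∫ x, g x (φ.1 x) ∂(P.map X) :=
      integral_mono (integrable_const _) (hgφ_int φ.1 φ.2)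
        (fun x => (abs_le.mp (hg_bdd x (φ.1 x))).1)
    simpa using this
  have hRHS : ∫ x, (⨅ a, g x a) ∂(P.map X) = ∫ x, f x ∂(P.map X) :=
    integral_congr_ae (ae_of_all _ fun x => hinf_eq x)
  show (⨅ φ : {φ : E → 𝒜 // Measurable φ}, ∫ ω, L (Y ω, φ.1 (X ω)) ∂P)
      = ∫ x, (⨅ a, g x a) ∂(P.map X)
  rw [hRHS]
  refine le_antisymm ?_ ?_
  · -- ≤ : ε-optimal measurable selector
    refine le_of_forall_pos_le_add fun ε hε => ?_
    have hp : ∀ x, ∃ n, g x (u n) < f x + ε :=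
      fun x => exists_lt_of_ciInf_lt (by linarith)
    set φ : E → 𝒜 := fun x => u (Nat.find (hp x)) with hφdef
    have hφ : Measurable φ := by
      refine measurable_from_top.comp (measurable_find hp fun k => ?_)
      exact measurableSet_lt (hg_meas (u k)) (hf_meas.add_const ε)
    have hle : ∫ x, g x (φ x) ∂(P.map X) ≤ ∫ x, (f x + ε) ∂(P.map X) :=
      integral_mono (hgφ_int φ hφ) (hf_int.add (integrable_const ε))
        (fun x => (Nat.find_spec (hp x)).le)
    calc (⨅ ψ : {ψ : E → 𝒜 // Measurable ψ}, ∫ ω, L (Y ω, ψ.1 (X ω)) ∂P)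
        ≤ ∫ ω, L (Y ω, φ (X ω)) ∂P := ciInf_le hIbdd ⟨φ, hφ⟩
      _ = ∫ x, g x (φ x) ∂(P.map X) := key φ hφ
      _ ≤ ∫ x, (f x + ε) ∂(P.map X) := hle
      _ = ∫ x, f x ∂(P.map X) + ε := by
          rw [integral_add hf_int (integrable_const ε)]; simp
  · -- ≥
    refine le_ciInf fun φ => ?_
    rw [key φ.1 φ.2]
    refine integral_mono hf_int (hgφ_int φ.1 φ.2) fun x => ?_
    calc f x = ⨅ a, g x a := (hinf_eq x).symm
      _ ≤ g x (φ.1 x) := ciInf_le (hbdd x) (φ.1 x)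
end

section
/- Data processing inequality for L-conditional entropy: let Y : Ω → ℝ, X : Ω → E₁, Z : Ω → E₂ be random elements of standard Borel spaces such that σ(Y) and σ(Z) are conditionally independent given σ(X) (i.e., Y ↔ X ↔ Z is a Markov chain). Then (i) H_L(Y | (X, Z)) = H_L(Y | X), and (ii) H_L(Y | Z) ≥ H_L(Y | X), where H_L(Y | W) denotes the infimum of E[L(Y, φ(W))] over Borel-measurable estimators φ. -/
open MeasureTheory ProbabilityTheory

/-- The `L`-conditional entropy `H_L(Y | W)`: the infimum over Borel-measurable estimators
`φ : E → 𝒜` of the expected loss `E[L(Y, φ(W))]`. -/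
noncomputable def HL {Ω E 𝒜 : Type*} [MeasurableSpace Ω] [MeasurableSpace E]
    [MeasurableSpace 𝒜] (P : Measure Ω) (L : ℝ × 𝒜 → ℝ) (Y : Ω → ℝ) (W : Ω → E) : ℝ :=
  ⨅ φ : {φ : E → 𝒜 // Measurable φ}, ∫ ω, L (Y ω, φ.1 (W ω)) ∂P

/-- ε-approximate measurable argmin selection. -/
lemma exists_eps_argmin {E 𝒜 : Type*} [MeasurableSpace E]
    [MetricSpace 𝒜] [CompactSpace 𝒜] [Nonempty 𝒜] [MeasurableSpace 𝒜] [BorelSpace 𝒜]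
    (G : E × 𝒜 → ℝ) (hG : Measurable G) (hGc : ∀ x, Continuous fun a => G (x, a))
    (C : ℝ) (hbdd : ∀ p, |G p| ≤ C) {ε : ℝ} (hε : 0 < ε) :
    ∃ ψ : E → 𝒜, Measurable ψ ∧ ∀ x a, G (x, ψ x) ≤ G (x, a) + ε := by
  classical
  obtain ⟨u, hu⟩ := TopologicalSpace.exists_dense_seq 𝒜
  set m : E → ℝ := fun x => ⨅ n, G (x, u n) with hm
  have hGm : ∀ n : ℕ, Measurable fun x => G (x, u n) := fun n =>
    hG.comp (measurable_id.prodMk measurable_const)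
  have hmm : Measurable m := Measurable.iInf hGm
  have hbb : ∀ x, BddBelow (Set.range fun n => G (x, u n)) := fun x =>
    ⟨-C, by rintro r ⟨n, rfl⟩; exact (abs_le.mp (hbdd _)).1⟩
  have hle : ∀ x a, m x ≤ G (x, a) := by
    intro x a
    have hclosed : IsClosed {a : 𝒜 | m x ≤ G (x, a)} :=
      isClosed_le continuous_const (hGc x)
    have hsub : Set.range u ⊆ {a : 𝒜 | m x ≤ G (x, a)} := by
      rintro _ ⟨n, rfl⟩; exact ciInf_le (hbb x) n
    have h2 : closure (Set.range u) ⊆ {a : 𝒜 | m x ≤ G (x, a)} :=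
      hclosed.closure_subset_iff.mpr hsub
    exact h2 (by rw [hu.closure_range]; trivial)
  have hex : ∀ x, ∃ n, G (x, u n) < m x + ε := fun x =>
    exists_lt_of_ciInf_lt (lt_add_of_pos_right _ hε)
  refine ⟨fun x => u (Nat.find (hex x)), ?_, ?_⟩
  · exact Measurable.find (f := fun n _ => u n) (fun n => measurable_const)
      (fun n => measurableSet_lt (hGm n) (hmm.add measurable_const)) hex
  · intro x a
    have h1 : G (x, u (Nat.find (hex x))) < m x + ε := Nat.find_spec (hex x)
    exact h1.le.trans (by linarith [hle x a])

/-- Conditional independence gives the key set-lintegral identity for `condDistrib Y X P`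
over sets of the form `X ⁻¹' A₁ ∩ Z ⁻¹' A₂`. -/
lemma setLIntegral_condDistrib_of_condIndep {Ω E₁ E₂ : Type*}
    [MeasurableSpace Ω] [StandardBorelSpace Ω]
    [MeasurableSpace E₁] [MeasurableSpace E₂]
    (P : Measure Ω) [IsProbabilityMeasure P]
    (Y : Ω → ℝ) (X : Ω → E₁) (Z : Ω → E₂)
    (hY : Measurable Y) (hX : Measurable X) (hZ : Measurable Z)
    (hMarkov : CondIndep (MeasurableSpace.comap X inferInstance)
      (MeasurableSpace.comap Y inferInstance) (MeasurableSpace.comap Z inferInstance)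
      hX.comap_le P)
    {C : Set ℝ} (hC : MeasurableSet C) {A₁ : Set E₁} (hA₁ : MeasurableSet A₁)
    {A₂ : Set E₂} (hA₂ : MeasurableSet A₂) :
    ∫⁻ ω in X ⁻¹' A₁ ∩ Z ⁻¹' A₂, condDistrib Y X P (X ω) C ∂P
      = P (X ⁻¹' A₁ ∩ Z ⁻¹' A₂ ∩ Y ⁻¹' C) := by
  set s₁ := X ⁻¹' A₁ with hs₁def
  set s₂ := Z ⁻¹' A₂ with hs₂def
  have hs₁ : MeasurableSet s₁ := hX hA₁
  have hs₂ : MeasurableSet s₂ := hZ hA₂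
  have hs₁m : MeasurableSet[MeasurableSpace.comap X inferInstance] s₁ := ⟨A₁, hA₁, rfl⟩
  set g : Ω → ℝ := P⟦Y ⁻¹' C | MeasurableSpace.comap X inferInstance⟧ with hgdef
  have hcd : (fun ω => (condDistrib Y X P (X ω) C).toReal) =ᵐ[P] g :=
    condDistrib_ae_eq_condExp hX hY hC
  set ind : Ω → ℝ := s₂.indicator (fun _ => (1 : ℝ)) with hinddef
  have hind_int : Integrable ind P := (integrable_const 1).indicator hs₂
  have hg_int : Integrable g P := integrable_condExp
  have hmul_int : Integrable (g * ind) P := by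
    have h := hg_int.bdd_mul hind_int.1 (c := 1) (Filter.Eventually.of_forall fun x => by
      by_cases h : x ∈ s₂ <;> simp [hinddef, Set.indicator_of_mem, Set.indicator_of_notMem, h])
    exact h.congr (Filter.Eventually.of_forall fun ω => mul_comm _ _)
  have hmul : P[g * ind | MeasurableSpace.comap X inferInstance] =ᵐ[P] g * P[ind | MeasurableSpace.comap X inferInstance] :=
    condExp_mul_of_stronglyMeasurable_left stronglyMeasurable_condExp hmul_int hind_int
  have hCI : (P⟦(Y ⁻¹' C) ∩ s₂ | MeasurableSpace.comap X inferInstance⟧) =ᵐ[P] (P⟦Y ⁻¹' C | MeasurableSpace.comap X inferInstance⟧) * (P⟦s₂ | MeasurableSpace.comap X inferInstance⟧) :=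
    (condIndep_iff _ _ _ hX.comap_le hY.comap_le hZ.comap_le P).mp hMarkov
      (Y ⁻¹' C) s₂ ⟨C, hC, rfl⟩ ⟨A₂, hA₂, rfl⟩
  have key_real : ∫ ω in s₁ ∩ s₂, (condDistrib Y X P (X ω) C).toReal ∂P
      = (P (s₁ ∩ s₂ ∩ Y ⁻¹' C)).toReal := by
    have h1 : ∫ ω in s₁ ∩ s₂, (condDistrib Y X P (X ω) C).toReal ∂P
        = ∫ ω in s₁ ∩ s₂, g ω ∂P := integral_congr_ae (ae_restrict_of_ae hcd)
    have h2 : ∫ ω in s₁ ∩ s₂, g ω ∂P = ∫ ω in s₁, (g * ind) ω ∂P := by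
      have hpt : ∀ ω, (g * ind) ω = s₂.indicator g ω := by
        intro ω
        by_cases h : ω ∈ s₂ <;>
          simp [hinddef, Set.indicator_of_mem, Set.indicator_of_notMem, h]
      rw [show (∫ ω in s₁, (g * ind) ω ∂P) = ∫ ω in s₁, s₂.indicator g ω ∂P from
        integral_congr_ae (Filter.Eventually.of_forall hpt)]
      rw [integral_indicator hs₂, Measure.restrict_restrict hs₂, Set.inter_comm s₂ s₁]
    have h3 : ∫ ω in s₁, (g * ind) ω ∂P = ∫ ω in s₁, (P[g * ind | MeasurableSpace.comap X inferInstance]) ω ∂P :=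
      (setIntegral_condExp hX.comap_le hmul_int hs₁m).symm
    have h4 : ∫ ω in s₁, (P[g * ind | MeasurableSpace.comap X inferInstance]) ω ∂P
        = ∫ ω in s₁, (P⟦(Y ⁻¹' C) ∩ s₂ | MeasurableSpace.comap X inferInstance⟧) ω ∂P := by
      refine integral_congr_ae (ae_restrict_of_ae ?_)
      exact hmul.trans hCI.symm
    have h5 : ∫ ω in s₁, (P⟦(Y ⁻¹' C) ∩ s₂ | MeasurableSpace.comap X inferInstance⟧) ω ∂P
        = ∫ ω in s₁, ((Y ⁻¹' C ∩ s₂).indicator (fun _ => (1:ℝ))) ω ∂P :=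
      setIntegral_condExp hX.comap_le ((integrable_const 1).indicator ((hY hC).inter hs₂)) hs₁m
    have h6 : ∫ ω in s₁, ((Y ⁻¹' C ∩ s₂).indicator (fun _ => (1:ℝ))) ω ∂P
        = (P (s₁ ∩ s₂ ∩ Y ⁻¹' C)).toReal := by
      rw [integral_indicator_const (1:ℝ) ((hY hC).inter hs₂),
        measureReal_restrict_apply ((hY hC).inter hs₂), smul_eq_mul, mul_one, measureReal_def]
      have hseteq : (Y ⁻¹' C ∩ s₂) ∩ s₁ = s₁ ∩ s₂ ∩ Y ⁻¹' C := by
        ext ω; constructor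
        · rintro ⟨⟨h1, h2⟩, h3⟩; exact ⟨⟨h3, h2⟩, h1⟩
        · rintro ⟨⟨h1, h2⟩, h3⟩; exact ⟨⟨h3, h2⟩, h1⟩
      rw [hseteq]
    rw [h1, h2, h3, h4, h5, h6]
  have haem : AEMeasurable (fun ω => condDistrib Y X P (X ω) C) (P.restrict (s₁ ∩ s₂)) :=
    ((Kernel.measurable_coe _ hC).comp hX).aemeasurable
  have hlt : ∀ᵐ ω ∂(P.restrict (s₁ ∩ s₂)), condDistrib Y X P (X ω) C < ⊤ :=
    Filter.Eventually.of_forall fun ω => measure_lt_top _ _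
  have h2 := integral_toReal haem hlt
  have hfin : ∫⁻ ω in s₁ ∩ s₂, condDistrib Y X P (X ω) C ∂P ≠ ⊤ := by
    refine ne_of_lt (lt_of_le_of_lt (lintegral_mono fun ω => prob_le_one) ?_)
    rw [lintegral_one, Measure.restrict_apply_univ]
    exact measure_lt_top _ _
  exact (ENNReal.toReal_eq_toReal_iff' hfin (measure_ne_top _ _)).mp (h2.symm.trans key_real)

/-- Under the Markov chain condition, the joint law of `((X, Z), Y)` disintegrates with the
kernel `condDistrib Y X P` composed with the first projection. -/
lemma map_prod_eq_compProd {Ω E₁ E₂ : Type*}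
    [MeasurableSpace Ω] [StandardBorelSpace Ω]
    [MeasurableSpace E₁] [MeasurableSpace E₂]
    (P : Measure Ω) [IsProbabilityMeasure P]
    (Y : Ω → ℝ) (X : Ω → E₁) (Z : Ω → E₂)
    (hY : Measurable Y) (hX : Measurable X) (hZ : Measurable Z)
    (hMarkov : CondIndep (MeasurableSpace.comap X inferInstance)
      (MeasurableSpace.comap Y inferInstance) (MeasurableSpace.comap Z inferInstance)
      hX.comap_le P) :
    P.map (fun ω => ((X ω, Z ω), Y ω))
      = (P.map fun ω => (X ω, Z ω)) ⊗ₘ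
        ((condDistrib Y X P).comap (Prod.fst : E₁ × E₂ → E₁) measurable_fst) := by
  have hpair : Measurable fun ω => (X ω, Z ω) := hX.prodMk hZ
  have hpair2 : Measurable fun ω => ((X ω, Z ω), Y ω) := hpair.prodMk hY
  set η := (condDistrib Y X P).comap (Prod.fst : E₁ × E₂ → E₁) measurable_fst with hηdef
  set ν₁ := P.map (fun ω => ((X ω, Z ω), Y ω)) with hν₁
  set ν₂ := (P.map fun ω => (X ω, Z ω)) ⊗ₘ η with hν₂
  haveI : IsProbabilityMeasure (P.map fun ω => (X ω, Z ω)) :=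
    Measure.isProbabilityMeasure_map hpair.aemeasurable
  haveI : IsProbabilityMeasure ν₁ := Measure.isProbabilityMeasure_map hpair2.aemeasurable
  haveI : IsProbabilityMeasure ν₂ := by rw [hν₂]; infer_instance
  have base : ∀ (A₁ : Set E₁) (A₂ : Set E₂) (C : Set ℝ), MeasurableSet A₁ →
      MeasurableSet A₂ → MeasurableSet C →
      ν₁ ((A₁ ×ˢ A₂) ×ˢ C) = ν₂ ((A₁ ×ˢ A₂) ×ˢ C) := by
    intro A₁ A₂ C hA₁ hA₂ hC
    have hSm : MeasurableSet (A₁ ×ˢ A₂) := hA₁.prod hA₂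
    rw [hν₁, Measure.map_apply hpair2 (hSm.prod hC), hν₂, Measure.compProd_apply (hSm.prod hC)]
    have hptwise : ∀ p : E₁ × E₂, η p (Prod.mk p ⁻¹' ((A₁ ×ˢ A₂) ×ˢ C))
        = (A₁ ×ˢ A₂).indicator (fun p => condDistrib Y X P p.1 C) p := by
      intro p
      by_cases hp : p ∈ A₁ ×ˢ A₂
      · rw [Set.indicator_of_mem hp, hηdef, Kernel.comap_apply]
        congr 1
        ext y; simp [hp]
      · rw [Set.indicator_of_notMem hp]
        have hemp : Prod.mk p ⁻¹' ((A₁ ×ˢ A₂) ×ˢ C) = ∅ := by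
          ext y; simp [hp]
        rw [hemp, measure_empty]
    have hfm : Measurable fun p : E₁ × E₂ => condDistrib Y X P p.1 C :=
      (Kernel.measurable_coe _ hC).comp measurable_fst
    rw [lintegral_congr hptwise, lintegral_indicator hSm, setLIntegral_map hSm hfm hpair]
    have hpre : (fun ω => (X ω, Z ω)) ⁻¹' (A₁ ×ˢ A₂) = X ⁻¹' A₁ ∩ Z ⁻¹' A₂ := rfl
    rw [hpre, setLIntegral_condDistrib_of_condIndep P Y X Z hY hX hZ hMarkov hC hA₁ hA₂]
    congr 1
  have hres : ∀ (ν : Measure ((E₁ × E₂) × ℝ)) (C : Set ℝ) (_ : MeasurableSet C)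
      (A : Set (E₁ × E₂)) (_ : MeasurableSet A),
      (Measure.map Prod.fst (ν.restrict ((Set.univ : Set (E₁ × E₂)) ×ˢ C))) A = ν (A ×ˢ C) := by
    intro ν C hC A hA
    rw [Measure.map_apply measurable_fst hA, Measure.restrict_apply (measurable_fst hA)]
    congr 1
    ext p
    simp [Set.mem_prod]
  have main : ∀ (C : Set ℝ), MeasurableSet C → ∀ (A : Set (E₁ × E₂)), MeasurableSet A →
      ν₁ (A ×ˢ C) = ν₂ (A ×ˢ C) := by
    intro C hC A hA
    haveI h1 : IsFiniteMeasure (Measure.map Prod.fst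
        (ν₁.restrict ((Set.univ : Set (E₁ × E₂)) ×ˢ C))) :=
      Measure.isFiniteMeasure_map _ _
    have hext : Measure.map Prod.fst (ν₁.restrict ((Set.univ : Set (E₁ × E₂)) ×ˢ C))
        = Measure.map Prod.fst (ν₂.restrict ((Set.univ : Set (E₁ × E₂)) ×ˢ C)) := by
      refine MeasureTheory.ext_of_generate_finite _ generateFrom_prod.symm isPiSystem_prod ?_ ?_
      · rintro s ⟨A₁, hA₁, A₂, hA₂, rfl⟩
        rw [hres ν₁ C hC _ (hA₁.prod hA₂), hres ν₂ C hC _ (hA₁.prod hA₂),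
          base A₁ A₂ C hA₁ hA₂ hC]
      · rw [hres ν₁ C hC _ MeasurableSet.univ, hres ν₂ C hC _ MeasurableSet.univ,
          ← Set.univ_prod_univ, base _ _ _ MeasurableSet.univ MeasurableSet.univ hC]
    rw [← hres ν₁ C hC A hA, hext, hres ν₂ C hC A hA]
  refine MeasureTheory.ext_of_generate_finite _ generateFrom_prod.symm isPiSystem_prod ?_ ?_
  · rintro s ⟨A, hA, C, hC, rfl⟩
    exact main C hC A hA
  · simp [measure_univ]

lemma integral_loss_lower_bound {Ω : Type*} [MeasurableSpace Ω] (P : Measure Ω)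
    [IsProbabilityMeasure P] (f : Ω → ℝ) (C : ℝ) (hC0 : 0 ≤ C) (h : ∀ ω, |f ω| ≤ C) :
    -C ≤ ∫ ω, f ω ∂P := by
  by_cases hf : Integrable f P
  · have h2 := integral_mono (integrable_const (-C)) hf (fun ω => (abs_le.mp (h ω)).1)
    simpa using h2
  · rw [integral_undef hf]; linarith


/-- Data processing inequality for the `L`-conditional entropy: if
`σ(Y)` and `σ(Z)` are conditionally independent given `σ(X)` (i.e. `Y ↔ X ↔ Z` is a
Markov chain), then (i) `H_L(Y | (X, Z)) = H_L(Y | X)` and (ii) `H_L(Y | Z) ≥ H_L(Y | X)`. -/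
theorem HL_data_processing
    {Ω E₁ E₂ 𝒜 : Type*} [MeasurableSpace Ω] [StandardBorelSpace Ω]
    [MeasurableSpace E₁] [StandardBorelSpace E₁]
    [MeasurableSpace E₂] [StandardBorelSpace E₂]
    [MetricSpace 𝒜] [CompactSpace 𝒜] [Nonempty 𝒜] [MeasurableSpace 𝒜] [BorelSpace 𝒜]
    (P : Measure Ω) [IsProbabilityMeasure P]
    (Y : Ω → ℝ) (X : Ω → E₁) (Z : Ω → E₂)
    (hY : Measurable Y) (hX : Measurable X) (hZ : Measurable Z)
    (L : ℝ × 𝒜 → ℝ) (hLmeas : Measurable L)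
    (hLbdd : ∃ C : ℝ, ∀ y a, |L (y, a)| ≤ C)
    (hLcont : ∀ y : ℝ, Continuous fun a => L (y, a))
    (hMarkov : CondIndep (MeasurableSpace.comap X inferInstance)
      (MeasurableSpace.comap Y inferInstance) (MeasurableSpace.comap Z inferInstance)
      hX.comap_le P) :
    HL P L Y (fun ω => (X ω, Z ω)) = HL P L Y X ∧ HL P L Y Z ≥ HL P L Y X := by
  classical
  obtain ⟨C, hC⟩ := hLbdd
  have hC0 : 0 ≤ C := le_trans (abs_nonneg _) (hC 0 (Classical.arbitrary 𝒜))
  have hpair : Measurable fun ω => (X ω, Z ω) := hX.prodMk hZ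
  have hpair2 : Measurable fun ω => ((X ω, Z ω), Y ω) := hpair.prodMk hY
  haveI : IsProbabilityMeasure (P.map fun ω => (X ω, Z ω)) :=
    Measure.isProbabilityMeasure_map hpair.aemeasurable
  set G : E₁ × 𝒜 → ℝ := fun p => ∫ y, L (y, p.2) ∂(condDistrib Y X P p.1) with hGdef
  -- joint measurability of G
  have hGsm : StronglyMeasurable G := by
    have hunc : StronglyMeasurable (Function.uncurry fun (p : E₁ × 𝒜) (y : ℝ) => L (y, p.2)) :=
      (hLmeas.comp (measurable_snd.prodMk measurable_fst.snd)).stronglyMeasurable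
    have h := hunc.integral_kernel_prod_right
      (κ := (condDistrib Y X P).comap (Prod.fst : E₁ × 𝒜 → E₁) measurable_fst)
    simp only [Kernel.comap_apply] at h
    exact h
  have hGmeas : Measurable G := hGsm.measurable
  have hGcont : ∀ x, Continuous fun a => G (x, a) := by
    intro x
    rw [hGdef]; dsimp only
    refine continuous_of_dominated (F := fun (a : 𝒜) (y : ℝ) => L (y, a))
      (bound := fun _ => C) ?_ ?_ ?_ ?_
    · exact fun a => (hLmeas.comp (measurable_id.prodMk measurable_const)).aestronglyMeasurable
    · exact fun a => Filter.Eventually.of_forall fun y => by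
        rw [Real.norm_eq_abs]; exact hC y a
    · exact integrable_const C
    · exact Filter.Eventually.of_forall fun y => hLcont y
  have hGbdd : ∀ p, |G p| ≤ C := by
    intro p
    have h1 : ‖∫ y, L (y, p.2) ∂(condDistrib Y X P p.1)‖
        ≤ C * ((condDistrib Y X P p.1) Set.univ).toReal :=
      norm_integral_le_of_norm_le_const
        (Filter.Eventually.of_forall fun y => by rw [Real.norm_eq_abs]; exact hC y p.2)
    rw [← Real.norm_eq_abs]
    simpa [measure_univ] using h1
  have hkey := map_prod_eq_compProd P Y X Z hY hX hZ hMarkov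
  -- transfer of integrals
  have hInt : ∀ (φ : E₁ × E₂ → 𝒜), Measurable φ →
      ∫ ω, L (Y ω, φ (X ω, Z ω)) ∂P
        = ∫ p, G (p.1, φ p) ∂(P.map fun ω => (X ω, Z ω)) := by
    intro φ hφ
    have hfmq : Measurable fun q : (E₁ × E₂) × ℝ => L (q.2, φ q.1) :=
      hLmeas.comp (measurable_snd.prodMk (hφ.comp measurable_fst))
    have h1 : ∫ ω, L (Y ω, φ (X ω, Z ω)) ∂P
        = ∫ q, L (q.2, φ q.1) ∂(P.map fun ω => ((X ω, Z ω), Y ω)) :=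
      (integral_map hpair2.aemeasurable hfmq.aestronglyMeasurable).symm
    have hint2 : Integrable (fun q : (E₁ × E₂) × ℝ => L (q.2, φ q.1))
        ((P.map fun ω => (X ω, Z ω)) ⊗ₘ
          ((condDistrib Y X P).comap (Prod.fst : E₁ × E₂ → E₁) measurable_fst)) := by
      refine Integrable.mono' (integrable_const C) hfmq.aestronglyMeasurable ?_
      exact Filter.Eventually.of_forall fun q => by rw [Real.norm_eq_abs]; exact hC _ _
    rw [h1, hkey, Measure.integral_compProd hint2]
    refine integral_congr_ae (Filter.Eventually.of_forall fun p => ?_)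
    simp only [Kernel.comap_apply]
    rfl
  -- nonemptiness and boundedness of the infima
  haveI hne₁ : Nonempty {φ : E₁ → 𝒜 // Measurable φ} :=
    ⟨⟨fun _ => Classical.arbitrary 𝒜, measurable_const⟩⟩
  haveI hne₂ : Nonempty {φ : E₂ → 𝒜 // Measurable φ} :=
    ⟨⟨fun _ => Classical.arbitrary 𝒜, measurable_const⟩⟩
  haveI hne₁₂ : Nonempty {φ : E₁ × E₂ → 𝒜 // Measurable φ} :=
    ⟨⟨fun _ => Classical.arbitrary 𝒜, measurable_const⟩⟩
  have hbddXZ : BddBelow (Set.range fun φ : {φ : E₁ × E₂ → 𝒜 // Measurable φ} =>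
      ∫ ω, L (Y ω, φ.1 (X ω, Z ω)) ∂P) := by
    refine ⟨-C, ?_⟩; rintro r ⟨φ, rfl⟩
    exact integral_loss_lower_bound P _ C hC0 (fun ω => hC _ _)
  have hbddX : BddBelow (Set.range fun φ : {φ : E₁ → 𝒜 // Measurable φ} =>
      ∫ ω, L (Y ω, φ.1 (X ω)) ∂P) := by
    refine ⟨-C, ?_⟩; rintro r ⟨φ, rfl⟩
    exact integral_loss_lower_bound P _ C hC0 (fun ω => hC _ _)
  -- ε-optimality
  have hHL_le : ∀ {ε : ℝ}, 0 < ε → ∀ (φ : E₁ × E₂ → 𝒜), Measurable φ →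
      HL P L Y X - ε ≤ ∫ ω, L (Y ω, φ (X ω, Z ω)) ∂P := by
    intro ε hε φ hφ
    obtain ⟨ψ, hψm, hψ⟩ := exists_eps_argmin G hGmeas hGcont C hGbdd hε
    have h1 : HL P L Y X ≤ ∫ ω, L (Y ω, ψ (X ω)) ∂P := ciInf_le hbddX ⟨ψ, hψm⟩
    have h2 : ∫ ω, L (Y ω, ψ (X ω)) ∂P
        = ∫ p, G (p.1, ψ p.1) ∂(P.map fun ω => (X ω, Z ω)) :=
      hInt (fun p => ψ p.1) (hψm.comp measurable_fst)
    have hint3 : Integrable (fun p : E₁ × E₂ => G (p.1, ψ p.1))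
        (P.map fun ω => (X ω, Z ω)) := by
      refine Integrable.mono' (integrable_const C)
        (hGmeas.comp (measurable_fst.prodMk (hψm.comp measurable_fst))).aestronglyMeasurable ?_
      exact Filter.Eventually.of_forall fun p => by rw [Real.norm_eq_abs]; exact hGbdd _
    have hint4 : Integrable (fun p : E₁ × E₂ => G (p.1, φ p))
        (P.map fun ω => (X ω, Z ω)) := by
      refine Integrable.mono' (integrable_const C)
        (hGmeas.comp (measurable_fst.prodMk hφ)).aestronglyMeasurable ?_
      exact Filter.Eventually.of_forall fun p => by rw [Real.norm_eq_abs]; exact hGbdd _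
    have h3 : ∫ p, G (p.1, ψ p.1) ∂(P.map fun ω => (X ω, Z ω))
        ≤ ∫ p, (G (p.1, φ p) + ε) ∂(P.map fun ω => (X ω, Z ω)) := by
      refine integral_mono hint3 (hint4.add (integrable_const ε)) ?_
      exact fun p => hψ p.1 (φ p)
    have h4 : ∫ p, (G (p.1, φ p) + ε) ∂(P.map fun ω => (X ω, Z ω))
        = ∫ p, G (p.1, φ p) ∂(P.map fun ω => (X ω, Z ω)) + ε := by
      rw [integral_add hint4 (integrable_const ε), integral_const]
      simp [measure_univ]
    have h5 := (hInt φ hφ).symm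
    linarith
  -- (i) easy direction
  have ineq1 : HL P L Y (fun ω => (X ω, Z ω)) ≤ HL P L Y X := by
    refine le_ciInf fun φ => ?_
    exact ciInf_le_of_le hbddXZ ⟨fun p => φ.1 p.1, φ.2.comp measurable_fst⟩ le_rfl
  have ineq2 : HL P L Y X ≤ HL P L Y (fun ω => (X ω, Z ω)) := by
    refine le_of_forall_pos_le_add fun ε hε => ?_
    rw [← sub_le_iff_le_add]
    exact le_ciInf fun φ => hHL_le hε φ.1 φ.2
  have ineq3 : HL P L Y X ≤ HL P L Y Z := by
    refine le_of_forall_pos_le_add fun ε hε => ?_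
    rw [← sub_le_iff_le_add]
    exact le_ciInf fun φ => hHL_le hε (fun p => φ.1 p.2) (φ.2.comp measurable_snd)
  exact ⟨le_antisymm ineq1 ineq2, ineq3⟩
end

section
/- Exact-Markov case of the information-aging lemma: let (X_s)_{s ∈ ℤ} be a family of real random variables, Y : Ω → ℝ a random variable, l ≥ 1, and X^l_s := (X_s, X_{s−1}, …, X_{s−l+1}) ∈ ℝ^l. Suppose that for every μ, ν ≥ 0 the σ-algebras σ(Y) and σ(X^l_{t−μ−ν}) are conditionally independent given σ(X^l_{t−μ}). Then for every δ ≥ 0: H_L(Y | X^l_{t−δ}) = H_L(Y | X^l_t) + Σ_{k=0}^{δ−1} I_L(Y; X^l_{t−k} | X^l_{t−k−1}), where I_L(Y; U | V) := H_L(Y | V) − H_L(Y | (U, V)) ≥ 0; in particular, the map δ ↦ H_L(Y | X^l_{t−δ}) is non-decreasing on ℕ. -/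
open MeasureTheory ProbabilityTheory

set_option linter.unusedSectionVars false
set_option maxHeartbeats 1000000

section Aux

open MeasurableSpace TopologicalSpace Filter

variable {Ω : Type*} [MeasurableSpace Ω] [StandardBorelSpace Ω]
  {𝒜 : Type*} [MetricSpace 𝒜] [CompactSpace 𝒜] [Nonempty 𝒜] [MeasurableSpace 𝒜] [BorelSpace 𝒜]
  {E F : Type*} [MeasurableSpace E] [MeasurableSpace F]
  {P : Measure Ω} [IsProbabilityMeasure P]
  {Y : Ω → ℝ} {L : ℝ × 𝒜 → ℝ} {C : ℝ}

instance nonempty_measurable_est : Nonempty {φ : E → 𝒜 // Measurable φ} :=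
  ⟨⟨fun _ => Classical.arbitrary 𝒜, measurable_const⟩⟩

lemma integrable_loss (hY : Measurable Y) (hL : Measurable L) (hC : ∀ y a, |L (y, a)| ≤ C)
    {Z : Ω → 𝒜} (hZ : Measurable Z) : Integrable (fun ω => L (Y ω, Z ω)) P := by
  refine (integrable_const C).mono' ((hL.comp (hY.prodMk hZ)).aestronglyMeasurable) ?_
  filter_upwards with ω
  simpa [Real.norm_eq_abs] using hC (Y ω) (Z ω)

lemma neg_C_le_integral_loss (hY : Measurable Y) (hL : Measurable L)
    (hC : ∀ y a, |L (y, a)| ≤ C) {Z : Ω → 𝒜} (hZ : Measurable Z) :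
    -C ≤ ∫ ω, L (Y ω, Z ω) ∂P := by
  have h := integral_mono (μ := P) (integrable_const (-C)) (integrable_loss hY hL hC hZ)
    (fun ω => (abs_le.1 (hC (Y ω) (Z ω))).1)
  simpa using h

lemma bddBelow_loss (hY : Measurable Y) (hL : Measurable L) (hC : ∀ y a, |L (y, a)| ≤ C)
    {W : Ω → E} (hW : Measurable W) :
    BddBelow (Set.range fun φ : {φ : E → 𝒜 // Measurable φ} => ∫ ω, L (Y ω, φ.1 (W ω)) ∂P) := by
  refine ⟨-C, ?_⟩
  rintro x ⟨φ, rfl⟩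
  exact neg_C_le_integral_loss hY hL hC (φ.2.comp hW)

lemma HL_le_of_comp (hY : Measurable Y) (hL : Measurable L) (hC : ∀ y a, |L (y, a)| ≤ C)
    {W : Ω → E} {W' : Ω → F} (hW' : Measurable W')
    {g : F → E} (hg : Measurable g) (h : ∀ ω, W ω = g (W' ω)) :
    HL P L Y W' ≤ HL P L Y W := by
  rw [HL, HL]
  refine le_ciInf fun φ => ?_
  refine (ciInf_le (bddBelow_loss hY hL hC hW') ⟨fun v => φ.1 (g v), φ.2.comp hg⟩).trans_eq ?_
  refine integral_congr_ae (Filter.Eventually.of_forall fun ω => ?_)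
  show L (Y ω, φ.1 (g (W' ω))) = L (Y ω, φ.1 (W ω))
  rw [h ω]

lemma integral_loss_eq {G : Type*} [MeasurableSpace G] (hY : Measurable Y) (hL : Measurable L)
    (hC : ∀ y a, |L (y, a)| ≤ C) {W : Ω → G} (hW : Measurable W) {Z : G → 𝒜} (hZ : Measurable Z) :
    ∫ ω, L (Y ω, Z (W ω)) ∂P
      = ∫ ω, ∫ y, L (y, Z (W ω)) ∂(condDistrib Y W P (W ω)) ∂P := by
  have hf : StronglyMeasurable fun p : G × ℝ => L (p.2, Z p.1) :=
    (hL.comp (measurable_snd.prodMk (hZ.comp measurable_fst))).stronglyMeasurable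
  have hint : Integrable (fun ω => L (Y ω, Z (W ω))) P := integrable_loss hY hL hC (hZ.comp hW)
  have h := condExp_prod_ae_eq_integral_condDistrib (μ := P)
    (f := fun p : G × ℝ => L (p.2, Z p.1)) hW hY.aemeasurable hf hint
  calc ∫ ω, L (Y ω, Z (W ω)) ∂P
      = ∫ ω, (P[fun ω => L (Y ω, Z (W ω))|MeasurableSpace.comap W inferInstance]) ω ∂P :=
        (integral_condExp hW.comap_le).symm
    _ = ∫ ω, ∫ y, L (y, Z (W ω)) ∂(condDistrib Y W P (W ω)) ∂P := integral_congr_ae h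

lemma condexp_comap_pair_ae_eq (hY : Measurable Y) {U : Ω → E} {V : Ω → F}
    (hU : Measurable U) (hV : Measurable V)
    (hCI : CondIndep (MeasurableSpace.comap U inferInstance)
      (MeasurableSpace.comap Y inferInstance) (MeasurableSpace.comap V inferInstance)
      hU.comap_le P)
    {B : Set ℝ} (hB : MeasurableSet B) :
    P⟦Y ⁻¹' B | MeasurableSpace.comap (fun ω => (U ω, V ω)) inferInstance⟧
      =ᵐ[P] P⟦Y ⁻¹' B | MeasurableSpace.comap U inferInstance⟧ := by
  have hW : Measurable fun ω => (U ω, V ω) := hU.prodMk hV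
  have hm' := hU.comap_le
  have hmW := hW.comap_le
  have hm'W : MeasurableSpace.comap U inferInstance
      ≤ MeasurableSpace.comap (fun ω => (U ω, V ω)) inferInstance := by
    have h1 : U = Prod.fst ∘ fun ω => (U ω, V ω) := rfl
    conv_lhs => rw [h1, ← MeasurableSpace.comap_comp]
    exact MeasurableSpace.comap_mono measurable_fst.comap_le
  have hf_int : Integrable (Set.indicator (Y ⁻¹' B) (fun _ => (1 : ℝ))) P :=
    (integrable_const 1).indicator (hY hB)
  have hg_int : Integrable
      (P[Set.indicator (Y ⁻¹' B) (fun _ => (1 : ℝ))|MeasurableSpace.comap U inferInstance]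
        : Ω → ℝ) P := integrable_condExp
  -- the set-integral equality on all measurable sets of the pair σ-algebra
  have key : ∀ s : Set Ω,
      MeasurableSet[MeasurableSpace.comap (fun ω => (U ω, V ω)) inferInstance] s →
      ∫ x in s,
        (P[Set.indicator (Y ⁻¹' B) (fun _ => (1 : ℝ))|MeasurableSpace.comap U inferInstance]) x ∂P
        = ∫ x in s, Set.indicator (Y ⁻¹' B) (fun _ => (1 : ℝ)) x ∂P := by
    have hgen : MeasurableSpace.comap (fun ω => (U ω, V ω)) inferInstance
        = MeasurableSpace.generateFrom
        ((fun p => (fun ω => (U ω, V ω)) ⁻¹' p) ''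
          Set.image2 (· ×ˢ ·) {s : Set E | MeasurableSet s} {t : Set F | MeasurableSet t}) := by
      conv_lhs => rw [show (inferInstance : MeasurableSpace (E × F)) = Prod.instMeasurableSpace
        from rfl, ← generateFrom_prod]
      rw [MeasurableSpace.comap_generateFrom]
    have hpi : IsPiSystem ((fun p => (fun ω => (U ω, V ω)) ⁻¹' p) ''
        Set.image2 (· ×ˢ ·) {s : Set E | MeasurableSet s} {t : Set F | MeasurableSet t}) := by
      rintro _ ⟨p₁, hp₁, rfl⟩ _ ⟨p₂, hp₂, rfl⟩ hne
      rw [← Set.preimage_inter] at hne ⊢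
      refine ⟨p₁ ∩ p₂, isPiSystem_prod p₁ hp₁ p₂ hp₂ ?_, rfl⟩
      obtain ⟨x, hx⟩ := hne
      exact ⟨(U x, V x), hx⟩
    intro s hs
    refine MeasurableSpace.induction_on_inter
        (m := MeasurableSpace.comap (fun ω => (U ω, V ω)) inferInstance)
        (C := fun s _ => ∫ x in s,
          (P[Set.indicator (Y ⁻¹' B) (fun _ => (1 : ℝ))|MeasurableSpace.comap U inferInstance]) x ∂P
          = ∫ x in s, Set.indicator (Y ⁻¹' B) (fun _ => (1 : ℝ)) x ∂P)
        hgen hpi (by simp) ?_ ?_ ?_ s hs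
    · -- basic
      rintro _ ⟨_, ⟨A, hA, B₂, hB₂, rfl⟩, rfl⟩
      have hpre : (fun ω => (U ω, V ω)) ⁻¹' (A ×ˢ B₂) = U ⁻¹' A ∩ V ⁻¹' B₂ :=
        Set.mk_preimage_prod U V
      beta_reduce
      rw [hpre]
      have hs₂ : MeasurableSet (V ⁻¹' B₂) := hV hB₂
      have hs₁m' : MeasurableSet[MeasurableSpace.comap U inferInstance] (U ⁻¹' A) := ⟨A, hA, rfl⟩
      have hs₁ : MeasurableSet (U ⁻¹' A) := hU hA
      have hind₂ : Measurable ((V ⁻¹' B₂).indicator (fun _ => (1 : ℝ))) :=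
        measurable_const.indicator hs₂
      have hind₂_int : Integrable ((V ⁻¹' B₂).indicator (fun _ => (1 : ℝ))) P :=
        (integrable_const 1).indicator hs₂
      have hind₂_le : ∀ x, |(V ⁻¹' B₂).indicator (fun _ => (1 : ℝ)) x| ≤ 1 := by
        intro x
        by_cases hx : x ∈ V ⁻¹' B₂ <;> simp [Set.indicator_apply, hx]
      have hsplit : ∀ h : Ω → ℝ, ∫ x in U ⁻¹' A ∩ V ⁻¹' B₂, h x ∂P
          = ∫ x in U ⁻¹' A, (h x * (V ⁻¹' B₂).indicator (fun _ => (1 : ℝ)) x) ∂P := by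
        intro h
        rw [← setIntegral_indicator hs₂]
        congr 1
        funext x
        by_cases hx : x ∈ V ⁻¹' B₂ <;> simp [Set.indicator_apply, hx]
      have hprod := (condIndep_iff (MeasurableSpace.comap U inferInstance)
        (MeasurableSpace.comap Y inferInstance)
        (MeasurableSpace.comap V inferInstance) hU.comap_le hY.comap_le hV.comap_le P).mp hCI
        (Y ⁻¹' B) (V ⁻¹' B₂) ⟨B, hB, rfl⟩ ⟨B₂, hB₂, rfl⟩
      have hmul_int : Integrable
          ((P[Set.indicator (Y ⁻¹' B) (fun _ => (1 : ℝ))|MeasurableSpace.comap U inferInstance]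
            : Ω → ℝ) * (V ⁻¹' B₂).indicator (fun _ => (1 : ℝ))) P := by
        refine hg_int.abs.mono' (((stronglyMeasurable_condExp.mono hm').aestronglyMeasurable).mul
          hind₂.aestronglyMeasurable) ?_
        filter_upwards with x
        rw [Pi.mul_apply, Real.norm_eq_abs, abs_mul]
        calc _ ≤ _ * 1 := mul_le_mul_of_nonneg_left (hind₂_le x) (abs_nonneg _)
        _ = _ := mul_one _
      have hmul := condExp_mul_of_stronglyMeasurable_left (m := MeasurableSpace.comap U inferInstance)
        (μ := P) stronglyMeasurable_condExp hmul_int hind₂_int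
      have hf_ind : (fun x => Set.indicator (Y ⁻¹' B) (fun _ => (1:ℝ)) x
            * (V ⁻¹' B₂).indicator (fun _ => (1 : ℝ)) x)
          = Set.indicator (Y ⁻¹' B ∩ V ⁻¹' B₂) (fun _ => (1:ℝ)) := by
        funext x
        by_cases hx1 : x ∈ Y ⁻¹' B <;> by_cases hx2 : x ∈ V ⁻¹' B₂ <;>
          simp [Set.indicator_apply, hx1, hx2]
      calc ∫ x in U ⁻¹' A ∩ V ⁻¹' B₂,
          (P[Set.indicator (Y ⁻¹' B) (fun _ => (1:ℝ))|MeasurableSpace.comap U inferInstance]) x ∂P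
          = ∫ x in U ⁻¹' A,
            ((P[Set.indicator (Y ⁻¹' B) (fun _ => (1:ℝ))|MeasurableSpace.comap U inferInstance]) x
              * (V ⁻¹' B₂).indicator (fun _ => (1 : ℝ)) x) ∂P := hsplit _
        _ = ∫ x in U ⁻¹' A,
            (MeasureTheory.condExp (MeasurableSpace.comap U inferInstance) P
              ((P[Set.indicator (Y ⁻¹' B) (fun _ => (1:ℝ))|MeasurableSpace.comap U inferInstance]
              : Ω → ℝ) * (V ⁻¹' B₂).indicator (fun _ => (1 : ℝ)))) x ∂P :=
            (setIntegral_condExp hm' hmul_int hs₁m').symm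
        _ = ∫ x in U ⁻¹' A,
            ((P[Set.indicator (Y ⁻¹' B) (fun _ => (1:ℝ))|MeasurableSpace.comap U inferInstance]
              : Ω → ℝ) * (MeasureTheory.condExp (MeasurableSpace.comap U inferInstance) P
                ((V ⁻¹' B₂).indicator (fun _ => (1 : ℝ))) : Ω → ℝ)) x ∂P :=
            setIntegral_congr_ae hs₁ (hmul.mono fun x hx _ => hx)
        _ = ∫ x in U ⁻¹' A,
            (MeasureTheory.condExp (MeasurableSpace.comap U inferInstance) P
              (Set.indicator (Y ⁻¹' B ∩ V ⁻¹' B₂) (fun _ => (1:ℝ)))) x ∂P :=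
            (setIntegral_congr_ae hs₁ (hprod.mono fun x hx _ => hx)).symm
        _ = ∫ x in U ⁻¹' A, Set.indicator (Y ⁻¹' B ∩ V ⁻¹' B₂) (fun _ => (1:ℝ)) x ∂P :=
            setIntegral_condExp hm' ((integrable_const 1).indicator ((hY hB).inter hs₂)) hs₁m'
        _ = ∫ x in U ⁻¹' A, (Set.indicator (Y ⁻¹' B) (fun _ => (1:ℝ)) x
              * (V ⁻¹' B₂).indicator (fun _ => (1 : ℝ)) x) ∂P := by rw [hf_ind]
        _ = ∫ x in U ⁻¹' A ∩ V ⁻¹' B₂, Set.indicator (Y ⁻¹' B) (fun _ => (1:ℝ)) x ∂P :=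
            (hsplit _).symm
    · -- compl
      intro s hsm ih
      have hs : MeasurableSet s := hmW s hsm
      have h1 := integral_add_compl hs hg_int
      have h2 := integral_add_compl hs hf_int
      have h3 : ∫ x,
          (P[Set.indicator (Y ⁻¹' B) (fun _ => (1:ℝ))|MeasurableSpace.comap U inferInstance]) x ∂P
          = ∫ x, Set.indicator (Y ⁻¹' B) (fun _ => (1:ℝ)) x ∂P := integral_condExp hm'
      linarith
    · -- iUnion
      intro s hd hsm ih
      rw [integral_iUnion (fun i => hmW _ (hsm i)) hd hg_int.integrableOn,
        integral_iUnion (fun i => hmW _ (hsm i)) hd hf_int.integrableOn]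
      exact tsum_congr ih
  exact (ae_eq_condExp_of_forall_setIntegral_eq hmW hf_int
    (fun s _ _ => integrable_condExp.integrableOn) (fun s hs _ => key s hs)
    ((stronglyMeasurable_condExp.mono hm'W).aestronglyMeasurable)).symm

lemma condDistrib_pair_ae_eq (hY : Measurable Y) {U : Ω → E} {V : Ω → F}
    (hU : Measurable U) (hV : Measurable V)
    (hCI : CondIndep (MeasurableSpace.comap U inferInstance)
      (MeasurableSpace.comap Y inferInstance) (MeasurableSpace.comap V inferInstance)
      hU.comap_le P) :
    ∀ᵐ ω ∂P, condDistrib Y (fun ω => (U ω, V ω)) P (U ω, V ω) = condDistrib Y U P (U ω) := by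
  have hW : Measurable fun ω => (U ω, V ω) := hU.prodMk hV
  have h1 : ∀ q : ℚ, ∀ᵐ ω ∂P,
      (condDistrib Y (fun ω => (U ω, V ω)) P (U ω, V ω) (Set.Iic (q : ℝ))).toReal
        = (condDistrib Y U P (U ω) (Set.Iic (q : ℝ))).toReal := by
    intro q
    have hA := condDistrib_ae_eq_condExp (μ := P) hW hY (measurableSet_Iic (a := (q : ℝ)))
    have hB := condDistrib_ae_eq_condExp (μ := P) hU hY (measurableSet_Iic (a := (q : ℝ)))
    have hAB := condexp_comap_pair_ae_eq hY hU hV hCI (measurableSet_Iic (a := (q : ℝ)))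
    exact hA.trans (hAB.trans hB.symm)
  have h2 : ∀ᵐ ω ∂P, ∀ q : ℚ,
      (condDistrib Y (fun ω => (U ω, V ω)) P (U ω, V ω) (Set.Iic (q : ℝ))).toReal
        = (condDistrib Y U P (U ω) (Set.Iic (q : ℝ))).toReal := ae_all_iff.mpr h1
  filter_upwards [h2] with ω hω
  refine ext_of_generate_finite (⋃ q : ℚ, {Set.Iic (q : ℝ)})
    (BorelSpace.measurable_eq.trans Real.borel_eq_generateFrom_Iic_rat) ?_ ?_ ?_
  · rintro s hs t ht -
    simp only [Set.mem_iUnion, Set.mem_singleton_iff] at hs ht ⊢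
    obtain ⟨q, rfl⟩ := hs
    obtain ⟨r, rfl⟩ := ht
    refine ⟨min q r, ?_⟩
    rw [Set.Iic_inter_Iic]
    norm_num
  · intro s hs
    simp only [Set.mem_iUnion, Set.mem_singleton_iff] at hs
    obtain ⟨q, rfl⟩ := hs
    exact (ENNReal.toReal_eq_toReal_iff' (measure_ne_top _ _) (measure_ne_top _ _)).mp (hω q)
  · simp

lemma HL_pair_eq (hY : Measurable Y) (hL : Measurable L) (hC : ∀ y a, |L (y, a)| ≤ C)
    (hLcont : ∀ y, Continuous fun a => L (y, a))
    {U : Ω → E} {V : Ω → F} (hU : Measurable U) (hV : Measurable V)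
    (hCI : CondIndep (MeasurableSpace.comap U inferInstance)
      (MeasurableSpace.comap Y inferInstance) (MeasurableSpace.comap V inferInstance)
      hU.comap_le P) :
    HL P L Y (fun ω => (U ω, V ω)) = HL P L Y U := by
  have hW : Measurable fun ω => (U ω, V ω) := hU.prodMk hV
  set a : ℕ → 𝒜 := TopologicalSpace.denseSeq 𝒜 with hadef
  have ha : DenseRange a := TopologicalSpace.denseRange_denseSeq 𝒜
  set ℓ : E × 𝒜 → ℝ := fun p => ∫ y, L (y, p.2) ∂(condDistrib Y U P p.1) with hℓdef
  have hℓmeas : Measurable ℓ := by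
    have hsm : StronglyMeasurable
        (Function.uncurry fun (p : E × 𝒜) (y : ℝ) => L (y, p.2)) :=
      (hL.comp (measurable_snd.prodMk (measurable_snd.comp measurable_fst))).stronglyMeasurable
    set κ' : Kernel (E × 𝒜) ℝ :=
      (condDistrib Y U P).comap (Prod.fst : E × 𝒜 → E) measurable_fst with hκ'def
    have h := hsm.integral_kernel_prod_right (κ := κ')
    have heq : (fun p : E × 𝒜 => ∫ y, L (y, p.2) ∂(κ' p)) = ℓ := by
      funext p
      rw [hκ'def, Kernel.comap_apply]
    rw [← heq]
    exact h.measurable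
  have hℓle : ∀ p : E × 𝒜, |ℓ p| ≤ C := by
    intro p
    have h := norm_integral_le_of_norm_le_const (f := fun y => L (y, p.2)) (μ := condDistrib Y U P p.1) (C := C)
      (Filter.Eventually.of_forall fun y => by simpa [Real.norm_eq_abs] using hC y p.2)
    simpa [Real.norm_eq_abs, measure_univ] using h
  have hℓcont : ∀ u : E, Continuous fun b => ℓ (u, b) := by
    intro u
    refine continuous_of_dominated (F := fun b (y : ℝ) => L (y, b)) (bound := fun _ => C)
      (μ := condDistrib Y U P u)
      (fun b => (hL.comp (measurable_id.prodMk measurable_const)).aestronglyMeasurable)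
      (fun b => Filter.Eventually.of_forall fun y => by
        simpa [Real.norm_eq_abs] using hC y b)
      (integrable_const C)
      (Filter.Eventually.of_forall fun y => hLcont y)
  set m : E → ℝ := fun u => ⨅ n : ℕ, ℓ (u, a n) with hmdef
  have hbdd : ∀ u : E, BddBelow (Set.range fun n : ℕ => ℓ (u, a n)) := by
    intro u
    refine ⟨-C, ?_⟩
    rintro x ⟨n, rfl⟩
    exact (abs_le.1 (hℓle (u, a n))).1
  have hm_le : ∀ (u : E) (b : 𝒜), m u ≤ ℓ (u, b) := by
    intro u b
    by_contra hcon
    push_neg at hcon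
    have hopen : IsOpen {x : 𝒜 | ℓ (u, x) < m u} :=
      isOpen_lt (hℓcont u) continuous_const
    obtain ⟨n, hn⟩ := ha.exists_mem_open hopen ⟨b, hcon⟩
    exact absurd (ciInf_le (hbdd u) n) (not_le.mpr hn)
  have hm_meas : Measurable m :=
    Measurable.iInf fun n => hℓmeas.comp (measurable_id.prodMk measurable_const)
  have hm_abs : ∀ u, |m u| ≤ C := by
    intro u
    rw [abs_le]
    constructor
    · exact le_ciInf fun n => (abs_le.1 (hℓle (u, a n))).1
    · exact (ciInf_le (hbdd u) 0).trans (abs_le.1 (hℓle (u, a 0))).2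
  have hm_int : Integrable (fun ω => m (U ω)) P := by
    refine (integrable_const C).mono' ((hm_meas.comp hU).aestronglyMeasurable) ?_
    filter_upwards with ω
    simpa [Real.norm_eq_abs] using hm_abs (U ω)
  -- step 1 : ∫ m ∘ U ≤ HL of the pair
  have step1 : ∫ ω, m (U ω) ∂P ≤ HL P L Y (fun ω => (U ω, V ω)) := by
    rw [HL]
    refine le_ciInf fun ψ => ?_
    have hrepr := integral_loss_eq (P := P) hY hL hC hW ψ.2
    have hmono : ∫ ω, m (U ω) ∂P
        ≤ ∫ ω, ∫ y, L (y, ψ.1 (U ω, V ω))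
            ∂(condDistrib Y (fun ω => (U ω, V ω)) P (U ω, V ω)) ∂P := by
      refine integral_mono_ae hm_int ?_ ?_
      · have hfm : AEStronglyMeasurable (fun p : (E × F) × ℝ => L (p.2, ψ.1 p.1))
            (P.map fun ω => ((U ω, V ω), Y ω)) :=
          (hL.comp (measurable_snd.prodMk (ψ.2.comp measurable_fst))).aestronglyMeasurable
        refine (integrable_const C).mono'
          (hfm.integral_condDistrib hW.aemeasurable hY.aemeasurable) ?_
        filter_upwards with ω
        have h := norm_integral_le_of_norm_le_const
          (f := fun y => L (y, ψ.1 (U ω, V ω)))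
          (μ := condDistrib Y (fun ω => (U ω, V ω)) P (U ω, V ω)) (C := C)
          (Filter.Eventually.of_forall fun y => by
            simpa [Real.norm_eq_abs] using hC y (ψ.1 (U ω, V ω)))
        simpa [Real.norm_eq_abs, measure_univ] using h
      · filter_upwards [condDistrib_pair_ae_eq hY hU hV hCI] with ω hω
        rw [hω]
        exact hm_le (U ω) (ψ.1 (U ω, V ω))
    exact hmono.trans (le_of_eq hrepr.symm)
  -- finite approximations
  have hsel : ∀ N : ℕ, ∃ φ : E → 𝒜, Measurable φ ∧
      ∀ u, ℓ (u, φ u) ≤ ⨅ n : Fin (N + 1), ℓ (u, a n) := by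
    intro N
    induction N with
    | zero =>
      refine ⟨fun _ => a 0, measurable_const, fun u => ?_⟩
      refine le_ciInf fun n => ?_
      rw [Fin.eq_zero n]
      exact le_refl _
    | succ N ih =>
      obtain ⟨φ, hφm, hφ⟩ := ih
      have hS : MeasurableSet {u : E | ℓ (u, a (N + 1)) < ℓ (u, φ u)} :=
        measurableSet_lt (hℓmeas.comp (measurable_id.prodMk measurable_const))
          (hℓmeas.comp (measurable_id.prodMk hφm))
      refine ⟨Set.piecewise {u : E | ℓ (u, a (N + 1)) < ℓ (u, φ u)} (fun _ => a (N + 1)) φ,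
        Measurable.piecewise hS measurable_const hφm, ?_⟩
      intro u
      have h1 : ℓ (u, Set.piecewise {u : E | ℓ (u, a (N + 1)) < ℓ (u, φ u)}
          (fun _ => a (N + 1)) φ u) ≤ ℓ (u, φ u) := by
        by_cases hu : u ∈ {u : E | ℓ (u, a (N + 1)) < ℓ (u, φ u)}
        · rw [Set.piecewise_eq_of_mem _ _ _ hu]
          exact le_of_lt hu
        · rw [Set.piecewise_eq_of_notMem _ _ _ hu]
      have h2 : ℓ (u, Set.piecewise {u : E | ℓ (u, a (N + 1)) < ℓ (u, φ u)}
          (fun _ => a (N + 1)) φ u) ≤ ℓ (u, a (N + 1)) := by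
        by_cases hu : u ∈ {u : E | ℓ (u, a (N + 1)) < ℓ (u, φ u)}
        · rw [Set.piecewise_eq_of_mem _ _ _ hu]
        · rw [Set.piecewise_eq_of_notMem _ _ _ hu]
          exact le_of_not_gt hu
      refine le_ciInf fun n => ?_
      by_cases hn : (n : ℕ) = N + 1
      · rw [hn]
        exact h2
      · have hlt : (n : ℕ) < N + 1 := Nat.lt_of_le_of_ne (Nat.lt_succ_iff.mp n.isLt) hn
        refine h1.trans ((hφ u).trans ?_)
        exact ciInf_le ((Set.finite_range _).bddBelow) (⟨(n : ℕ), hlt⟩ : Fin (N + 1))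
  have hg_bddfin : ∀ (N : ℕ) (u : E),
      BddBelow (Set.range fun n : Fin (N + 1) => ℓ (u, a n)) := fun N u =>
    (Set.finite_range _).bddBelow
  have hg_abs : ∀ (N : ℕ) (u : E), |⨅ n : Fin (N + 1), ℓ (u, a n)| ≤ C := by
    intro N u
    rw [abs_le]
    constructor
    · exact le_ciInf fun n => (abs_le.1 (hℓle _)).1
    · exact (ciInf_le (hg_bddfin N u) (⟨0, Nat.succ_pos N⟩ : Fin (N + 1))).trans
        (abs_le.1 (hℓle (u, a 0))).2
  have hg_meas : ∀ N : ℕ, Measurable (fun u => ⨅ n : Fin (N + 1), ℓ (u, a n)) := fun N =>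
    Measurable.iInf fun n => hℓmeas.comp (measurable_id.prodMk measurable_const)
  have hg_anti : ∀ u : E, Antitone fun N : ℕ => ⨅ n : Fin (N + 1), ℓ (u, a n) := by
    intro u
    refine antitone_nat_of_succ_le fun N => ?_
    refine le_ciInf fun n => ?_
    exact ciInf_le (hg_bddfin (N + 1) u) (⟨(n : ℕ), Nat.lt_succ_of_lt n.isLt⟩ : Fin (N + 2))
  have hg_tendsto : ∀ u : E, Filter.Tendsto (fun N : ℕ => ⨅ n : Fin (N + 1), ℓ (u, a n))
      Filter.atTop (nhds (m u)) := by
    intro u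
    have hBB : BddBelow (Set.range fun N : ℕ => ⨅ n : Fin (N + 1), ℓ (u, a n)) := by
      refine ⟨-C, ?_⟩
      rintro x ⟨N, rfl⟩
      exact (abs_le.1 (hg_abs N u)).1
    have h1 : ⨅ N : ℕ, ⨅ n : Fin (N + 1), ℓ (u, a n) = m u := by
      apply le_antisymm
      · refine le_ciInf fun n => ?_
        exact (ciInf_le hBB n).trans (ciInf_le (hg_bddfin n u) (Fin.last n))
      · exact le_ciInf fun N => le_ciInf fun i => ciInf_le (hbdd u) (i : ℕ)
    rw [← h1]
    exact tendsto_atTop_ciInf (hg_anti u) hBB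
  -- step 2 : HL of U is at most ∫ m ∘ U
  have step2 : HL P L Y U ≤ ∫ ω, m (U ω) ∂P := by
    have hHL : ∀ N : ℕ, HL P L Y U ≤ ∫ ω, ⨅ n : Fin (N + 1), ℓ (U ω, a n) ∂P := by
      intro N
      obtain ⟨φ, hφm, hφ⟩ := hsel N
      have h1 : HL P L Y U ≤ ∫ ω, L (Y ω, φ (U ω)) ∂P :=
        ciInf_le (bddBelow_loss hY hL hC hU) ⟨φ, hφm⟩
      rw [integral_loss_eq (P := P) hY hL hC hU hφm] at h1
      refine h1.trans (integral_mono_ae ?_ ?_ ?_)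
      · exact (integrable_const C).mono'
          ((hℓmeas.comp (hU.prodMk (hφm.comp hU))).aestronglyMeasurable)
          (Filter.Eventually.of_forall fun ω => by
            simpa [Real.norm_eq_abs] using hℓle (U ω, φ (U ω)))
      · exact (integrable_const C).mono' (((hg_meas N).comp hU).aestronglyMeasurable)
          (Filter.Eventually.of_forall fun ω => by
            simpa [Real.norm_eq_abs] using hg_abs N (U ω))
      · exact Filter.Eventually.of_forall fun ω => hφ (U ω)
    have hconv : Filter.Tendsto (fun N : ℕ => ∫ ω, ⨅ n : Fin (N + 1), ℓ (U ω, a n) ∂P)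
        Filter.atTop (nhds (∫ ω, m (U ω) ∂P)) := by
      refine tendsto_integral_of_dominated_convergence (fun _ => C)
        (fun N => ((hg_meas N).comp hU).aestronglyMeasurable) (integrable_const C)
        (fun N => Filter.Eventually.of_forall fun ω => by
          simpa [Real.norm_eq_abs] using hg_abs N (U ω))
        (Filter.Eventually.of_forall fun ω => hg_tendsto (U ω))
    exact ge_of_tendsto hconv (Filter.Eventually.of_forall hHL)
  have step3 : HL P L Y (fun ω => (U ω, V ω)) ≤ HL P L Y U :=
    HL_le_of_comp (W := U) (W' := fun ω => (U ω, V ω)) hY hL hC hW measurable_fst fun ω => rfl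
  exact le_antisymm step3 (step2.trans step1)

end Aux

/-- Exact-Markov case of the information-aging lemma: let `(X_s)_{s ∈ ℤ}`
be real random variables, `Y` a real random variable, `l ≥ 1`, and
`X^l_s = (X_s, …, X_{s−l+1})`.  If for every `μ, ν ≥ 0` the σ-algebras `σ(Y)` and
`σ(X^l_{t−μ−ν})` are conditionally independent given `σ(X^l_{t−μ})`, then for every `δ ≥ 0`,
`H_L(Y | X^l_{t−δ}) = H_L(Y | X^l_t) + Σ_{k=0}^{δ−1} I_L(Y; X^l_{t−k} | X^l_{t−k−1})`
where `I_L(Y; U | V) = H_L(Y | V) − H_L(Y | (U,V)) ≥ 0`; in particular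
`δ ↦ H_L(Y | X^l_{t−δ})` is non-decreasing on `ℕ`. -/
theorem HL_aging_exact_markov
    {Ω 𝒜 : Type*} [MeasurableSpace Ω] [StandardBorelSpace Ω]
    [MetricSpace 𝒜] [CompactSpace 𝒜] [Nonempty 𝒜] [MeasurableSpace 𝒜] [BorelSpace 𝒜]
    (P : Measure Ω) [IsProbabilityMeasure P]
    (X : ℤ → Ω → ℝ) (Y : Ω → ℝ) (hX : ∀ s, Measurable (X s)) (hY : Measurable Y)
    (l : ℕ) (hl : 1 ≤ l) (t : ℤ)
    (Xv : ℤ → Ω → Fin l → ℝ) (hXv : ∀ s ω i, Xv s ω i = X (s - (i : ℤ)) ω)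
    (hXvm : ∀ s, Measurable (Xv s))
    (L : ℝ × 𝒜 → ℝ) (hLmeas : Measurable L)
    (hLbdd : ∃ C : ℝ, ∀ y a, |L (y, a)| ≤ C)
    (hLcont : ∀ y : ℝ, Continuous fun a => L (y, a))
    (hMarkov : ∀ μ ν : ℕ, CondIndep (MeasurableSpace.comap (Xv (t - μ)) inferInstance)
      (MeasurableSpace.comap Y inferInstance)
      (MeasurableSpace.comap (Xv (t - μ - ν)) inferInstance)
      (hXvm (t - μ)).comap_le P) :
    (∀ δ : ℕ, HL P L Y (Xv (t - δ))
        = HL P L Y (Xv t) + ∑ k ∈ Finset.range δ,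
            (HL P L Y (Xv (t - k - 1))
              - HL P L Y (fun ω => (Xv (t - k) ω, Xv (t - k - 1) ω))))
      ∧ (∀ k : ℕ, 0 ≤ HL P L Y (Xv (t - k - 1))
          - HL P L Y (fun ω => (Xv (t - k) ω, Xv (t - k - 1) ω)))
      ∧ (∀ δ₁ δ₂ : ℕ, δ₁ ≤ δ₂ → HL P L Y (Xv (t - δ₁)) ≤ HL P L Y (Xv (t - δ₂))) := by
  obtain ⟨C, hC⟩ := hLbdd
  have hkey : ∀ k : ℕ, HL P L Y (fun ω => (Xv (t - k) ω, Xv (t - k - 1) ω))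
      = HL P L Y (Xv (t - k)) := by
    intro k
    have hCI := hMarkov k 1
    have h1 : t - (k : ℤ) - ((1 : ℕ) : ℤ) = t - (k : ℤ) - 1 := by norm_num
    rw [h1] at hCI
    exact HL_pair_eq hY hLmeas hC hLcont (hXvm (t - (k : ℤ))) (hXvm (t - (k : ℤ) - 1)) hCI
  have hcast : ∀ k : ℕ, t - (k : ℤ) - 1 = t - ((k + 1 : ℕ) : ℤ) := by
    intro k
    push_cast
    ring
  have hle : ∀ k : ℕ, HL P L Y (fun ω => (Xv (t - k) ω, Xv (t - k - 1) ω))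
      ≤ HL P L Y (Xv (t - k - 1)) :=
    fun k => HL_le_of_comp (W := Xv (t - (k : ℤ) - 1)) hY hLmeas hC
      ((hXvm _).prodMk (hXvm _)) measurable_snd fun ω => rfl
  refine ⟨?_, ?_, ?_⟩
  · intro δ
    have hsum : ∑ k ∈ Finset.range δ,
        (HL P L Y (Xv (t - k - 1)) - HL P L Y (fun ω => (Xv (t - k) ω, Xv (t - k - 1) ω)))
        = ∑ k ∈ Finset.range δ,
          ((fun j : ℕ => HL P L Y (Xv (t - (j : ℤ)))) (k + 1)
            - (fun j : ℕ => HL P L Y (Xv (t - (j : ℤ)))) k) := by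
      refine Finset.sum_congr rfl fun k _ => ?_
      beta_reduce
      rw [hkey k, hcast k]
    rw [hsum, Finset.sum_range_sub (fun j : ℕ => HL P L Y (Xv (t - (j : ℤ))))]
    have h0 : t - ((0 : ℕ) : ℤ) = t := by norm_num
    rw [h0]
    ring
  · intro k
    exact sub_nonneg.mpr (hle k)
  · intro δ₁ δ₂ hδ
    have hsucc : ∀ k : ℕ, HL P L Y (Xv (t - (k : ℤ))) ≤ HL P L Y (Xv (t - ((k + 1 : ℕ) : ℤ))) := by
      intro k
      rw [← hcast k, ← hkey k]
      exact hle k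
    exact monotone_nat_of_le_succ (f := fun j : ℕ => HL P L Y (Xv (t - (j : ℤ)))) hsucc hδ
end

section
/- Closed-form Gaussian conditional mutual information: let R be a positive-definite (a+b+c)×(a+b+c) real covariance matrix for a centered Gaussian vector (Y, Z, X) with Y ∈ ℝ^a, Z ∈ ℝ^b, X ∈ ℝ^c, and let μ be the centered Gaussian measure on ℝ^{a+b+c} with covariance R. Denote by R_X, R_{[Y,X]}, R_{[Z,X]} the submatrices of R corresponding to the coordinate blocks X, (Y,X), and (Z,X) respectively. Then ∫ log( ( p_R(y,z,x) · p_{R_X}(x) ) / ( p_{R_{[Y,X]}}(y,x) · p_{R_{[Z,X]}}(z,x) ) ) dμ(y,z,x) = (1/2)·log( ( det R_{[Z,X]} · det R_{[Y,X]} ) / ( det R_X · det R ) ). In particular, the Shannon conditional mutual information I(Y; Z | X) of a centered Gaussian vector equals (1/2) log( det R_{[Z,X]} det R_{[Y,X]} / ( det R_X det R_{[Y,Z,X]} ) ). -/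
open MeasureTheory Matrix

/-- The centered Gaussian density on `ℝ^ι` with covariance matrix `Σ`:
`p_Σ(u) = ((2π)^k det Σ)^(−1/2) · exp(−(1/2) uᵀ Σ⁻¹ u)`. -/
noncomputable def gaussDensity {ι : Type*} [Fintype ι] [DecidableEq ι]
    (S : Matrix ι ι ℝ) (u : ι → ℝ) : ℝ :=
  (Real.sqrt ((2 * Real.pi) ^ Fintype.card ι * S.det))⁻¹ *
    Real.exp (-(1 / 2) * (u ⬝ᵥ S⁻¹.mulVec u))

/-- The centered Gaussian measure on `ℝ^ι` with covariance matrix `Σ`: the measure with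
density `p_Σ` with respect to Lebesgue measure. -/
noncomputable def gaussMeasure {ι : Type*} [Fintype ι] [DecidableEq ι]
    (S : Matrix ι ι ℝ) : Measure (ι → ℝ) :=
  volume.withDensity fun u => ENNReal.ofReal (gaussDensity S u)

section SqrtPort
open scoped MatrixOrder

noncomputable def Matrix.PosSemidef.sqrt {ι : Type*} [Fintype ι] [DecidableEq ι]
    {A : Matrix ι ι ℝ} (_hA : A.PosSemidef) : Matrix ι ι ℝ := CFC.sqrt A

lemma Matrix.PosSemidef.sqrt_mul_self {ι : Type*} [Fintype ι] [DecidableEq ι]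
    {A : Matrix ι ι ℝ} (hA : A.PosSemidef) : hA.sqrt * hA.sqrt = A :=
  CFC.sqrt_mul_sqrt_self A hA.nonneg

lemma Matrix.PosSemidef.posSemidef_sqrt {ι : Type*} [Fintype ι] [DecidableEq ι]
    {A : Matrix ι ι ℝ} (hA : A.PosSemidef) : hA.sqrt.PosSemidef :=
  (CFC.sqrt_nonneg A).posSemidef

end SqrtPort

open Real

noncomputable def g1d : ℝ → ℝ := fun x => (Real.sqrt (2 * π))⁻¹ * Real.exp (-(1/2) * x ^ 2)

lemma g1d_integrable : Integrable g1d :=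
  (integrable_exp_neg_mul_sq (by norm_num : (0:ℝ) < 1/2)).const_mul _

lemma integral_g1d : ∫ x, g1d x = 1 := by
  unfold g1d
  rw [integral_const_mul, integral_gaussian]
  rw [show π / (1/2) = 2 * π by ring]
  rw [inv_mul_cancel₀ (by positivity)]

lemma mul_g1d_integrable : Integrable (fun x => x * g1d x) := by
  have : (fun x : ℝ => x * g1d x)
      = fun x => (Real.sqrt (2*π))⁻¹ * (x * Real.exp (-(1/2) * x ^ 2)) := by
    funext x; unfold g1d; ring
  rw [this]
  exact (integrable_mul_exp_neg_mul_sq (by norm_num : (0:ℝ) < 1/2)).const_mul _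

lemma integral_mul_g1d : ∫ x, x * g1d x = 0 := by
  have h := (Measure.measurePreserving_neg (volume : Measure ℝ)).integral_comp
    (Homeomorph.neg ℝ).measurableEmbedding (fun x : ℝ => x * g1d x)
  have h2 : ∫ x : ℝ, -(x * g1d x) = ∫ x : ℝ, x * g1d x := by
    have : ∀ x : ℝ, (-x) * g1d (-x) = -(x * g1d x) := by
      intro x; unfold g1d; rw [neg_sq]; ring
    simpa [this] using h
  rw [integral_neg] at h2
  linarith

lemma sq_mul_exp_integrable : Integrable (fun x : ℝ => x ^ 2 * Real.exp (-(1/2) * x ^ 2)) := by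
  have := integrable_rpow_mul_exp_neg_mul_sq (b := 1/2) (by norm_num) (s := 2) (by norm_num)
  simpa [Real.rpow_two] using this

lemma sq_mul_g1d_integrable : Integrable (fun x => x * (x * g1d x)) := by
  have : (fun x : ℝ => x * (x * g1d x))
      = fun x => (Real.sqrt (2*π))⁻¹ * (x ^ 2 * Real.exp (-(1/2) * x ^ 2)) := by
    funext x; unfold g1d; ring
  rw [this]
  exact sq_mul_exp_integrable.const_mul _

lemma integral_sq_mul_exp : ∫ x : ℝ, x ^ 2 * Real.exp (-(1/2) * x ^ 2) = Real.sqrt (2 * π) := by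
  have habs := integral_comp_abs (f := fun y : ℝ => y ^ 2 * Real.exp (-(1/2) * y ^ 2))
  simp only [sq_abs] at habs
  have hG := integral_rpow_mul_exp_neg_mul_rpow (p := 2) (q := 2) (b := 1/2)
    (by norm_num) (by norm_num) (by norm_num)
  have hcongr : ∫ x in Set.Ioi (0:ℝ), x ^ (2:ℝ) * Real.exp (-(1/2) * x ^ (2:ℝ))
      = ∫ x in Set.Ioi (0:ℝ), x ^ 2 * Real.exp (-(1/2) * x ^ 2) := by
    refine setIntegral_congr_fun measurableSet_Ioi (fun x hx => ?_)
    rw [Real.rpow_two]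
  rw [hcongr] at hG
  rw [habs, hG]
  have hΓ : Real.Gamma ((2 + 1) / 2) = Real.sqrt π / 2 := by
    have : ((2:ℝ) + 1) / 2 = 1/2 + 1 := by norm_num
    rw [this, Real.Gamma_add_one (by norm_num), Real.Gamma_one_half_eq]
    ring
  have hb : ((1:ℝ)/2) ^ (-((2:ℝ) + 1) / 2 : ℝ) = 2 * Real.sqrt 2 := by
    rw [show ((1:ℝ)/2) = (2:ℝ)⁻¹ by norm_num, Real.inv_rpow (by norm_num),
      ← Real.rpow_neg (by norm_num)]
    rw [show -(-((2:ℝ) + 1) / 2) = 1 + 1/2 by norm_num]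
    rw [Real.rpow_add (by norm_num), Real.rpow_one, ← Real.sqrt_eq_rpow]
  rw [hΓ, hb, Real.sqrt_mul (by norm_num : (0:ℝ) ≤ 2)]
  ring

lemma integral_sq_mul_g1d : ∫ x, x * (x * g1d x) = 1 := by
  have : (fun x : ℝ => x * (x * g1d x))
      = fun x => (Real.sqrt (2*π))⁻¹ * (x ^ 2 * Real.exp (-(1/2) * x ^ 2)) := by
    funext x; unfold g1d; ring
  rw [this, integral_const_mul, integral_sq_mul_exp, inv_mul_cancel₀ (by positivity)]

section Std
variable {ι : Type*} [Fintype ι] [DecidableEq ι]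

lemma gaussDensity_one_eq (w : ι → ℝ) :
    gaussDensity (1 : Matrix ι ι ℝ) w = ∏ i, g1d (w i) := by
  unfold gaussDensity g1d
  have h1 : Real.sqrt ((2*π) ^ Fintype.card ι * (1 : Matrix ι ι ℝ).det)
      = (Real.sqrt (2*π)) ^ Fintype.card ι := by
    rw [Matrix.det_one, mul_one]
    rw [show ((2*π: ℝ)) ^ Fintype.card ι = ((Real.sqrt (2*π)) ^ Fintype.card ι)^2 by
      rw [← pow_mul, mul_comm (Fintype.card ι) 2, pow_mul, Real.sq_sqrt (by positivity)]]
    rw [Real.sqrt_sq (by positivity)]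
  rw [h1, inv_one, Matrix.one_mulVec]
  have h2 : w ⬝ᵥ w = ∑ i, (w i) ^ 2 := by
    simp [dotProduct, pow_two]
  rw [h2, Finset.mul_sum, Real.exp_sum, Finset.prod_mul_distrib, Finset.prod_const,
    Finset.card_univ, inv_pow]

lemma gaussDensity_one_integrable : Integrable (gaussDensity (1 : Matrix ι ι ℝ)) := by
  have : gaussDensity (1 : Matrix ι ι ℝ) = fun w => ∏ i, g1d (w i) := by
    funext w; exact gaussDensity_one_eq w
  rw [this]
  exact Integrable.fintype_prod (f := fun _ : ι => g1d) fun _ => g1d_integrable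

lemma integral_gaussDensity_one : ∫ w : ι → ℝ, gaussDensity (1 : Matrix ι ι ℝ) w = 1 := by
  simp_rw [gaussDensity_one_eq]
  rw [integral_fintype_prod_volume_eq_prod (f := fun _ => g1d)]
  simp [integral_g1d]

lemma std_moment (k l : ι) :
    Integrable (fun w : ι → ℝ => w k * w l * gaussDensity (1 : Matrix ι ι ℝ) w) ∧
    ∫ w : ι → ℝ, w k * w l * gaussDensity (1 : Matrix ι ι ℝ) w
      = ((1 : Matrix ι ι ℝ) k l) := by
  classical
  set f : ι → ℝ → ℝ := fun i x => (if i = k then x else 1) * ((if i = l then x else 1) * g1d x)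
    with hf
  have hfact : (fun w : ι → ℝ => w k * w l * gaussDensity (1 : Matrix ι ι ℝ) w)
      = fun w => ∏ i, f i (w i) := by
    funext w
    rw [gaussDensity_one_eq]
    simp only [hf]
    rw [Finset.prod_mul_distrib, Finset.prod_mul_distrib]
    rw [Finset.prod_ite_eq' Finset.univ k (fun i => w i),
      Finset.prod_ite_eq' Finset.univ l (fun i => w i)]
    simp [mul_assoc]
  have hint : ∀ i, Integrable (f i) := by
    intro i
    by_cases hik : i = k <;> by_cases hil : i = l
    · subst hik; subst hil
      have : f i = fun x => x * (x * g1d x) := by funext x; simp [hf]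
      rw [this]; exact sq_mul_g1d_integrable
    · subst hik
      have : f i = fun x => x * g1d x := by funext x; simp [hf, hil]
      rw [this]; exact mul_g1d_integrable
    · subst hil
      have : f i = fun x => x * g1d x := by funext x; simp [hf, hik]
      rw [this]; exact mul_g1d_integrable
    · have : f i = g1d := by funext x; simp [hf, hik, hil, g1d]
      rw [this]; exact g1d_integrable
  constructor
  · rw [hfact]
    exact Integrable.fintype_prod (f := f) hint
  · rw [hfact, integral_fintype_prod_volume_eq_prod (f := f)]
    by_cases hkl : k = l
    · subst hkl
      rw [Matrix.one_apply_eq]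
      refine Finset.prod_eq_one fun i _ => ?_
      by_cases hik : i = k
      · subst hik
        have : f i = fun x => x * (x * g1d x) := by funext x; simp [hf]
        rw [this]; exact integral_sq_mul_g1d
      · have : f i = g1d := by funext x; simp [hf, hik, g1d]
        rw [this]; exact integral_g1d
    · rw [Matrix.one_apply_ne hkl]
      refine Finset.prod_eq_zero (Finset.mem_univ k) ?_
      have : f k = fun x => x * g1d x := by funext x; simp [hf, hkl]
      rw [this]; exact integral_mul_g1d

end Std

section Transfer
variable {ι : Type*} [Fintype ι] [DecidableEq ι]

lemma gaussDensity_nonneg (S : Matrix ι ι ℝ) (u : ι → ℝ) : 0 ≤ gaussDensity S u := by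
  unfold gaussDensity; positivity

lemma measurable_gaussDensity (S : Matrix ι ι ℝ) : Measurable (gaussDensity S) := by
  unfold gaussDensity
  have q : Measurable (fun u : ι → ℝ => u ⬝ᵥ S⁻¹.mulVec u) := by
    simp only [dotProduct, Matrix.mulVec]
    exact Finset.measurable_sum _ fun i _ => (measurable_pi_apply i).mul
      (Finset.measurable_sum _ fun j _ => ((measurable_pi_apply j).const_mul _))
  exact (((q.const_mul (-(1/2))).exp)).const_mul _

lemma posDef_of_posSemidef_det_ne_zero {A : Matrix ι ι ℝ} (hA : A.PosSemidef)
    (h : A.det ≠ 0) : A.PosDef := by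
  refine posDef_iff_dotProduct_mulVec.mpr ⟨hA.1, fun x hx => ?_⟩
  rcases lt_or_eq_of_le (hA.dotProduct_mulVec_nonneg x) with h' | h'
  · exact h'
  · exfalso; apply hx
    have h0 : A.mulVec x = 0 := (hA.dotProduct_mulVec_zero_iff x).mp h'.symm
    have := congrArg (fun v => A⁻¹.mulVec v) h0
    simpa [Matrix.mulVec_mulVec, Matrix.nonsing_inv_mul _ (isUnit_iff_ne_zero.mpr h),
      Matrix.one_mulVec] using this

lemma integral_comp_mulVec (A : Matrix ι ι ℝ) (hA : A.det ≠ 0) {h : (ι → ℝ) → ℝ}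
    (hm : AEStronglyMeasurable h (volume : Measure (ι → ℝ))) :
    ∫ u, h u = |A.det| * ∫ w, h (A.mulVec w) := by
  have hdet : LinearMap.det (Matrix.toLin' A) ≠ 0 := by
    rwa [LinearMap.det_toLin']
  have hmap := Measure.map_linearMap_addHaar_eq_smul_addHaar (volume : Measure (ι → ℝ)) hdet
  have hcont : Continuous (Matrix.toLin' A) := LinearMap.continuous_of_finiteDimensional _
  have h1 : ∫ w, h (A.mulVec w) = ∫ u, h u ∂(Measure.map (Matrix.toLin' A) volume) := by
    rw [integral_map hcont.measurable.aemeasurable]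
    · simp only [Matrix.toLin'_apply]
    · rw [hmap]
      exact hm.mono_ac Measure.smul_absolutelyContinuous
  rw [h1, hmap, integral_smul_measure, LinearMap.det_toLin',
    ENNReal.toReal_ofReal (abs_nonneg _), abs_inv, smul_eq_mul, ← mul_assoc,
    mul_inv_cancel₀ (by simpa using hA), one_mul]

lemma gaussMeasure_key (R : Matrix ι ι ℝ) (hR : R.PosDef) :
    ∀ w : ι → ℝ, |((hR.posSemidef.sqrt)).det| *
        gaussDensity R ((hR.posSemidef.sqrt).mulVec w) = gaussDensity (1 : Matrix ι ι ℝ) w := by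
  intro w
  set A := hR.posSemidef.sqrt with hA
  have hAA : A * A = R := hR.posSemidef.sqrt_mul_self
  have hAsd : A.PosSemidef := hR.posSemidef.posSemidef_sqrt
  have hAT : Aᵀ = A := by
    rw [← Matrix.conjTranspose_eq_transpose_of_trivial]
    exact hAsd.1
  have hdetR : A.det * A.det = R.det := by rw [← hAA, Matrix.det_mul]
  have hdetA : A.det ≠ 0 := by
    intro h0
    have := hR.det_pos
    rw [← hdetR, h0, mul_zero] at this
    exact lt_irrefl _ this
  have hApd : A.PosDef := posDef_of_posSemidef_det_ne_zero hAsd hdetA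
  have hdetApos : 0 < A.det := hApd.det_pos
  have hunit : IsUnit A.det := isUnit_iff_ne_zero.mpr hdetA
  have hinv : A * R⁻¹ * A = 1 := by
    rw [← hAA, Matrix.mul_inv_rev]
    calc A * (A⁻¹ * A⁻¹) * A = (A * A⁻¹) * (A⁻¹ * A) := by
          simp only [Matrix.mul_assoc]
      _ = 1 := by
          rw [Matrix.mul_nonsing_inv _ hunit, Matrix.nonsing_inv_mul _ hunit, Matrix.one_mul]
  have hquad : (A.mulVec w) ⬝ᵥ R⁻¹.mulVec (A.mulVec w) = w ⬝ᵥ w := by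
    calc (A.mulVec w) ⬝ᵥ R⁻¹.mulVec (A.mulVec w)
        = (w ᵥ* A) ⬝ᵥ ((R⁻¹ * A).mulVec w) := by
          rw [Matrix.mulVec_mulVec, ← Matrix.mulVec_transpose, hAT]
      _ = w ⬝ᵥ (A.mulVec ((R⁻¹ * A).mulVec w)) := (dotProduct_mulVec w A _).symm
      _ = w ⬝ᵥ ((A * (R⁻¹ * A)).mulVec w) := by rw [Matrix.mulVec_mulVec]
      _ = w ⬝ᵥ ((1 : Matrix ι ι ℝ).mulVec w) := by rw [← Matrix.mul_assoc, hinv]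
      _ = w ⬝ᵥ w := by rw [Matrix.one_mulVec]
  unfold gaussDensity
  rw [inv_one, Matrix.one_mulVec, hquad]
  have hsqrt : Real.sqrt ((2 * Real.pi) ^ Fintype.card ι * R.det)
      = Real.sqrt ((2 * Real.pi) ^ Fintype.card ι * (1 : Matrix ι ι ℝ).det) * A.det := by
    rw [Matrix.det_one, mul_one, ← hdetR, Real.sqrt_mul (by positivity),
      Real.sqrt_mul_self hdetApos.le]
  rw [hsqrt, Matrix.det_one, mul_one, abs_of_pos hdetApos, mul_inv]
  field_simp

end Transfer

section Master
variable {ι : Type*} [Fintype ι] [DecidableEq ι]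

lemma sqrt_det_ne_zero (R : Matrix ι ι ℝ) (hR : R.PosDef) :
    (hR.posSemidef.sqrt).det ≠ 0 := by
  have hdetR : (hR.posSemidef.sqrt).det * (hR.posSemidef.sqrt).det = R.det := by
    have h := congrArg Matrix.det hR.posSemidef.sqrt_mul_self
    rwa [Matrix.det_mul] at h
  intro h0
  have := hR.det_pos
  rw [← hdetR, h0, mul_zero] at this
  exact lt_irrefl _ this

lemma integral_gaussMeasure_eq (R : Matrix ι ι ℝ) (hR : R.PosDef) {g : (ι → ℝ) → ℝ}
    (hg : Measurable g) :
    ∫ v, g v ∂(gaussMeasure R)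
      = ∫ w, g ((hR.posSemidef.sqrt).mulVec w) * gaussDensity (1 : Matrix ι ι ℝ) w := by
  have hgd := measurable_gaussDensity (ι := ι) R
  have step1 : ∫ v, g v ∂(gaussMeasure R) = ∫ v, gaussDensity R v * g v := by
    rw [gaussMeasure]
    have hrw : (fun u => ENNReal.ofReal (gaussDensity R u))
        = fun u => (((fun u => (gaussDensity R u).toNNReal) u : NNReal) : ENNReal) := rfl
    rw [hrw, integral_withDensity_eq_integral_smul (hgd.real_toNNReal) g]
    refine integral_congr_ae (Filter.Eventually.of_forall fun v => ?_)
    simp [NNReal.smul_def, Real.coe_toNNReal _ (gaussDensity_nonneg R v)]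
  rw [step1,
    integral_comp_mulVec (hR.posSemidef.sqrt) (sqrt_det_ne_zero R hR)
      (h := fun v => gaussDensity R v * g v) ((hgd.mul hg).aestronglyMeasurable),
    ← integral_const_mul]
  refine integral_congr_ae (Filter.Eventually.of_forall fun w => ?_)
  beta_reduce
  rw [← mul_assoc, gaussMeasure_key R hR w, mul_comm]

lemma gauss_pair (R : Matrix ι ι ℝ) (hR : R.PosDef) (i j : ι) :
    Integrable (fun w : ι → ℝ =>
        ((hR.posSemidef.sqrt).mulVec w) i * ((hR.posSemidef.sqrt).mulVec w) j *
          gaussDensity (1 : Matrix ι ι ℝ) w) ∧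
      ∫ w : ι → ℝ, ((hR.posSemidef.sqrt).mulVec w) i * ((hR.posSemidef.sqrt).mulVec w) j *
          gaussDensity (1 : Matrix ι ι ℝ) w = R i j := by
  set A := hR.posSemidef.sqrt with hA
  have hAA : A * A = R := hR.posSemidef.sqrt_mul_self
  have hAT : Aᵀ = A := by
    rw [← Matrix.conjTranspose_eq_transpose_of_trivial]
    exact hR.posSemidef.posSemidef_sqrt.1
  have hexp : (fun w : ι → ℝ => (A.mulVec w) i * (A.mulVec w) j
        * gaussDensity (1 : Matrix ι ι ℝ) w)
      = fun w => ∑ k, ∑ l, A i k * A j l *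
          (w k * w l * gaussDensity (1 : Matrix ι ι ℝ) w) := by
    funext w
    simp only [Matrix.mulVec, dotProduct, Finset.sum_mul_sum, Finset.sum_mul,
      Finset.mul_sum]
    rw [Finset.sum_comm]
    refine Finset.sum_congr rfl fun k _ => Finset.sum_congr rfl fun l _ => by ring
  constructor
  · rw [hexp]
    refine integrable_finset_sum _ fun k _ => integrable_finset_sum _ fun l _ => ?_
    exact (std_moment k l).1.const_mul _
  · rw [hexp, integral_finset_sum _ fun k _ => integrable_finset_sum _ fun l _ =>
      ((std_moment k l).1.const_mul _)]
    have : ∀ k : ι, ∫ w : ι → ℝ, ∑ l, A i k * A j l *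
          (w k * w l * gaussDensity (1 : Matrix ι ι ℝ) w)
        = ∑ l, A i k * A j l * ((1 : Matrix ι ι ℝ) k l) := by
      intro k
      rw [integral_finset_sum _ fun l _ => ((std_moment k l).1.const_mul _)]
      refine Finset.sum_congr rfl fun l _ => ?_
      rw [integral_const_mul, (std_moment k l).2]
    simp_rw [this]
    have hsum : ∀ k : ι, ∑ l, A i k * A j l * ((1 : Matrix ι ι ℝ) k l) = A i k * A j k := by
      intro k
      rw [Finset.sum_eq_single k]
      · rw [Matrix.one_apply_eq, mul_one]
      · intro l _ hlk
        rw [Matrix.one_apply_ne (Ne.symm hlk), mul_zero]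
      · intro h; exact absurd (Finset.mem_univ k) h
    simp_rw [hsum]
    have hsym : ∀ p q, A p q = A q p := by
      intro p q
      conv_lhs => rw [← hAT]
      exact Matrix.transpose_apply A p q
    rw [← hAA, Matrix.mul_apply]
    refine Finset.sum_congr rfl fun k _ => ?_
    rw [hsym j k]

end Master

section Blocks
variable {ι : Type*} [Fintype ι] [DecidableEq ι]

lemma posDef_submatrix {R : Matrix ι ι ℝ} (hR : R.PosDef) {κ : Type*} [Fintype κ]
    [DecidableEq κ] (e : κ → ι) (he : Function.Injective e) :
    (R.submatrix e e).PosDef := by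
  rw [posDef_iff_dotProduct_mulVec]
  constructor
  · show (R.submatrix e e)ᴴ = R.submatrix e e
    rw [Matrix.conjTranspose_submatrix, hR.1]
  · intro x hx
    set y : ι → ℝ := fun i => ∑ p, if e p = i then x p else 0 with hy
    have hye : ∀ p, y (e p) = x p := by
      intro p
      simp only [hy, he.eq_iff]
      rw [Finset.sum_ite_eq' Finset.univ p x, if_pos (Finset.mem_univ p)]
    have hyne : y ≠ 0 := by
      intro h
      apply hx
      funext p
      have := congrFun h (e p)
      rwa [hye p] at this
    have hkey : ∀ h : ι → ℝ, ∑ i, y i * h i = ∑ p, x p * h (e p) := by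
      intro h
      simp only [hy, Finset.sum_mul, ite_mul, zero_mul]
      rw [Finset.sum_comm]
      refine Finset.sum_congr rfl fun p _ => ?_
      rw [Finset.sum_ite_eq Finset.univ (e p) (fun i => x p * h i), if_pos (Finset.mem_univ _)]
    have hquad : star x ⬝ᵥ (R.submatrix e e).mulVec x = star y ⬝ᵥ R.mulVec y := by
      simp only [star_trivial]
      have h1 : y ⬝ᵥ R.mulVec y = ∑ i, y i * (R.mulVec y) i := rfl
      have h2 : ∀ i, (R.mulVec y) i = ∑ q, x q * R i (e q) := by
        intro i
        show (fun j => R i j) ⬝ᵥ y = _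
        have : (fun j => R i j) ⬝ᵥ y = ∑ j, y j * R i j := by
          simp [dotProduct, mul_comm]
        rw [this, hkey (fun j => R i j)]
      rw [h1, hkey]
      simp only [h2]
      simp only [dotProduct, Matrix.mulVec, Matrix.submatrix_apply]
      refine Finset.sum_congr rfl fun p _ => ?_
      rw [Finset.mul_sum, Finset.mul_sum]
      refine Finset.sum_congr rfl fun q _ => by ring
    rw [hquad]
    exact hR.dotProduct_mulVec_pos hyne

lemma block_final (R : Matrix ι ι ℝ) (hR : R.PosDef) {κ : Type*} [Fintype κ] [DecidableEq κ]
    (e : κ → ι) (S : Matrix κ κ ℝ) (hScongr : S = R.submatrix e e) (hSpd : S.PosDef) :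
    Integrable (fun w : ι → ℝ =>
        ((fun p => ((hR.posSemidef.sqrt).mulVec w) (e p)) ⬝ᵥ
            S⁻¹.mulVec (fun p => ((hR.posSemidef.sqrt).mulVec w) (e p))) *
          gaussDensity (1 : Matrix ι ι ℝ) w) ∧
      ∫ w : ι → ℝ, ((fun p => ((hR.posSemidef.sqrt).mulVec w) (e p)) ⬝ᵥ
            S⁻¹.mulVec (fun p => ((hR.posSemidef.sqrt).mulVec w) (e p))) *
          gaussDensity (1 : Matrix ι ι ℝ) w = (Fintype.card κ : ℝ) := by
  set A := hR.posSemidef.sqrt with hA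
  have hq : ∀ u : ι → ℝ, ((fun p => u (e p)) ⬝ᵥ S⁻¹.mulVec (fun p => u (e p)))
      = ∑ p, ∑ r, S⁻¹ p r * (u (e p) * u (e r)) := by
    intro u
    simp only [dotProduct, Matrix.mulVec, Finset.mul_sum]
    refine Finset.sum_congr rfl fun p _ => Finset.sum_congr rfl fun r _ => by ring
  have hexp : (fun w : ι → ℝ =>
        ((fun p => (A.mulVec w) (e p)) ⬝ᵥ S⁻¹.mulVec (fun p => (A.mulVec w) (e p))) *
          gaussDensity (1 : Matrix ι ι ℝ) w)
      = fun w => ∑ p, ∑ r, S⁻¹ p r *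
          ((A.mulVec w) (e p) * (A.mulVec w) (e r) * gaussDensity (1 : Matrix ι ι ℝ) w) := by
    funext w
    rw [hq]
    rw [Finset.sum_mul]
    refine Finset.sum_congr rfl fun p _ => ?_
    rw [Finset.sum_mul]
    refine Finset.sum_congr rfl fun r _ => by ring
  have hint : ∀ (p r : κ), Integrable (fun w : ι → ℝ => S⁻¹ p r *
      ((A.mulVec w) (e p) * (A.mulVec w) (e r) * gaussDensity (1 : Matrix ι ι ℝ) w)) :=
    fun p r => (gauss_pair R hR (e p) (e r)).1.const_mul _
  constructor
  · rw [hexp]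
    exact integrable_finset_sum _ fun p _ => integrable_finset_sum _ fun r _ => hint p r
  · rw [hexp, integral_finset_sum _ fun p _ => integrable_finset_sum _ fun r _ => hint p r]
    have hval : ∀ p : κ, ∫ w : ι → ℝ, ∑ r, S⁻¹ p r *
          ((A.mulVec w) (e p) * (A.mulVec w) (e r) * gaussDensity (1 : Matrix ι ι ℝ) w)
        = ∑ r, S⁻¹ p r * R (e p) (e r) := by
      intro p
      rw [integral_finset_sum _ fun r _ => hint p r]
      refine Finset.sum_congr rfl fun r _ => ?_
      rw [integral_const_mul, (gauss_pair R hR (e p) (e r)).2]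
    simp_rw [hval]
    have hSsym : ∀ p r : κ, S r p = S p r := by
      intro p r
      have hT : Sᵀ = S := by
        rw [← Matrix.conjTranspose_eq_transpose_of_trivial]
        exact hSpd.1
      conv_lhs => rw [← hT]
      exact Matrix.transpose_apply S r p
    have hdiag : ∀ p : κ, ∑ r, S⁻¹ p r * R (e p) (e r) = (S⁻¹ * S) p p := by
      intro p
      rw [Matrix.mul_apply]
      refine Finset.sum_congr rfl fun r _ => ?_
      rw [hSsym p r, hScongr, Matrix.submatrix_apply]
    simp_rw [hdiag]
    rw [Matrix.nonsing_inv_mul S (isUnit_iff_ne_zero.mpr (ne_of_gt hSpd.det_pos))]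
    simp [Matrix.one_apply_eq, Finset.card_univ]

lemma gaussDensity_pos {κ : Type*} [Fintype κ] [DecidableEq κ] {S : Matrix κ κ ℝ}
    (hS : S.PosDef) (u : κ → ℝ) : 0 < gaussDensity S u := by
  have hd := hS.det_pos
  unfold gaussDensity
  have h1 : 0 < Real.sqrt ((2 * Real.pi) ^ Fintype.card κ * S.det) :=
    Real.sqrt_pos.mpr (by positivity)
  exact mul_pos (inv_pos.mpr h1) (Real.exp_pos _)

lemma log_gaussDensity {κ : Type*} [Fintype κ] [DecidableEq κ] {S : Matrix κ κ ℝ}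
    (hS : S.PosDef) (u : κ → ℝ) :
    Real.log (gaussDensity S u)
      = -((1:ℝ)/2) * Real.log ((2 * Real.pi) ^ Fintype.card κ * S.det)
        + (-(1/2)) * (u ⬝ᵥ S⁻¹.mulVec u) := by
  have hd := hS.det_pos
  have harg : (0:ℝ) < (2 * Real.pi) ^ Fintype.card κ * S.det := by positivity
  unfold gaussDensity
  rw [Real.log_mul (inv_ne_zero (ne_of_gt (Real.sqrt_pos.mpr harg))) (Real.exp_ne_zero _),
    Real.log_inv, Real.log_exp, Real.log_sqrt harg.le]
  ring

end Blocks

/-- Closed-form Gaussian conditional mutual information: for a centered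
Gaussian vector `(Y, Z, X)` on `ℝ^(a+b+c)` (coordinates indexed by `Fin a ⊕ Fin b ⊕ Fin c`,
the `Y`-block first, then the `Z`-block, then the `X`-block) with positive-definite
covariance `R`, the Shannon conditional mutual information
`I(Y; Z | X) = ∫ log( p_R(y,z,x) · p_{R_X}(x) / ( p_{R_[Y,X]}(y,x) · p_{R_[Z,X]}(z,x) ) ) dμ_R`
equals `(1/2)·log( det R_[Z,X] · det R_[Y,X] / ( det R_X · det R ) )`. -/
theorem gaussian_conditional_mutual_information (a b c : ℕ)
    (R : Matrix (Fin a ⊕ Fin b ⊕ Fin c) (Fin a ⊕ Fin b ⊕ Fin c) ℝ) (hR : R.PosDef) :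
    (∫ v, Real.log
        ((gaussDensity R v *
            gaussDensity (R.submatrix (Sum.inr ∘ Sum.inr) (Sum.inr ∘ Sum.inr))
              (fun i : Fin c => v (Sum.inr (Sum.inr i)))) /
          (gaussDensity
              (R.submatrix (Sum.elim Sum.inl (Sum.inr ∘ Sum.inr))
                (Sum.elim Sum.inl (Sum.inr ∘ Sum.inr)))
              (fun i : Fin a ⊕ Fin c => v (Sum.elim Sum.inl (Sum.inr ∘ Sum.inr) i)) *
            gaussDensity
              (R.submatrix (Sum.elim (Sum.inr ∘ Sum.inl) (Sum.inr ∘ Sum.inr))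
                (Sum.elim (Sum.inr ∘ Sum.inl) (Sum.inr ∘ Sum.inr)))
              (fun i : Fin b ⊕ Fin c => v (Sum.elim (Sum.inr ∘ Sum.inl) (Sum.inr ∘ Sum.inr) i))))
      ∂(gaussMeasure R))
      = 1 / 2 * Real.log
          (((R.submatrix (Sum.elim (Sum.inr ∘ Sum.inl) (Sum.inr ∘ Sum.inr))
                (Sum.elim (Sum.inr ∘ Sum.inl) (Sum.inr ∘ Sum.inr))).det *
              (R.submatrix (Sum.elim Sum.inl (Sum.inr ∘ Sum.inr))
                (Sum.elim Sum.inl (Sum.inr ∘ Sum.inr))).det) /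
            ((R.submatrix (Sum.inr ∘ Sum.inr) (Sum.inr ∘ Sum.inr)).det * R.det)) := by
  classical
  set eX : Fin c → Fin a ⊕ Fin b ⊕ Fin c := Sum.inr ∘ Sum.inr with heX
  set eYX : Fin a ⊕ Fin c → Fin a ⊕ Fin b ⊕ Fin c :=
    Sum.elim Sum.inl (Sum.inr ∘ Sum.inr) with heYX
  set eZX : Fin b ⊕ Fin c → Fin a ⊕ Fin b ⊕ Fin c :=
    Sum.elim (Sum.inr ∘ Sum.inl) (Sum.inr ∘ Sum.inr) with heZX
  have hinjX : Function.Injective eX := by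
    intro x y h
    simp only [heX, Function.comp_apply] at h
    exact Sum.inr_injective (Sum.inr_injective h)
  have hinjYX : Function.Injective eYX := by
    intro x y h
    simp only [heYX] at h
    cases x <;> cases y <;> simp_all
  have hinjZX : Function.Injective eZX := by
    intro x y h
    simp only [heZX] at h
    cases x <;> cases y <;> simp_all
  set SX := R.submatrix eX eX with hSX
  set SYX := R.submatrix eYX eYX with hSYX
  set SZX := R.submatrix eZX eZX with hSZX
  have hX : SX.PosDef := posDef_submatrix hR eX hinjX
  have hYX : SYX.PosDef := posDef_submatrix hR eYX hinjYX
  have hZX : SZX.PosDef := posDef_submatrix hR eZX hinjZX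
  set K : ℝ :=
      (-(1/2) * Real.log ((2 * Real.pi) ^ Fintype.card (Fin a ⊕ Fin b ⊕ Fin c) * R.det))
    + (-(1/2) * Real.log ((2 * Real.pi) ^ Fintype.card (Fin c) * SX.det))
    - (-(1/2) * Real.log ((2 * Real.pi) ^ Fintype.card (Fin a ⊕ Fin c) * SYX.det))
    - (-(1/2) * Real.log ((2 * Real.pi) ^ Fintype.card (Fin b ⊕ Fin c) * SZX.det)) with hK
  set G : ((Fin a ⊕ Fin b ⊕ Fin c) → ℝ) → ℝ := fun v => Real.log
        ((gaussDensity R v * gaussDensity SX (fun i : Fin c => v (Sum.inr (Sum.inr i)))) /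
          (gaussDensity SYX (fun i : Fin a ⊕ Fin c => v (eYX i)) *
            gaussDensity SZX (fun i : Fin b ⊕ Fin c => v (eZX i)))) with hG
  have hGmeas : Measurable G := by
    rw [hG]
    apply Real.measurable_log.comp
    apply Measurable.div
    · exact (measurable_gaussDensity R).mul
        ((measurable_gaussDensity SX).comp
          (measurable_pi_lambda _ fun i => measurable_pi_apply _))
    · exact ((measurable_gaussDensity SYX).comp
          (measurable_pi_lambda _ fun i => measurable_pi_apply _)).mul
        ((measurable_gaussDensity SZX).comp
          (measurable_pi_lambda _ fun i => measurable_pi_apply _))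
  have hGdecomp : ∀ v : (Fin a ⊕ Fin b ⊕ Fin c) → ℝ, G v
      = K + ((-(1/2)) * (v ⬝ᵥ R⁻¹.mulVec v)
        + ((-(1/2)) * ((fun p => v (eX p)) ⬝ᵥ SX⁻¹.mulVec (fun p => v (eX p)))
        + ((1/2) * ((fun p => v (eYX p)) ⬝ᵥ SYX⁻¹.mulVec (fun p => v (eYX p)))
        + (1/2) * ((fun p => v (eZX p)) ⬝ᵥ SZX⁻¹.mulVec (fun p => v (eZX p)))))) := by
    intro v
    have p1 := gaussDensity_pos hR v
    have p2 := gaussDensity_pos hX (fun i : Fin c => v (Sum.inr (Sum.inr i)))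
    have p3 := gaussDensity_pos hYX (fun i : Fin a ⊕ Fin c => v (eYX i))
    have p4 := gaussDensity_pos hZX (fun i : Fin b ⊕ Fin c => v (eZX i))
    rw [hG]
    beta_reduce
    rw [Real.log_div (ne_of_gt (mul_pos p1 p2)) (ne_of_gt (mul_pos p3 p4)),
      Real.log_mul (ne_of_gt p1) (ne_of_gt p2), Real.log_mul (ne_of_gt p3) (ne_of_gt p4),
      log_gaussDensity hR v, log_gaussDensity hX _, log_gaussDensity hYX _,
      log_gaussDensity hZX _, hK]
    have hfix : (fun p : Fin c => v (eX p)) = fun i : Fin c => v (Sum.inr (Sum.inr i)) := by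
      funext p; rw [heX]; rfl
    rw [hfix]
    ring
  rw [show (∫ v, Real.log
        ((gaussDensity R v * gaussDensity SX (fun i : Fin c => v (Sum.inr (Sum.inr i)))) /
          (gaussDensity SYX (fun i : Fin a ⊕ Fin c => v (eYX i)) *
            gaussDensity SZX (fun i : Fin b ⊕ Fin c => v (eZX i)))) ∂(gaussMeasure R))
      = ∫ v, G v ∂(gaussMeasure R) from rfl]
  rw [integral_gaussMeasure_eq R hR hGmeas]
  have hQR := block_final R hR id R (Matrix.submatrix_id_id R).symm hR
  have hQX := block_final R hR eX SX hSX hX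
  have hQYX := block_final R hR eYX SYX hSYX hYX
  have hQZX := block_final R hR eZX SZX hSZX hZX
  set f0 : ((Fin a ⊕ Fin b ⊕ Fin c) → ℝ) → ℝ := fun w =>
    K * gaussDensity (1 : Matrix (Fin a ⊕ Fin b ⊕ Fin c) (Fin a ⊕ Fin b ⊕ Fin c) ℝ) w with hf0
  set f1 : ((Fin a ⊕ Fin b ⊕ Fin c) → ℝ) → ℝ := fun w =>
    (-(1/2) : ℝ) * ((((hR.posSemidef.sqrt).mulVec w) ⬝ᵥ
      R⁻¹.mulVec ((hR.posSemidef.sqrt).mulVec w)) *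
        gaussDensity (1 : Matrix (Fin a ⊕ Fin b ⊕ Fin c) (Fin a ⊕ Fin b ⊕ Fin c) ℝ) w) with hf1
  set f2 : ((Fin a ⊕ Fin b ⊕ Fin c) → ℝ) → ℝ := fun w =>
    (-(1/2) : ℝ) * (((fun p => ((hR.posSemidef.sqrt).mulVec w) (eX p)) ⬝ᵥ
      SX⁻¹.mulVec (fun p => ((hR.posSemidef.sqrt).mulVec w) (eX p))) *
        gaussDensity (1 : Matrix (Fin a ⊕ Fin b ⊕ Fin c) (Fin a ⊕ Fin b ⊕ Fin c) ℝ) w) with hf2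
  set f3 : ((Fin a ⊕ Fin b ⊕ Fin c) → ℝ) → ℝ := fun w =>
    ((1:ℝ)/2) * (((fun p => ((hR.posSemidef.sqrt).mulVec w) (eYX p)) ⬝ᵥ
      SYX⁻¹.mulVec (fun p => ((hR.posSemidef.sqrt).mulVec w) (eYX p))) *
        gaussDensity (1 : Matrix (Fin a ⊕ Fin b ⊕ Fin c) (Fin a ⊕ Fin b ⊕ Fin c) ℝ) w) with hf3
  set f4 : ((Fin a ⊕ Fin b ⊕ Fin c) → ℝ) → ℝ := fun w =>
    ((1:ℝ)/2) * (((fun p => ((hR.posSemidef.sqrt).mulVec w) (eZX p)) ⬝ᵥ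
      SZX⁻¹.mulVec (fun p => ((hR.posSemidef.sqrt).mulVec w) (eZX p))) *
        gaussDensity (1 : Matrix (Fin a ⊕ Fin b ⊕ Fin c) (Fin a ⊕ Fin b ⊕ Fin c) ℝ) w) with hf4
  have hsplit : (fun w : (Fin a ⊕ Fin b ⊕ Fin c) → ℝ =>
        G ((hR.posSemidef.sqrt).mulVec w) *
          gaussDensity (1 : Matrix (Fin a ⊕ Fin b ⊕ Fin c) (Fin a ⊕ Fin b ⊕ Fin c) ℝ) w)
      = fun w => f0 w + (f1 w + (f2 w + (f3 w + f4 w))) := by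
    funext w
    simp only [hf0, hf1, hf2, hf3, hf4]
    rw [hGdecomp ((hR.posSemidef.sqrt).mulVec w)]
    ring
  have int0 : Integrable f0 := gaussDensity_one_integrable.const_mul K
  have int1 : Integrable f1 := hQR.1.const_mul _
  have int2 : Integrable f2 := hQX.1.const_mul _
  have int3 : Integrable f3 := hQYX.1.const_mul _
  have int4 : Integrable f4 := hQZX.1.const_mul _
  have i34 : Integrable (fun w => f3 w + f4 w) := int3.add int4
  have i234 : Integrable (fun w => f2 w + (f3 w + f4 w)) := int2.add i34
  have i1234 : Integrable (fun w => f1 w + (f2 w + (f3 w + f4 w))) := int1.add i234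
  rw [hsplit, integral_add int0 i1234, integral_add int1 i234, integral_add int2 i34,
    integral_add int3 int4]
  have e0 : ∫ w, f0 w = K := by
    simp only [hf0]
    rw [integral_const_mul, integral_gaussDensity_one, mul_one]
  have hQR2 : ∫ w : (Fin a ⊕ Fin b ⊕ Fin c) → ℝ,
      (((hR.posSemidef.sqrt).mulVec w) ⬝ᵥ R⁻¹.mulVec ((hR.posSemidef.sqrt).mulVec w)) *
        gaussDensity (1 : Matrix (Fin a ⊕ Fin b ⊕ Fin c) (Fin a ⊕ Fin b ⊕ Fin c) ℝ) w
      = (Fintype.card (Fin a ⊕ Fin b ⊕ Fin c) : ℝ) := hQR.2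
  have e1 : ∫ w, f1 w = (-(1/2) : ℝ) * (Fintype.card (Fin a ⊕ Fin b ⊕ Fin c) : ℝ) := by
    simp only [hf1]
    rw [integral_const_mul, hQR2]
  have e2 : ∫ w, f2 w = (-(1/2) : ℝ) * (Fintype.card (Fin c) : ℝ) := by
    simp only [hf2]
    rw [integral_const_mul, hQX.2]
  have e3 : ∫ w, f3 w = ((1:ℝ)/2) * (Fintype.card (Fin a ⊕ Fin c) : ℝ) := by
    simp only [hf3]
    rw [integral_const_mul, hQYX.2]
  have e4 : ∫ w, f4 w = ((1:ℝ)/2) * (Fintype.card (Fin b ⊕ Fin c) : ℝ) := by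
    simp only [hf4]
    rw [integral_const_mul, hQZX.2]
  rw [e0, e1, e2, e3, e4]
  -- now a pure scalar identity
  have hcι : (Fintype.card (Fin a ⊕ Fin b ⊕ Fin c) : ℝ) = (a : ℝ) + b + c := by
    simp [Fintype.card_sum, Fintype.card_fin]; ring
  have hcX : (Fintype.card (Fin c) : ℝ) = (c : ℝ) := by simp
  have hcYX : (Fintype.card (Fin a ⊕ Fin c) : ℝ) = (a : ℝ) + c := by
    simp [Fintype.card_sum, Fintype.card_fin]
  have hcZX : (Fintype.card (Fin b ⊕ Fin c) : ℝ) = (b : ℝ) + c := by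
    simp [Fintype.card_sum, Fintype.card_fin]
  have h2pi : (0:ℝ) < 2 * Real.pi := by positivity
  have hlog : ∀ (k : ℕ) {d : ℝ}, 0 < d →
      Real.log ((2 * Real.pi) ^ k * d) = k * Real.log (2 * Real.pi) + Real.log d := by
    intro k d hd
    rw [Real.log_mul (by positivity) (ne_of_gt hd), Real.log_pow]
  rw [hK, hlog _ hR.det_pos, hlog _ hX.det_pos, hlog _ hYX.det_pos, hlog _ hZX.det_pos]
  rw [Real.log_div (ne_of_gt (mul_pos hZX.det_pos hYX.det_pos))
      (ne_of_gt (mul_pos hX.det_pos hR.det_pos)),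
    Real.log_mul (ne_of_gt hZX.det_pos) (ne_of_gt hYX.det_pos),
    Real.log_mul (ne_of_gt hX.det_pos) (ne_of_gt hR.det_pos)]
  rw [hcι, hcX, hcYX, hcZX]
  ring
end

section
/- For the Gaussian AR(p) model with feature length l ≥ p, the L-conditional entropy given both a fresh and a stale feature equals the L-conditional entropy given the fresh feature alone: for all integers t ≥ p and μ, ν ≥ 0 with t − μ − ν − l + 1 ≥ 0, H_L(Y_t | (X^l_{t−μ}, X^l_{t−μ−ν})) = H_L(Y_t | X^l_{t−μ}), where H_L(Y | W) is the infimum of E[L(Y, φ(W))] over Borel-measurable estimators φ. -/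
open MeasureTheory ProbabilityTheory Filter Topology

lemma my_integrable_of_bdd {δ : Type*} [MeasurableSpace δ] (μ : Measure δ) [IsFiniteMeasure μ]
    {f : δ → ℝ} (hf : AEStronglyMeasurable f μ) {C : ℝ} (h : ∀ x, |f x| ≤ C) :
    Integrable f μ :=
  ⟨hf, HasFiniteIntegral.of_bounded (ae_of_all _ fun x => by
    simpa [Real.norm_eq_abs] using h x)⟩

/-- Every `X s` with `s ≤ m` is a measurable function of the initial vector and the
innovations `W_p, …, W_m`. -/
lemma ar_past {Ω : Type*} (p : ℕ) (a : Fin p → ℝ) (X W : ℕ → Ω → ℝ) (m : ℕ)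
    (hXrec : ∀ t, p ≤ t → ∀ ω, X t ω
      = (∑ k : Fin p, a k * X (t - ((k : ℕ) + 1)) ω) + W t ω) :
    ∀ s, s ≤ m → ∃ G : (Fin p → ℝ) × (Fin (m + 1 - p) → ℝ) → ℝ, Measurable G ∧
      ∀ ω, X s ω = G (fun k : Fin p => X k ω, fun i : Fin (m + 1 - p) => W (p + i) ω) := by
  intro s
  induction s using Nat.strong_induction_on with
  | _ s IH =>
    intro hsm
    by_cases hsp : s < p
    · exact ⟨fun v => v.1 ⟨s, hsp⟩, measurable_fst.eval,
        fun ω => rfl⟩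
    · push_neg at hsp
      choose Gs hGsm hGs using fun k : Fin p =>
        IH (s - ((k : ℕ) + 1)) (by omega) (by omega)
      refine ⟨fun v => (∑ k : Fin p, a k * Gs k v) + v.2 ⟨s - p, by omega⟩, ?_, ?_⟩
      · exact (Finset.measurable_sum _ fun k _ =>
          (measurable_const.mul (hGsm k))).add (measurable_snd.eval)
      · intro ω
        rw [hXrec s hsp ω]
        congr 1
        · exact Finset.sum_congr rfl fun k _ => by rw [hGs k ω]
        · show W s ω = W (p + (s - p)) ω
          congr 1
          omega

/-- Every `X (m+j)` with `j ≤ μ` is a measurable function of the feature vector at time `m`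
(provided it has length `l ≥ p` and `p ≤ m + 1`) and the innovations `W_{m+1}, …, W_{m+μ}`. -/
lemma ar_fwd {Ω : Type*} (p l : ℕ) (hp : 1 ≤ p) (hpl : p ≤ l) (a : Fin p → ℝ)
    (X W : ℕ → Ω → ℝ) (m μ : ℕ) (hpm : p ≤ m + 1)
    (hXrec : ∀ t, p ≤ t → ∀ ω, X t ω
      = (∑ k : Fin p, a k * X (t - ((k : ℕ) + 1)) ω) + W t ω)
    (Xv : ℕ → Ω → Fin l → ℝ) (hXv : ∀ s ω i, Xv s ω i = X (s - (i : ℕ)) ω) :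
    ∀ j, j ≤ μ → ∃ G : (Fin l → ℝ) × (Fin μ → ℝ) → ℝ, Measurable G ∧
      ∀ ω, X (m + j) ω = G (Xv m ω, fun i : Fin μ => W (m + 1 + (i : ℕ)) ω) := by
  intro j
  induction j using Nat.strong_induction_on with
  | _ j IH =>
    intro hjμ
    rcases Nat.eq_zero_or_pos j with hj0 | hjpos
    · subst hj0
      refine ⟨fun v => v.1 ⟨0, by omega⟩, measurable_fst.eval,
        fun ω => ?_⟩
      have := hXv m ω ⟨0, by omega⟩
      simpa using this.symm
    · have hcomp : ∀ k : Fin p, ∃ H : (Fin l → ℝ) × (Fin μ → ℝ) → ℝ, Measurable H ∧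
          ∀ ω, X ((m + j) - ((k : ℕ) + 1)) ω
            = H (Xv m ω, fun i : Fin μ => W (m + 1 + (i : ℕ)) ω) := by
        intro k
        by_cases hkj : (k : ℕ) + 1 ≤ j
        · obtain ⟨H, hHm, hH⟩ := IH (j - ((k : ℕ) + 1)) (by omega) (by omega)
          exact ⟨H, hHm, fun ω => by
            rw [show (m + j) - ((k : ℕ) + 1) = m + (j - ((k : ℕ) + 1)) by omega]
            exact hH ω⟩
        · refine ⟨fun v => v.1 ⟨(k : ℕ) + 1 - j, by have := k.isLt; omega⟩,
            measurable_fst.eval, fun ω => ?_⟩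
          rw [show (m + j) - ((k : ℕ) + 1) = m - ((k : ℕ) + 1 - j) by omega]
          exact (hXv m ω ⟨(k : ℕ) + 1 - j, by have := k.isLt; omega⟩).symm
      choose H hHm hH using hcomp
      refine ⟨fun v => (∑ k : Fin p, a k * H k v) + v.2 ⟨j - 1, by omega⟩, ?_, ?_⟩
      · exact (Finset.measurable_sum _ fun k _ =>
          (measurable_const.mul (hHm k))).add (measurable_snd.eval)
      · intro ω
        rw [hXrec (m + j) (by omega) ω]
        congr 1
        · exact Finset.sum_congr rfl fun k _ => by rw [hH k ω]
        · show W (m + j) ω = W (m + 1 + (j - 1)) ω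
          congr 1
          omega



/-- Index type for the mutually independent ingredients of the AR(p) model: one index for
the initial vector `(X_0, …, X_{p−1})`, one copy of `ℕ` for the noises `(W_t)_{t ≥ p}`
(index `s` corresponding to `W_{p+s}`), and one copy of `ℕ` for the noises `(N_t)_{t ≥ 0}`. -/
abbrev ARIndex : Type := Unit ⊕ ℕ ⊕ ℕ

/-- The state space of each ingredient of the AR(p) model. -/
def ARType (p : ℕ) : ARIndex → Type
  | Sum.inl _ => Fin p → ℝ
  | Sum.inr _ => ℝ

/-- Measurable-space structure on each state space. -/
def ARMeasSpace (p : ℕ) : ∀ i, MeasurableSpace (ARType p i) := fun i =>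
  match i with
  | Sum.inl _ => inferInstanceAs (MeasurableSpace (Fin p → ℝ))
  | Sum.inr _ => inferInstanceAs (MeasurableSpace ℝ)

/-- The family consisting of the initial vector `(X_0, …, X_{p−1})`, the innovations
`(W_t)_{t ≥ p}` and the observation noises `(N_t)_{t ≥ 0}`. -/
def ARFamily {Ω : Type*} (p : ℕ) (X W N : ℕ → Ω → ℝ) : ∀ i : ARIndex, Ω → ARType p i :=
  fun i => match i with
  | Sum.inl _ => fun ω (k : Fin p) => X k ω
  | Sum.inr (Sum.inl s) => W (p + s)
  | Sum.inr (Sum.inr s) => N s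

lemma HL_indep_eq {Ω α β γ 𝒜 : Type*} [MeasurableSpace Ω] [MeasurableSpace α]
    [MeasurableSpace β] [MeasurableSpace γ]
    [MetricSpace 𝒜] [CompactSpace 𝒜] [Nonempty 𝒜] [MeasurableSpace 𝒜] [BorelSpace 𝒜]
    (P : Measure Ω) [IsProbabilityMeasure P]
    (F : Ω → α) (S : Ω → β) (Z : Ω → γ)
    (hF : Measurable F) (hS : Measurable S) (hZ : Measurable Z)
    (hindep : IndepFun (fun ω => (F ω, S ω)) Z P)
    (g : α × γ → ℝ) (hg : Measurable g)
    (Y : Ω → ℝ) (hY : ∀ ω, Y ω = g (F ω, Z ω))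
    (L : ℝ × 𝒜 → ℝ) (hLmeas : Measurable L)
    (C : ℝ) (hLbdd : ∀ y b, |L (y, b)| ≤ C)
    (hLcont : ∀ y, Continuous fun b => L (y, b)) :
    HL P L Y (fun ω => (F ω, S ω)) = HL P L Y F := by
  classical
  have hYm : Measurable Y := by
    have : Y = fun ω => g (F ω, Z ω) := funext hY
    rw [this]; exact hg.comp (hF.prodMk hZ)
  have hFS : Measurable fun ω => (F ω, S ω) := hF.prodMk hS
  set μZ := P.map Z with hμZ
  set μFS := P.map (fun ω => (F ω, S ω)) with hμFS
  set μF := P.map F with hμF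
  haveI : IsProbabilityMeasure μZ := Measure.isProbabilityMeasure_map hZ.aemeasurable
  haveI : IsProbabilityMeasure μFS := Measure.isProbabilityMeasure_map hFS.aemeasurable
  haveI : IsProbabilityMeasure μF := Measure.isProbabilityMeasure_map hF.aemeasurable
  -- the conditional risk function
  set h : α × 𝒜 → ℝ := fun q => ∫ z, L (g (q.1, z), q.2) ∂μZ with hh_def
  have hKmeas : Measurable fun q : (α × 𝒜) × γ => L (g (q.1.1, q.2), q.1.2) :=
    hLmeas.comp ((hg.comp ((measurable_fst.comp measurable_fst).prodMk
      measurable_snd)).prodMk (measurable_snd.comp measurable_fst))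
  have hhm : Measurable h :=
    (hKmeas.stronglyMeasurable.integral_prod_right').measurable
  have hhbdd : ∀ q, |h q| ≤ C := by
    intro q
    have := norm_integral_le_of_norm_le_const (μ := μZ)
      (f := fun z => L (g (q.1, z), q.2)) (C := C)
      (ae_of_all _ fun z => by simpa [Real.norm_eq_abs] using hLbdd (g (q.1, z)) q.2)
    simpa [Real.norm_eq_abs, measure_univ] using this
  have hCnonneg : 0 ≤ C := le_trans (abs_nonneg _) (hLbdd 0 (Classical.arbitrary 𝒜))
  have hhcont : ∀ f : α, Continuous fun b => h (f, b) := by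
    intro f
    rw [continuous_iff_continuousAt]
    intro b
    refine tendsto_integral_filter_of_dominated_convergence (fun _ => C) ?_ ?_
      (integrable_const C) ?_
    · exact Eventually.of_forall fun b' =>
        (hLmeas.comp ((hg.comp (measurable_const.prodMk measurable_id)).prodMk
          measurable_const)).aestronglyMeasurable
    · exact Eventually.of_forall fun b' => ae_of_all _ fun z => by
        simpa [Real.norm_eq_abs] using hLbdd (g (f, z)) b'
    · exact ae_of_all _ fun z => ((hLcont (g (f, z))).tendsto b)
  -- dense sequence
  obtain ⟨u, hu⟩ := TopologicalSpace.exists_dense_seq 𝒜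
  set I : α → ℝ := fun f => ⨅ n, h (f, u n) with hI_def
  have hIbddbelow : ∀ f : α, BddBelow (Set.range fun n => h (f, u n)) := by
    intro f
    exact ⟨-C, by rintro _ ⟨n, rfl⟩; linarith [abs_le.mp (hhbdd (f, u n))|>.1]⟩
  have hIle : ∀ (f : α) (b : 𝒜), I f ≤ h (f, b) := by
    intro f b
    obtain ⟨x, hxmem, hxlim⟩ := mem_closure_iff_seq_limit.mp (hu b)
    have hconv : Tendsto (fun k => h (f, x k)) atTop (𝓝 (h (f, b))) :=
      ((hhcont f).tendsto b).comp hxlim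
    refine ge_of_tendsto hconv (Eventually.of_forall fun k => ?_)
    obtain ⟨n, hn⟩ := hxmem k
    rw [← hn]
    exact ciInf_le (hIbddbelow f) n
  have hImeas : Measurable I :=
    Measurable.iInf fun n => hhm.comp (measurable_id.prodMk measurable_const)
  have hIbdd : ∀ f, |I f| ≤ C := by
    intro f
    rw [abs_le]
    constructor
    · exact le_ciInf fun n => (abs_le.mp (hhbdd (f, u n))).1
    · exact le_trans (ciInf_le (hIbddbelow f) 0) (abs_le.mp (hhbdd (f, u 0))).2
  -- key computation for the pair
  haveI : Nonempty {φ : α × β → 𝒜 // Measurable φ} :=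
    ⟨⟨fun _ => Classical.arbitrary 𝒜, measurable_const⟩⟩
  haveI : Nonempty {ψ : α → 𝒜 // Measurable ψ} :=
    ⟨⟨fun _ => Classical.arbitrary 𝒜, measurable_const⟩⟩
  have hmapPair : P.map (fun ω => ((F ω, S ω), Z ω)) = μFS.prod μZ :=
    (indepFun_iff_map_prod_eq_prod_map_map hFS.aemeasurable hZ.aemeasurable).mp hindep
  have hindepF : IndepFun F Z P := by
    have := hindep.comp (measurable_fst (α := α) (β := β)) (measurable_id (α := γ))
    exact this
  have hmapF : P.map (fun ω => (F ω, Z ω)) = μF.prod μZ :=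
    (indepFun_iff_map_prod_eq_prod_map_map hF.aemeasurable hZ.aemeasurable).mp hindepF
  have keyPair : ∀ φ : {φ : α × β → 𝒜 // Measurable φ},
      ∫ ω, L (Y ω, φ.1 (F ω, S ω)) ∂P = ∫ q, h (q.1, φ.1 q) ∂μFS := by
    rintro ⟨φ, hφ⟩
    have hKm : Measurable fun q : (α × β) × γ => L (g (q.1.1, q.2), φ q.1) :=
      hLmeas.comp ((hg.comp ((measurable_fst.comp measurable_fst).prodMk
        measurable_snd)).prodMk (hφ.comp measurable_fst))
    have h1 : ∫ ω, L (Y ω, φ (F ω, S ω)) ∂P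
        = ∫ ω, (fun q : (α × β) × γ => L (g (q.1.1, q.2), φ q.1)) ((F ω, S ω), Z ω) ∂P := by
      congr 1; funext ω; simp [hY ω]
    rw [h1, ← integral_map (hFS.prodMk hZ).aemeasurable hKm.aestronglyMeasurable, hmapPair]
    rw [integral_prod _ (my_integrable_of_bdd _ hKm.aestronglyMeasurable
      (fun q => hLbdd (g (q.1.1, q.2)) (φ q.1)))]
  have keyF : ∀ ψ : {ψ : α → 𝒜 // Measurable ψ},
      ∫ ω, L (Y ω, ψ.1 (F ω)) ∂P = ∫ f, h (f, ψ.1 f) ∂μF := by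
    rintro ⟨ψ, hψ⟩
    have hKm : Measurable fun q : α × γ => L (g (q.1, q.2), ψ q.1) :=
      hLmeas.comp ((hg.comp (measurable_fst.prodMk measurable_snd)).prodMk
        (hψ.comp measurable_fst))
    have h1 : ∫ ω, L (Y ω, ψ (F ω)) ∂P
        = ∫ ω, (fun q : α × γ => L (g (q.1, q.2), ψ q.1)) (F ω, Z ω) ∂P := by
      congr 1; funext ω; simp [hY ω]
    rw [h1, ← integral_map (hF.prodMk hZ).aemeasurable hKm.aestronglyMeasurable, hmapF]
    rw [integral_prod _ (my_integrable_of_bdd _ hKm.aestronglyMeasurable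
      (fun q => hLbdd (g (q.1, q.2)) (ψ q.1)))]
  -- integral of I over the two measures coincide
  have hIFS : ∫ q, I q.1 ∂μFS = ∫ f, I f ∂μF := by
    have hfsmap : μF = μFS.map Prod.fst := by
      rw [hμF, hμFS, Measure.map_map measurable_fst hFS]
      rfl
    rw [hfsmap, integral_map measurable_fst.aemeasurable hImeas.aestronglyMeasurable]
  -- bddBelow facts for the infima
  have hbddF : BddBelow (Set.range fun ψ : {ψ : α → 𝒜 // Measurable ψ} =>
      ∫ ω, L (Y ω, ψ.1 (F ω)) ∂P) := by
    refine ⟨-C, ?_⟩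
    rintro _ ⟨ψ, rfl⟩
    show -C ≤ ∫ ω, L (Y ω, ψ.1 (F ω)) ∂P
    rw [keyF ψ]
    calc (-C : ℝ) = ∫ _, (-C : ℝ) ∂μF := by simp
    _ ≤ ∫ f, h (f, ψ.1 f) ∂μF := by
        refine integral_mono (integrable_const _) (my_integrable_of_bdd _
          ((hhm.comp (measurable_id.prodMk ψ.2)).aestronglyMeasurable)
          (fun f => hhbdd (f, ψ.1 f))) fun f => (abs_le.mp (hhbdd (f, ψ.1 f))).1
  -- HL F ≤ ∫ I
  have hHLF_le : HL P L Y F ≤ ∫ f, I f ∂μF := by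
    refine le_of_forall_pos_le_add fun ε hε => ?_
    have hex : ∀ f : α, ∃ n, h (f, u n) < I f + ε := fun f =>
      exists_lt_of_ciInf_lt (lt_add_of_pos_right _ hε)
    have hnm : Measurable fun f => Nat.find (hex f) := by
      refine measurable_find hex fun k => ?_
      exact measurableSet_lt (hhm.comp (measurable_id.prodMk measurable_const))
        (hImeas.add_const ε)
    set ψ : α → 𝒜 := fun f => u (Nat.find (hex f)) with hψdef
    have hψ : Measurable ψ := measurable_from_top.comp hnm
    have step : HL P L Y F ≤ ∫ f, h (f, ψ f) ∂μF := by
      rw [← keyF ⟨ψ, hψ⟩]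
      exact ciInf_le hbddF ⟨ψ, hψ⟩
    refine step.trans ?_
    have : ∫ f, h (f, ψ f) ∂μF ≤ ∫ f, (I f + ε) ∂μF := by
      refine integral_mono (my_integrable_of_bdd _
        ((hhm.comp (measurable_id.prodMk hψ)).aestronglyMeasurable)
        (fun f => hhbdd (f, ψ f)))
        (((my_integrable_of_bdd _ hImeas.aestronglyMeasurable hIbdd)).add
          (integrable_const ε)) fun f => (Nat.find_spec (hex f)).le
    refine this.trans ?_
    rw [integral_add (my_integrable_of_bdd _ hImeas.aestronglyMeasurable hIbdd)
      (integrable_const ε)]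
    simp
  -- HL (F,S) ≥ ∫ I
  have hHLFS_ge : ∫ f, I f ∂μF ≤ HL P L Y (fun ω => (F ω, S ω)) := by
    rw [← hIFS]
    refine le_ciInf fun φ => ?_
    rw [keyPair φ]
    refine integral_mono (my_integrable_of_bdd _
      ((hImeas.comp measurable_fst).aestronglyMeasurable) (fun q => hIbdd q.1))
      (my_integrable_of_bdd _
        ((hhm.comp (measurable_fst.prodMk φ.2)).aestronglyMeasurable)
        (fun q => hhbdd (q.1, φ.1 q))) fun q => hIle q.1 (φ.1 q)
  -- easy direction
  have heasy : HL P L Y (fun ω => (F ω, S ω)) ≤ HL P L Y F := by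
    refine le_ciInf fun ψ => ?_
    have hbddFS : BddBelow (Set.range fun φ : {φ : α × β → 𝒜 // Measurable φ} =>
        ∫ ω, L (Y ω, φ.1 (F ω, S ω)) ∂P) := by
      refine ⟨-C, ?_⟩
      rintro _ ⟨φ, rfl⟩
      show -C ≤ ∫ ω, L (Y ω, φ.1 (F ω, S ω)) ∂P
      rw [keyPair φ]
      calc (-C : ℝ) = ∫ _, (-C : ℝ) ∂μFS := by simp
      _ ≤ ∫ q, h (q.1, φ.1 q) ∂μFS := by
          refine integral_mono (integrable_const _) (my_integrable_of_bdd _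
            ((hhm.comp (measurable_fst.prodMk φ.2)).aestronglyMeasurable)
            (fun q => hhbdd (q.1, φ.1 q))) fun q => (abs_le.mp (hhbdd (q.1, φ.1 q))).1
    exact ciInf_le_of_le hbddFS ⟨fun q => ψ.1 q.1, ψ.2.comp measurable_fst⟩ le_rfl
  linarith


/-- For the Gaussian AR(p) model with feature length `l ≥ p`, the
`L`-conditional entropy given both a fresh and a stale feature equals the `L`-conditional
entropy given the fresh feature alone: for all `t ≥ p` and `μ, ν ≥ 0` with
`μ + ν + l ≤ t + 1`, `H_L(Y_t | (X^l_{t−μ}, X^l_{t−μ−ν})) = H_L(Y_t | X^l_{t−μ})`. -/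
theorem ar_HL_stale_redundant_of_long_feature
    {Ω 𝒜 : Type*} [MeasurableSpace Ω]
    [MetricSpace 𝒜] [CompactSpace 𝒜] [Nonempty 𝒜] [MeasurableSpace 𝒜] [BorelSpace 𝒜]
    (P : Measure Ω) [IsProbabilityMeasure P]
    (p l : ℕ) (hp : 1 ≤ p) (hpl : p ≤ l)
    (a : Fin p → ℝ) (σW σN : NNReal) (hσW : 0 < σW) (hσN : 0 < σN)
    (X W N Y : ℕ → Ω → ℝ)
    (hXm : ∀ t, Measurable (X t)) (hWm : ∀ t, Measurable (W t))
    (hNm : ∀ t, Measurable (N t))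
    (hW : ∀ t, p ≤ t → P.map (W t) = gaussianReal 0 σW)
    (hN : ∀ t, P.map (N t) = gaussianReal 0 σN)
    (hIndep : iIndepFun (m := ARMeasSpace p) (ARFamily p X W N) P)
    (hXrec : ∀ t, p ≤ t → ∀ ω, X t ω
      = (∑ k : Fin p, a k * X (t - ((k : ℕ) + 1)) ω) + W t ω)
    (hYdef : ∀ t ω, Y t ω = X t ω + N t ω)
    (Xv : ℕ → Ω → Fin l → ℝ) (hXv : ∀ s ω i, Xv s ω i = X (s - (i : ℕ)) ω)
    (hXvm : ∀ s, Measurable (Xv s))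
    (L : ℝ × 𝒜 → ℝ) (hLmeas : Measurable L)
    (hLbdd : ∃ C : ℝ, ∀ y b, |L (y, b)| ≤ C)
    (hLcont : ∀ y : ℝ, Continuous fun b => L (y, b)) :
    ∀ t μ ν : ℕ, p ≤ t → μ + ν + l ≤ t + 1 →
      HL P L (Y t) (fun ω => (Xv (t - μ) ω, Xv (t - μ - ν) ω))
        = HL P L (Y t) (Xv (t - μ)) := by
  obtain ⟨C, hC⟩ := hLbdd
  intro t μ ν ht hle
  classical
  letI : ∀ i : ARIndex, MeasurableSpace (ARType p i) := ARMeasSpace p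
  set m := t - μ with hm
  have hμt : μ ≤ t := by omega
  have htm : t = m + μ := by omega
  have hpm : p ≤ m + 1 := by omega
  -- the independent "future noise"
  set Z : Ω → (Fin μ → ℝ) × ℝ :=
    fun ω => (fun i => W (m + 1 + (i : ℕ)) ω, N t ω) with hZ_def
  have hZm : Measurable Z :=
    (measurable_pi_lambda _ fun i => hWm _).prodMk (hNm t)
  -- representation of Y t
  obtain ⟨G0, hG0m, hG0⟩ := ar_fwd p l hp hpl a X W m μ hpm hXrec Xv hXv μ le_rfl
  set g : (Fin l → ℝ) × ((Fin μ → ℝ) × ℝ) → ℝ :=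
    fun v => G0 (v.1, v.2.1) + v.2.2 with hg_def
  have hgm : Measurable g :=
    (hG0m.comp (measurable_fst.prodMk (measurable_fst.comp measurable_snd))).add
      (measurable_snd.comp measurable_snd)
  have hYrep : ∀ ω, Y t ω = g (Xv m ω, Z ω) := by
    intro ω
    have hXt : X t ω = G0 (Xv m ω, fun i : Fin μ => W (m + 1 + (i : ℕ)) ω) := by
      conv_lhs => rw [htm]
      exact hG0 ω
    rw [hYdef t ω, hXt]
  -- representation of the features as functions of the past
  have past := ar_past p a X W m hXrec
  choose GF hGFm hGF using fun i : Fin l => past (m - (i : ℕ)) (Nat.sub_le m _)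
  choose GS hGSm hGS using fun i : Fin l =>
    past (m - ν - (i : ℕ)) (le_trans (Nat.sub_le _ _) (Nat.sub_le m ν))
  set Ψ : (Fin p → ℝ) × (Fin (m + 1 - p) → ℝ) → (Fin l → ℝ) × (Fin l → ℝ) :=
    fun v => (fun i => GF i v, fun i => GS i v) with hΨ_def
  have hΨm : Measurable Ψ :=
    (measurable_pi_lambda _ fun i => hGFm i).prodMk
      (measurable_pi_lambda _ fun i => hGSm i)
  have hFSrep : ∀ ω, (Xv m ω, Xv (m - ν) ω)
      = Ψ (fun k : Fin p => X k ω, fun i : Fin (m + 1 - p) => W (p + i) ω) := by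
    intro ω
    have h1 : Xv m ω = fun i : Fin l =>
        GF i (fun k : Fin p => X k ω, fun i : Fin (m + 1 - p) => W (p + i) ω) :=
      funext fun i => by rw [hXv m ω i]; exact hGF i ω
    have h2 : Xv (m - ν) ω = fun i : Fin l =>
        GS i (fun k : Fin p => X k ω, fun i : Fin (m + 1 - p) => W (p + i) ω) :=
      funext fun i => by rw [hXv (m - ν) ω i]; exact hGS i ω
    rw [h1, h2]
  -- independence
  set Sfin : Finset ARIndex := insert (Sum.inl ())
    ((Finset.range (m + 1 - p)).image fun i => Sum.inr (Sum.inl i)) with hSfin_def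
  set Tfin : Finset ARIndex := insert (Sum.inr (Sum.inr t))
    ((Finset.range μ).image fun i => Sum.inr (Sum.inl (m + 1 - p + i))) with hTfin_def
  have hdisj : Disjoint Sfin Tfin := by
    rw [Finset.disjoint_left]
    rintro x hxS hxT
    simp only [hSfin_def, hTfin_def, Finset.mem_insert, Finset.mem_image,
      Finset.mem_range] at hxS hxT
    rcases hxS with rfl | ⟨i, hi, rfl⟩
    · rcases hxT with h | ⟨i', hi', h⟩ <;> simp at h
    · rcases hxT with h | ⟨i', hi', h⟩
      · simp at h
      · simp only [Sum.inr.injEq, Sum.inl.injEq] at h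
        omega
  have hmeasAll : ∀ i, @Measurable _ _ _ (ARMeasSpace p i) (ARFamily p X W N i) := by
    rintro (_ | s | s)
    · exact measurable_pi_lambda _ fun k => hXm k
    · exact hWm _
    · exact hNm _
  have hmemS0 : (Sum.inl () : ARIndex) ∈ Sfin := Finset.mem_insert_self _ _
  have hmemS : ∀ i : Fin (m + 1 - p), (Sum.inr (Sum.inl (i : ℕ)) : ARIndex) ∈ Sfin :=
    fun i => Finset.mem_insert_of_mem (Finset.mem_image.2 ⟨i, Finset.mem_range.2 i.isLt, rfl⟩)
  have hmemT0 : (Sum.inr (Sum.inr t) : ARIndex) ∈ Tfin := Finset.mem_insert_self _ _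
  have hmemT : ∀ i : Fin μ,
      (Sum.inr (Sum.inl (m + 1 - p + (i : ℕ))) : ARIndex) ∈ Tfin :=
    fun i => Finset.mem_insert_of_mem (Finset.mem_image.2 ⟨i, Finset.mem_range.2 i.isLt, rfl⟩)
  have hindepFS : IndepFun (fun ω => (Xv m ω, Xv (m - ν) ω)) Z P := by
    have hbig := hIndep.indepFun_finset Sfin Tfin hdisj hmeasAll
    have hcomp : IndepFun
        ((fun v : (∀ i : Sfin, ARType p i) =>
          Ψ (v ⟨Sum.inl (), hmemS0⟩, fun i : Fin (m + 1 - p) =>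
            v ⟨Sum.inr (Sum.inl (i : ℕ)), hmemS i⟩))
          ∘ (fun ω (i : Sfin) => ARFamily p X W N i ω))
        ((fun v : (∀ i : Tfin, ARType p i) =>
          ((fun i : Fin μ => v ⟨Sum.inr (Sum.inl (m + 1 - p + (i : ℕ))), hmemT i⟩,
            v ⟨Sum.inr (Sum.inr t), hmemT0⟩) : (Fin μ → ℝ) × ℝ))
          ∘ (fun ω (i : Tfin) => ARFamily p X W N i ω)) P := by
      refine hbig.comp ?_ ?_
      · exact hΨm.comp ((measurable_pi_apply _).prodMk
          (measurable_pi_lambda _ fun i => measurable_pi_apply _))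
      · exact (measurable_pi_lambda _ fun i => measurable_pi_apply _).prodMk
          (measurable_pi_apply _)
    have hSide : ((fun v : (∀ i : Sfin, ARType p i) =>
        Ψ (v ⟨Sum.inl (), hmemS0⟩, fun i : Fin (m + 1 - p) =>
          v ⟨Sum.inr (Sum.inl (i : ℕ)), hmemS i⟩))
          ∘ (fun ω (i : Sfin) => ARFamily p X W N i ω))
        = fun ω => (Xv m ω, Xv (m - ν) ω) := by
      funext ω
      exact (hFSrep ω).symm
    have hTSide : ((fun v : (∀ i : Tfin, ARType p i) =>
        ((fun i : Fin μ => v ⟨Sum.inr (Sum.inl (m + 1 - p + (i : ℕ))), hmemT i⟩,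
          v ⟨Sum.inr (Sum.inr t), hmemT0⟩) : (Fin μ → ℝ) × ℝ))
          ∘ (fun ω (i : Tfin) => ARFamily p X W N i ω)) = Z := by
      funext ω
      show ((fun i : Fin μ => W (p + (m + 1 - p + (i : ℕ))) ω, N t ω) : (Fin μ → ℝ) × ℝ)
        = Z ω
      have harg : (fun i : Fin μ => W (p + (m + 1 - p + (i : ℕ))) ω)
          = fun i : Fin μ => W (m + 1 + (i : ℕ)) ω :=
        funext fun i => by congr 1; omega
      rw [harg]
    rw [hSide, hTSide] at hcomp
    exact hcomp
  exact HL_indep_eq P (Xv m) (Xv (m - ν)) Z (hXvm m) (hXvm _) hZm hindepFS g hgm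
    (Y t) hYrep L hLmeas C hC hLcont
end

section
/- Monotonic information aging for AR(p) with long features: for the Gaussian AR(p) model with feature length l ≥ p, the estimation error is a non-decreasing function of the Age of Information. Precisely, for all integers t ≥ p and 0 ≤ δ₁ ≤ δ₂ with t − δ₂ − l + 1 ≥ 0, H_L(Y_t | X^l_{t−δ₁}) ≤ H_L(Y_t | X^l_{t−δ₂}), where H_L(Y | W) is the infimum of E[L(Y, φ(W))] over Borel-measurable estimators φ. -/
open MeasureTheory ProbabilityTheory

lemma myIntegrable_of_bdd {α : Type*} [MeasurableSpace α] {μ : Measure α} [IsFiniteMeasure μ]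
    {f : α → ℝ} {C : ℝ} (hf : AEStronglyMeasurable f μ) (h : ∀ x, |f x| ≤ C) :
    Integrable f μ :=
  (integrable_const C).mono' hf (Filter.Eventually.of_forall fun x => by
    simpa [Real.norm_eq_abs] using h x)

/-- ε-approximate measurable selector for a Carathéodory-type function. -/
lemma exists_eps_selector {𝒜 : Type*} [MetricSpace 𝒜] [CompactSpace 𝒜] [Nonempty 𝒜]
    [MeasurableSpace 𝒜] [BorelSpace 𝒜] {E : Type*} [MeasurableSpace E]
    (h : E → 𝒜 → ℝ) (hmeas : ∀ b, Measurable (fun m => h m b))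
    (hcont : ∀ m, Continuous (h m)) (C : ℝ) (hbdd : ∀ m b, |h m b| ≤ C)
    {ε : ℝ} (hε : 0 < ε) :
    ∃ ψ : E → 𝒜, Measurable ψ ∧ ∀ m b, h m (ψ m) ≤ h m b + ε := by
  classical
  set e : ℕ → 𝒜 := TopologicalSpace.denseSeq 𝒜 with he
  have hdense : DenseRange e := TopologicalSpace.denseRange_denseSeq 𝒜
  have hbb : ∀ m, BddBelow (Set.range fun n => h m (e n)) := by
    intro m
    refine ⟨-C, ?_⟩
    rintro x ⟨n, rfl⟩
    linarith [(abs_le.mp (hbdd m (e n))).1]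
  set g : E → ℝ := fun m => ⨅ n, h m (e n) with hg
  have hgmeas : Measurable g := Measurable.iInf fun n => hmeas (e n)
  have hgle : ∀ m b, g m ≤ h m b := by
    intro m b
    obtain ⟨x, hmem, hlim⟩ := mem_closure_iff_seq_limit.mp (hdense b)
    have hlim2 : Filter.Tendsto (fun n => h m (x n)) Filter.atTop (nhds (h m b)) :=
      ((hcont m).tendsto b).comp hlim
    refine ge_of_tendsto' hlim2 fun n => ?_
    obtain ⟨k, hk⟩ := hmem n
    rw [← hk]
    exact ciInf_le (hbb m) k
  have hex : ∀ m, ∃ n, h m (e n) < g m + ε := by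
    intro m
    exact exists_lt_of_ciInf_lt (lt_add_of_pos_right _ hε)
  refine ⟨fun m => e (Nat.find (hex m)), ?_, ?_⟩
  · exact measurable_from_top.comp
      (measurable_find hex fun k =>
        measurableSet_lt (hmeas (e k)) (hgmeas.add_const ε))
  · intro m b
    have h1 : h m (e (Nat.find (hex m))) < g m + ε := Nat.find_spec (hex m)
    have h2 : g m ≤ h m b := hgle m b
    linarith

/-- Core data-processing style lemma: if `Y = G (M, U)` with `U` independent of `(V, M)`,
then predicting from `M` is at least as good as predicting from `V`. -/
lemma HL_le_of_indep {Ω 𝒜 E E' F : Type*} [MeasurableSpace Ω]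
    [MetricSpace 𝒜] [CompactSpace 𝒜] [Nonempty 𝒜] [MeasurableSpace 𝒜] [BorelSpace 𝒜]
    [MeasurableSpace E] [MeasurableSpace E'] [MeasurableSpace F]
    (P : Measure Ω) [IsProbabilityMeasure P]
    (L : ℝ × 𝒜 → ℝ) (hLmeas : Measurable L) (C : ℝ)
    (hLbdd : ∀ y b, |L (y, b)| ≤ C) (hLcont : ∀ y, Continuous fun b => L (y, b))
    (Y : Ω → ℝ) (V : Ω → E) (M : Ω → E') (U : Ω → F)
    (hV : Measurable V) (hM : Measurable M) (hU : Measurable U)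
    (G : E' × F → ℝ) (hG : Measurable G) (hY : ∀ ω, Y ω = G (M ω, U ω))
    (hind : IndepFun (fun ω => (V ω, M ω)) U P) :
    HL P L Y M ≤ HL P L Y V := by
  classical
  have hYmeas : Measurable Y := by
    have : Y = fun ω => G (M ω, U ω) := funext hY
    rw [this]; exact hG.comp (hM.prodMk hU)
  set Z : Ω → E × E' := fun ω => (V ω, M ω) with hZdef
  have hZ : Measurable Z := hV.prodMk hM
  set ν₁ : Measure (E × E') := P.map Z with hν₁
  set ν₂ : Measure F := P.map U with hν₂
  haveI : IsProbabilityMeasure ν₁ := Measure.isProbabilityMeasure_map hZ.aemeasurable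
  haveI : IsProbabilityMeasure ν₂ := Measure.isProbabilityMeasure_map hU.aemeasurable
  have hmap : P.map (fun ω => (Z ω, U ω)) = ν₁.prod ν₂ :=
    (indepFun_iff_map_prod_eq_prod_map_map hZ.aemeasurable hU.aemeasurable).mp hind
  -- the Carathéodory function
  set hfun : E' → 𝒜 → ℝ := fun m b => ∫ u, L (G (m, u), b) ∂ν₂ with hfundef
  have hC0 : 0 ≤ C := le_trans (abs_nonneg _) (hLbdd 0 (Classical.arbitrary 𝒜))
  have hfun_bdd : ∀ m b, |hfun m b| ≤ C := by
    intro m b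
    have : ‖∫ u, L (G (m, u), b) ∂ν₂‖ ≤ C * (ν₂ Set.univ).toReal :=
      norm_integral_le_of_norm_le_const
        (Filter.Eventually.of_forall fun u => by
          simpa [Real.norm_eq_abs] using hLbdd (G (m, u)) b)
    simpa [Real.norm_eq_abs, measure_univ] using this
  have hk_meas : ∀ (ρ : E × E' → 𝒜), Measurable ρ →
      Measurable (fun q : (E × E') × F => L (G (q.1.2, q.2), ρ q.1)) := by
    intro ρ hρ
    exact hLmeas.comp
      ((hG.comp ((measurable_snd.comp measurable_fst).prodMk measurable_snd)).prodMk
        (hρ.comp measurable_fst))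
  have hfun_meas : ∀ b, Measurable fun m => hfun m b := by
    intro b
    have sm : StronglyMeasurable fun q : E' × F => L (G (q.1, q.2), b) :=
      (hLmeas.comp ((hG.comp ((measurable_fst).prodMk measurable_snd)).prodMk
        measurable_const)).stronglyMeasurable
    exact sm.integral_prod_right'.measurable
  have hfun_cont : ∀ m, Continuous (hfun m) := by
    intro m
    apply continuous_of_dominated (bound := fun _ => C)
    · intro b
      exact (hLmeas.comp ((hG.comp (measurable_const.prodMk measurable_id)).prodMk
        measurable_const)).aestronglyMeasurable
    · intro b
      exact Filter.Eventually.of_forall fun u => by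
        simpa [Real.norm_eq_abs] using hLbdd (G (m, u)) b
    · exact integrable_const C
    · exact Filter.Eventually.of_forall fun u => hLcont (G (m, u))
  -- the key computation
  have calcLem : ∀ (ρ : E × E' → 𝒜), Measurable ρ →
      ∫ ω, L (Y ω, ρ (Z ω)) ∂P = ∫ z, hfun z.2 (ρ z) ∂ν₁ := by
    intro ρ hρ
    have h1 : ∀ ω, L (Y ω, ρ (Z ω)) =
        (fun q : (E × E') × F => L (G (q.1.2, q.2), ρ q.1)) (Z ω, U ω) := by
      intro ω; simp only [hZdef]; rw [hY ω]
    calc ∫ ω, L (Y ω, ρ (Z ω)) ∂P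
        = ∫ ω, (fun q : (E × E') × F => L (G (q.1.2, q.2), ρ q.1)) (Z ω, U ω) ∂P := by
          exact integral_congr_ae (Filter.Eventually.of_forall h1)
      _ = ∫ q, (fun q : (E × E') × F => L (G (q.1.2, q.2), ρ q.1)) q
            ∂(P.map (fun ω => (Z ω, U ω))) :=
          (integral_map (hZ.prodMk hU).aemeasurable
            (hk_meas ρ hρ).aestronglyMeasurable).symm
      _ = ∫ q, (fun q : (E × E') × F => L (G (q.1.2, q.2), ρ q.1)) q ∂(ν₁.prod ν₂) := by
          rw [hmap]
      _ = ∫ z, ∫ u, L (G (z.2, u), ρ z) ∂ν₂ ∂ν₁ := by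
          exact integral_prod _ (myIntegrable_of_bdd (hk_meas ρ hρ).aestronglyMeasurable
            (fun q => hLbdd _ _))
  have int_outer : ∀ (ρ : E × E' → 𝒜), Measurable ρ →
      Integrable (fun z => hfun z.2 (ρ z)) ν₁ := by
    intro ρ hρ
    refine myIntegrable_of_bdd ?_ (fun z => hfun_bdd z.2 (ρ z))
    have sm : StronglyMeasurable fun q : (E × E') × F => L (G (q.1.2, q.2), ρ q.1) :=
      (hk_meas ρ hρ).stronglyMeasurable
    exact sm.integral_prod_right'.aestronglyMeasurable
  -- lower bound / bddBelow for the infimum over estimators from M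
  have int_comp : ∀ (f : Ω → 𝒜), Measurable f →
      Integrable (fun ω => L (Y ω, f ω)) P := by
    intro f hf
    exact myIntegrable_of_bdd
      (hLmeas.comp (hYmeas.prodMk hf)).aestronglyMeasurable
      (fun ω => hLbdd _ _)
  have hlb : ∀ (f : Ω → 𝒜), Measurable f → -C ≤ ∫ ω, L (Y ω, f ω) ∂P := by
    intro f hf
    have := integral_mono (integrable_const (-C)) (int_comp f hf)
      (fun ω => by
        show -C ≤ L (Y ω, f ω)
        linarith [(abs_le.mp (hLbdd (Y ω) (f ω))).1])
    simpa [measure_univ] using this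
  have bddB : BddBelow (Set.range fun φ : {φ : E' → 𝒜 // Measurable φ} =>
      ∫ ω, L (Y ω, φ.1 (M ω)) ∂P) := by
    refine ⟨-C, ?_⟩
    rintro x ⟨φ, rfl⟩
    exact hlb (fun ω => φ.1 (M ω)) (φ.2.comp hM)
  -- main estimate
  haveI : Nonempty {φ : E → 𝒜 // Measurable φ} :=
    ⟨⟨fun _ => Classical.arbitrary 𝒜, measurable_const⟩⟩
  refine le_ciInf fun φ : {φ : E → 𝒜 // Measurable φ} => ?_
  refine le_of_forall_pos_le_add fun ε hε => ?_
  obtain ⟨ψ, hψm, hψ⟩ := exists_eps_selector hfun hfun_meas hfun_cont C hfun_bdd hε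
  have hρψ : Measurable (fun z : E × E' => ψ z.2) := hψm.comp measurable_snd
  have hρφ : Measurable (fun z : E × E' => φ.1 z.1) := φ.2.comp measurable_fst
  have step1 : HL P L Y M ≤ ∫ ω, L (Y ω, ψ (M ω)) ∂P :=
    ciInf_le bddB ⟨ψ, hψm⟩
  have step2 : ∫ ω, L (Y ω, ψ (M ω)) ∂P = ∫ z, hfun z.2 (ψ z.2) ∂ν₁ :=
    calcLem (fun z => ψ z.2) hρψ
  have step3 : ∫ z, hfun z.2 (ψ z.2) ∂ν₁ ≤ ∫ z, (hfun z.2 (φ.1 z.1) + ε) ∂ν₁ := by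
    refine integral_mono (int_outer _ hρψ) ((int_outer _ hρφ).add (integrable_const ε)) ?_
    intro z
    exact hψ z.2 (φ.1 z.1)
  have step4 : ∫ z, (hfun z.2 (φ.1 z.1) + ε) ∂ν₁ = ∫ z, hfun z.2 (φ.1 z.1) ∂ν₁ + ε := by
    rw [integral_add (int_outer _ hρφ) (integrable_const ε), integral_const]
    simp [measure_univ]
  have step5 : ∫ z, hfun z.2 (φ.1 z.1) ∂ν₁ = ∫ ω, L (Y ω, φ.1 (V ω)) ∂P :=
    (calcLem (fun z => φ.1 z.1) hρφ).symm
  calc HL P L Y M ≤ ∫ z, hfun z.2 (ψ z.2) ∂ν₁ := step2 ▸ step1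
    _ ≤ ∫ z, hfun z.2 (φ.1 z.1) ∂ν₁ + ε := step4 ▸ step3
    _ = ∫ ω, L (Y ω, φ.1 (V ω)) ∂P + ε := by rw [step5]


/-- Identity cast from `ARType p (Sum.inr u)` to `ℝ`. -/
def ARgetr {p : ℕ} (u : ℕ ⊕ ℕ) (x : ARType p (Sum.inr u)) : ℝ := x

/-- Identity cast from `ARType p (Sum.inl ())` to `Fin p → ℝ`. -/
def ARgetl {p : ℕ} (x : ARType p (Sum.inl ())) : Fin p → ℝ := x

lemma measurable_ARgetr {p : ℕ} (u : ℕ ⊕ ℕ) :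
    @Measurable (ARType p (Sum.inr u)) ℝ (ARMeasSpace p (Sum.inr u)) _ (ARgetr u) :=
  measurable_id

lemma measurable_ARgetl {p : ℕ} :
    @Measurable (ARType p (Sum.inl ())) (Fin p → ℝ) (ARMeasSpace p (Sum.inl ())) _
      (ARgetl (p := p)) :=
  measurable_id

/-- Monotonic information aging for AR(p) with long features: for the
Gaussian AR(p) model with feature length `l ≥ p`, the estimation error is a non-decreasing
function of the Age of Information: for all `t ≥ p` and `0 ≤ δ₁ ≤ δ₂` with
`δ₂ + l ≤ t + 1`, `H_L(Y_t | X^l_{t−δ₁}) ≤ H_L(Y_t | X^l_{t−δ₂})`. -/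
theorem ar_HL_monotone_in_AoI_of_long_feature
    {Ω 𝒜 : Type*} [MeasurableSpace Ω]
    [MetricSpace 𝒜] [CompactSpace 𝒜] [Nonempty 𝒜] [MeasurableSpace 𝒜] [BorelSpace 𝒜]
    (P : Measure Ω) [IsProbabilityMeasure P]
    (p l : ℕ) (hp : 1 ≤ p) (hpl : p ≤ l)
    (a : Fin p → ℝ) (σW σN : NNReal) (hσW : 0 < σW) (hσN : 0 < σN)
    (X W N Y : ℕ → Ω → ℝ)
    (hXm : ∀ t, Measurable (X t)) (hWm : ∀ t, Measurable (W t))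
    (hNm : ∀ t, Measurable (N t))
    (hW : ∀ t, p ≤ t → P.map (W t) = gaussianReal 0 σW)
    (hN : ∀ t, P.map (N t) = gaussianReal 0 σN)
    (hIndep : iIndepFun (m := ARMeasSpace p) (ARFamily p X W N) P)
    (hXrec : ∀ t, p ≤ t → ∀ ω, X t ω
      = (∑ k : Fin p, a k * X (t - ((k : ℕ) + 1)) ω) + W t ω)
    (hYdef : ∀ t ω, Y t ω = X t ω + N t ω)
    (Xv : ℕ → Ω → Fin l → ℝ) (hXv : ∀ s ω i, Xv s ω i = X (s - (i : ℕ)) ω)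
    (hXvm : ∀ s, Measurable (Xv s))
    (L : ℝ × 𝒜 → ℝ) (hLmeas : Measurable L)
    (hLbdd : ∃ C : ℝ, ∀ y b, |L (y, b)| ≤ C)
    (hLcont : ∀ y : ℝ, Continuous fun b => L (y, b)) :
    ∀ t δ₁ δ₂ : ℕ, p ≤ t → δ₁ ≤ δ₂ → δ₂ + l ≤ t + 1 →
      HL P L (Y t) (Xv (t - δ₁)) ≤ HL P L (Y t) (Xv (t - δ₂)) := by
  classical
  letI : ∀ i : ARIndex, MeasurableSpace (ARType p i) := ARMeasSpace p
  obtain ⟨C, hC⟩ := hLbdd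
  intro t δ₁ δ₂ hpt hδ hδl
  have hl1 : 1 ≤ l := le_trans hp hpl
  set s₁ : ℕ := t - δ₁ with hs₁def
  set s₂ : ℕ := t - δ₂ with hs₂def
  -- basic arithmetic facts
  have hs₁ : s₁ + δ₁ = t := by omega
  have hs₂ : s₂ + δ₂ = t := by omega
  have hs₂₁ : s₂ ≤ s₁ := by omega
  have hls₂ : l ≤ s₂ + 1 := by omega
  have hps₁ : p ≤ s₁ + 1 := by omega
  -- the index sets
  set S : Finset ARIndex :=
    insert (Sum.inl ()) ((Finset.range (s₁ + 1 - p)).image fun j => Sum.inr (Sum.inl j))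
    with hSdef
  set T : Finset ARIndex :=
    insert (Sum.inr (Sum.inr t))
      ((Finset.range δ₁).image fun j => Sum.inr (Sum.inl (s₁ + 1 + j - p)))
    with hTdef
  have hST : Disjoint S T := by
    rw [Finset.disjoint_left]
    intro x hxS hxT
    simp only [hSdef, hTdef, Finset.mem_insert, Finset.mem_image, Finset.mem_range] at hxS hxT
    rcases hxS with h1 | ⟨j, hj, rfl⟩
    · subst h1
      rcases hxT with h2 | ⟨i, hi, h2⟩ <;> simp_all
    · rcases hxT with h2 | ⟨i, hi, h2⟩
      · simp_all
      · have : s₁ + 1 + i - p = j := by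
          have := Sum.inl.inj (Sum.inr.inj h2)
          exact this.symm ▸ rfl
        omega
  have hfammeas : ∀ i, Measurable (ARFamily p X W N i) := by
    rintro (⟨⟩ | (s | s))
    · exact measurable_pi_lambda _ fun k => hXm k
    · exact hWm (p + s)
    · exact hNm s
  -- the tuples
  set tupleS : Ω → ∀ i : S, ARType p i.1 := fun ω i => ARFamily p X W N i.1 ω with htSdef
  set tupleT : Ω → ∀ i : T, ARType p i.1 := fun ω i => ARFamily p X W N i.1 ω with htTdef
  have htSmeas : Measurable tupleS := measurable_pi_lambda _ fun i => hfammeas i.1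
  have htTmeas : Measurable tupleT := measurable_pi_lambda _ fun i => hfammeas i.1
  -- Step 1: every X s for s ≤ s₁ is a measurable function of tupleS
  have key : ∀ s : ℕ, ∃ Φ : (∀ i : S, ARType p i.1) → ℝ, Measurable Φ ∧
      (s ≤ s₁ → ∀ ω, X s ω = Φ (tupleS ω)) := by
    intro s
    induction s using Nat.strong_induction_on with
    | _ s ih =>
      by_cases hss : s ≤ s₁
      · by_cases hsp : s < p
        · have hmem : Sum.inl () ∈ S := by simp [hSdef]
          refine ⟨fun f => ARgetl (f ⟨Sum.inl (), hmem⟩) ⟨s, hsp⟩, ?_, ?_⟩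
          · exact ((measurable_pi_apply (⟨s, hsp⟩ : Fin p)).comp measurable_ARgetl).comp
              (measurable_pi_apply (⟨Sum.inl (), hmem⟩ : S))
          · intro _ ω
            rfl
        · push_neg at hsp
          have hkex : ∀ k : Fin p, ∃ Φ : (∀ i : S, ARType p i.1) → ℝ, Measurable Φ ∧
              (s - ((k : ℕ) + 1) ≤ s₁ → ∀ ω, X (s - ((k : ℕ) + 1)) ω = Φ (tupleS ω)) := by
            intro k
            exact ih _ (Nat.sub_lt (by omega) (by omega))
          choose Φk hΦk1 hΦk2 using hkex
          have hmem : Sum.inr (Sum.inl (s - p)) ∈ S := by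
            simp only [hSdef, Finset.mem_insert, Finset.mem_image, Finset.mem_range]
            exact Or.inr ⟨s - p, by omega, rfl⟩
          refine ⟨fun f => (∑ k : Fin p, a k * Φk k f)
              + ARgetr _ (f ⟨Sum.inr (Sum.inl (s - p)), hmem⟩), ?_, ?_⟩
          · exact (Finset.measurable_sum Finset.univ fun k _ =>
              (hΦk1 k).const_mul (a k)).add
              ((measurable_ARgetr _).comp
                (measurable_pi_apply (⟨Sum.inr (Sum.inl (s - p)), hmem⟩ : S)))
          · intro _ ω
            rw [hXrec s hsp ω]
            congr 1
            · refine Finset.sum_congr rfl fun k _ => ?_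
              rw [hΦk2 k (by omega) ω]
            · show W s ω = W (p + (s - p)) ω
              congr 1
              omega
      · exact ⟨fun _ => 0, measurable_const, fun h => absurd h hss⟩
  choose Φ hΦm hΦe using key
  -- the map giving (Xv s₂, Xv s₁) from tupleS
  set ΘZ : (∀ i : S, ARType p i.1) → (Fin l → ℝ) × (Fin l → ℝ) :=
    fun f => (fun i => Φ (s₂ - (i : ℕ)) f, fun i => Φ (s₁ - (i : ℕ)) f) with hΘZdef
  have hΘZm : Measurable ΘZ :=
    (measurable_pi_lambda _ fun i => hΦm _).prodMk (measurable_pi_lambda _ fun i => hΦm _)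
  have hZeq : ∀ ω, (Xv s₂ ω, Xv s₁ ω) = ΘZ (tupleS ω) := by
    intro ω
    have h1 : Xv s₂ ω = fun i : Fin l => Φ (s₂ - (i : ℕ)) (tupleS ω) := by
      funext i
      rw [hXv]
      exact hΦe (s₂ - (i : ℕ)) (by omega) ω
    have h2 : Xv s₁ ω = fun i : Fin l => Φ (s₁ - (i : ℕ)) (tupleS ω) := by
      funext i
      rw [hXv]
      exact hΦe (s₁ - (i : ℕ)) (by omega) ω
    rw [h1, h2]
  -- Step 2: Y t is a measurable function of (Xv s₁, tupleT)
  have key2 : ∀ j : ℕ, ∃ Ψ : (Fin l → ℝ) × (∀ i : T, ARType p i.1) → ℝ, Measurable Ψ ∧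
      (j ≤ δ₁ → ∀ ω, X (s₁ + j) ω = Ψ (Xv s₁ ω, tupleT ω)) := by
    intro j
    induction j using Nat.strong_induction_on with
    | _ j ih =>
      by_cases hjδ : j ≤ δ₁
      · by_cases hj0 : j = 0
        · subst hj0
          refine ⟨fun q => q.1 ⟨0, by omega⟩,
            by exact (measurable_pi_apply _).comp measurable_fst, ?_⟩
          intro _ ω
          have := hXv s₁ ω ⟨0, by omega⟩
          simpa using this.symm
        · have hj1 : 1 ≤ j := by omega
          have hkex : ∀ k : Fin p, ∃ Ψk : (Fin l → ℝ) × (∀ i : T, ARType p i.1) → ℝ,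
              Measurable Ψk ∧ ∀ ω, X (s₁ + j - ((k : ℕ) + 1)) ω = Ψk (Xv s₁ ω, tupleT ω) := by
            intro k
            by_cases hkj : (k : ℕ) + 1 ≤ j
            · obtain ⟨Ψ', h1, h2⟩ := ih (j - ((k : ℕ) + 1)) (by omega)
              refine ⟨Ψ', h1, fun ω => ?_⟩
              rw [show s₁ + j - ((k : ℕ) + 1) = s₁ + (j - ((k : ℕ) + 1)) by omega]
              exact h2 (by omega) ω
            · have hkl : (k : ℕ) + 1 - j < l := by
                have := k.isLt
                omega
              refine ⟨fun q => q.1 ⟨(k : ℕ) + 1 - j, hkl⟩,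
                by exact (measurable_pi_apply _).comp measurable_fst, fun ω => ?_⟩
              have := hXv s₁ ω ⟨(k : ℕ) + 1 - j, hkl⟩
              simp only at this
              rw [show s₁ + j - ((k : ℕ) + 1) = s₁ - ((k : ℕ) + 1 - j) by omega]
              exact this.symm
          choose Ψk hΨk1 hΨk2 using hkex
          have hmem : Sum.inr (Sum.inl (s₁ + 1 + (j - 1) - p)) ∈ T := by
            simp only [hTdef, Finset.mem_insert, Finset.mem_image, Finset.mem_range]
            exact Or.inr ⟨j - 1, by omega, rfl⟩
          refine ⟨fun q => (∑ k : Fin p, a k * Ψk k q)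
              + ARgetr _ (q.2 ⟨Sum.inr (Sum.inl (s₁ + 1 + (j - 1) - p)), hmem⟩), ?_, ?_⟩
          · exact (Finset.measurable_sum Finset.univ fun k _ =>
              (hΨk1 k).const_mul (a k)).add
              ((measurable_ARgetr _).comp
                ((measurable_pi_apply _).comp measurable_snd))
          · intro _ ω
            rw [hXrec (s₁ + j) (by omega) ω]
            congr 1
            · exact Finset.sum_congr rfl fun k _ => by rw [hΨk2 k ω]
            · show W (s₁ + j) ω = W (p + (s₁ + 1 + (j - 1) - p)) ω
              congr 1
              omega
      · exact ⟨fun _ => 0, measurable_const, fun h => absurd h hjδ⟩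
  obtain ⟨Ψ, hΨm, hΨe⟩ := key2 δ₁
  have hmemN : Sum.inr (Sum.inr t) ∈ T := by simp [hTdef]
  set G : (Fin l → ℝ) × (∀ i : T, ARType p i.1) → ℝ :=
    fun q => Ψ q + ARgetr _ (q.2 ⟨Sum.inr (Sum.inr t), hmemN⟩) with hGdef
  have hGm : Measurable G :=
    hΨm.add ((measurable_ARgetr _).comp ((measurable_pi_apply _).comp measurable_snd))
  have hYrep : ∀ ω, Y t ω = G (Xv s₁ ω, tupleT ω) := by
    intro ω
    rw [hYdef t ω]
    have h1 : X t ω = Ψ (Xv s₁ ω, tupleT ω) := by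
      have := hΨe le_rfl ω
      rwa [hs₁] at this
    rw [h1]
    rfl
  -- independence
  have hindep0 : IndepFun tupleS tupleT P :=
    hIndep.indepFun_finset S T hST hfammeas
  have hindep1 : IndepFun (ΘZ ∘ tupleS) (id ∘ tupleT) P :=
    hindep0.comp hΘZm measurable_id
  have hindep : IndepFun (fun ω => (Xv s₂ ω, Xv s₁ ω)) tupleT P := by
    have h1 : (fun ω => (Xv s₂ ω, Xv s₁ ω)) = ΘZ ∘ tupleS := funext hZeq
    have h2 : tupleT = id ∘ tupleT := rfl
    rw [h1, h2]
    exact hindep1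
  -- conclude via the core lemma
  exact HL_le_of_indep P L hLmeas C hC hLcont (Y t) (Xv s₂) (Xv s₁) tupleT
    (hXvm s₂) (hXvm s₁) htTmeas G hGm hYrep hindep
end

section
/- KL-divergence characterization of the ε-Markov chain parameter: let Y : Ω → ℝ, X : Ω → E₁, Z : Ω → E₂ be random elements of standard Borel spaces on a probability space (Ω, F, P). Let ν be the measure on ℝ × E₁ × E₂ obtained by first drawing x according to the law of X and then, independently given x, drawing y from condDistrib Y X P (x) and z from condDistrib Z X P (x) (i.e., ν = P_{Y|X} P_{Z|X} P_X). Then the Kullback–Leibler divergence satisfies KL( law(Y, X, Z) ‖ ν ) = ∫ KL( condDistrib Y (X,Z) P (x, z) ‖ condDistrib Y X P (x) ) d(law(X, Z))(x, z). -/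
open MeasureTheory ProbabilityTheory
open scoped ENNReal

open Classical in
/-- The Kullback–Leibler divergence `KL(μ ‖ ν)` (this Mathlib version has no
`ProbabilityTheory.klDiv`, so we define it here): it is the integral
`∫ log(dμ/dν) dμ` of the log-likelihood ratio when `μ ≪ ν` and the log-likelihood ratio
is `μ`-integrable, and `∞` otherwise.  Since all measures appearing below are probability
measures, their KL divergences are nonnegative and we may take values in `ℝ≥0∞`. -/
noncomputable def klDiv {α : Type*} [MeasurableSpace α] (μ ν : Measure α) : ℝ≥0∞ :=
  if μ ≪ ν ∧ Integrable (llr μ ν) μ then ENNReal.ofReal (∫ x, llr μ ν x ∂μ) else ⊤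


section MyAux

open Real

variable {α β : Type*} [MeasurableSpace α] [MeasurableSpace β]

/-- Gibbs inequality. -/
lemma my_integral_llr_nonneg (μ ν : Measure α) [IsProbabilityMeasure μ] [IsProbabilityMeasure ν]
    (hμν : μ ≪ ν) (h : Integrable (llr μ ν) μ) : 0 ≤ ∫ x, llr μ ν x ∂μ := by
  have hint : Integrable (fun x => (ν.rnDeriv μ x).toReal) μ := Measure.integrable_toReal_rnDeriv
  have h1 : ∫ x, (1 - (ν.rnDeriv μ x).toReal) ∂μ ≤ ∫ x, llr μ ν x ∂μ := by
    refine integral_mono_ae ((integrable_const (1:ℝ)).sub hint) h ?_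
    filter_upwards [exp_neg_llr hμν] with x hx
    rw [← hx]
    have := Real.add_one_le_exp (-(llr μ ν x))
    linarith
  refine le_trans ?_ h1
  rw [integral_sub (integrable_const _) hint, integral_const]
  simp only [measure_univ, ENNReal.toReal_one, probReal_univ, smul_eq_mul, one_mul, sub_nonneg]
  calc ∫ x, (ν.rnDeriv μ x).toReal ∂μ
      = (ν Set.univ).toReal - (ν.singularPart μ Set.univ).toReal :=
        Measure.integral_toReal_rnDeriv'
    _ ≤ (ν Set.univ).toReal := by
        have : (0:ℝ) ≤ (ν.singularPart μ Set.univ).toReal := ENNReal.toReal_nonneg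
        linarith
    _ = 1 := by simp

lemma my_lintegral_neg_llr_le (μ ν : Measure α) [IsProbabilityMeasure μ] [IsProbabilityMeasure ν]
    (hμν : μ ≪ ν) :
    ∫⁻ x, ENNReal.ofReal (max (-llr μ ν x) 0) ∂μ ≤ ENNReal.ofReal (Real.exp (-1)) := by
  have hf : Measurable (μ.rnDeriv ν) := Measure.measurable_rnDeriv μ ν
  have hμ : ν.withDensity (μ.rnDeriv ν) = μ := Measure.withDensity_rnDeriv_eq μ ν hμν
  have hg : Measurable fun x => ENNReal.ofReal (max (-llr μ ν x) 0) :=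
    ((measurable_llr μ ν).neg.max measurable_const).ennreal_ofReal
  have hrw := lintegral_withDensity_eq_lintegral_mul ν hf hg
  rw [hμ] at hrw
  rw [hrw]
  calc ∫⁻ x, (μ.rnDeriv ν * fun x => ENNReal.ofReal (max (-llr μ ν x) 0)) x ∂ν
      ≤ ∫⁻ _, ENNReal.ofReal (Real.exp (-1)) ∂ν := by
        refine lintegral_mono_ae ?_
        filter_upwards [μ.rnDeriv_lt_top ν] with x hx
        simp only [Pi.mul_apply]
        set t := (μ.rnDeriv ν x).toReal with ht
        have ht0 : 0 ≤ t := ENNReal.toReal_nonneg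
        have hfx : μ.rnDeriv ν x = ENNReal.ofReal t := by
          rw [ht, ENNReal.ofReal_toReal hx.ne]
        have hllr : llr μ ν x = Real.log t := rfl
        rw [hfx, hllr, ← ENNReal.ofReal_mul ht0]
        refine ENNReal.ofReal_le_ofReal ?_
        rcases eq_or_lt_of_le ht0 with h0 | h0
        · simp [← h0, (Real.exp_pos _).le]
        rcases le_or_gt 1 t with h1 | h1
        · have : Real.log t ≥ 0 := Real.log_nonneg h1
          have : max (-Real.log t) 0 = 0 := max_eq_right (by linarith)
          simp [this, (Real.exp_pos _).le]
        · have hlt : Real.log t < 0 := Real.log_neg h0 h1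
          rw [max_eq_left (by linarith)]
          have hu : (0:ℝ) < 1/t := by positivity
          have hlog : Real.log (1/t) ≤ 1/t * Real.exp (-1) := by
            have h2 : Real.log (1/t * Real.exp (-1)) ≤ 1/t * Real.exp (-1) - 1 :=
              Real.log_le_sub_one_of_pos (by positivity)
            rw [Real.log_mul (ne_of_gt hu) (Real.exp_ne_zero _), Real.log_exp] at h2
            linarith
          have hneg : -Real.log t = Real.log (1/t) := by
            rw [one_div, Real.log_inv]
          rw [hneg]
          calc t * Real.log (1/t) ≤ t * (1/t * Real.exp (-1)) := by
                refine mul_le_mul_of_nonneg_left hlog ht0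
            _ = Real.exp (-1) := by field_simp
    _ = ENNReal.ofReal (Real.exp (-1)) := by simp

lemma my_integral_abs_llr_le (μ ν : Measure α) [IsProbabilityMeasure μ] [IsProbabilityMeasure ν]
    (hμν : μ ≪ ν) (h : Integrable (llr μ ν) μ) :
    ∫ x, |llr μ ν x| ∂μ ≤ ∫ x, llr μ ν x ∂μ + 2 * Real.exp (-1) := by
  have hmeas : Measurable fun x => max (-llr μ ν x) 0 :=
    (measurable_llr μ ν).neg.max measurable_const
  have hneg : Integrable (fun x => max (-llr μ ν x) 0) μ := by
    refine h.abs.mono' hmeas.aestronglyMeasurable ?_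
    refine Filter.Eventually.of_forall fun x => ?_
    have h1 : max (-llr μ ν x) 0 ≤ |llr μ ν x| :=
      max_le (by rw [abs_eq_max_neg]; exact le_max_right _ _) (abs_nonneg _)
    have h2 : 0 ≤ max (-llr μ ν x) 0 := le_max_right _ _
    rw [Real.norm_eq_abs, abs_of_nonneg h2]
    exact h1
  have key : ∫ x, max (-llr μ ν x) 0 ∂μ ≤ Real.exp (-1) := by
    rw [integral_eq_lintegral_of_nonneg_ae (f := fun x => max (-llr μ ν x) 0)
      (Filter.Eventually.of_forall fun x => le_max_right _ _) hmeas.aestronglyMeasurable]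
    calc (∫⁻ x, ENNReal.ofReal (max (-llr μ ν x) 0) ∂μ).toReal
        ≤ (ENNReal.ofReal (Real.exp (-1))).toReal := by
          refine ENNReal.toReal_mono (by simp) (my_lintegral_neg_llr_le μ ν hμν)
      _ = Real.exp (-1) := ENNReal.toReal_ofReal (Real.exp_pos _).le
  have habs : ∀ x, |llr μ ν x| ≤ llr μ ν x + 2 * max (-llr μ ν x) 0 := by
    intro x
    rcases le_or_gt 0 (llr μ ν x) with h0 | h0
    · rw [abs_of_nonneg h0]
      have := le_max_right (-llr μ ν x) 0; linarith
    · rw [abs_of_neg h0, max_eq_left (by linarith)]; linarith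
  calc ∫ x, |llr μ ν x| ∂μ
      ≤ ∫ x, (llr μ ν x + 2 * max (-llr μ ν x) 0) ∂μ := by
        refine integral_mono h.abs (h.add (hneg.const_mul 2)) habs
    _ = ∫ x, llr μ ν x ∂μ + 2 * ∫ x, max (-llr μ ν x) 0 ∂μ := by
        rw [integral_add h (hneg.const_mul 2),
          show (fun x => 2 * max (-llr μ ν x) 0) = fun x => (2:ℝ) • max (-llr μ ν x) 0 by
            funext x; simp, integral_smul, smul_eq_mul]
    _ ≤ ∫ x, llr μ ν x ∂μ + 2 * Real.exp (-1) := by linarith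


lemma my_compProd_withDensity (μ : Measure α) [IsFiniteMeasure μ] (η : Kernel α β)
    [IsFiniteKernel η] (f : α → β → ℝ≥0∞) (hf : Measurable (Function.uncurry f))
    [IsFiniteKernel (Kernel.withDensity η f)] :
    μ ⊗ₘ (Kernel.withDensity η f) = (μ ⊗ₘ η).withDensity (fun p => f p.1 p.2) := by
  ext s hs
  rw [Measure.compProd_apply hs, withDensity_apply _ hs,
    ← lintegral_indicator hs, Measure.lintegral_compProd]
  swap
  · exact (hf.indicator hs).comp measurable_id
  congr 1
  funext a
  rw [Kernel.withDensity_apply' _ hf]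
  rw [← lintegral_indicator (measurable_prodMk_left hs)]
  congr 1

variable [MeasurableSpace.CountableOrCountablyGenerated α β]

lemma my_rnDeriv_compProd (μ : Measure α) [IsFiniteMeasure μ] (κ η : Kernel α β)
    [IsFiniteKernel κ] [IsFiniteKernel η] :
    (fun p => Kernel.rnDeriv κ η p.1 p.2) =ᵐ[μ ⊗ₘ η] Measure.rnDeriv (μ ⊗ₘ κ) (μ ⊗ₘ η) := by
  refine Measure.eq_rnDeriv (μ := μ ⊗ₘ κ) (ν := μ ⊗ₘ η)
    (s := μ ⊗ₘ Kernel.singularPart κ η)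
    ((Kernel.measurable_rnDeriv κ η).comp measurable_id) ?_ ?_
  · refine ⟨(Kernel.mutuallySingularSet κ η)ᶜ,
      (Kernel.measurableSet_mutuallySingularSet κ η).compl, ?_, ?_⟩
    · rw [Measure.compProd_apply (Kernel.measurableSet_mutuallySingularSet κ η).compl]
      have : ∀ a, (Kernel.singularPart κ η) a
          ((Prod.mk a ⁻¹' Kernel.mutuallySingularSet κ η)ᶜ) = 0 := by
        intro a
        have h2 : (Prod.mk a ⁻¹' Kernel.mutuallySingularSet κ η)ᶜ
            = (Kernel.mutuallySingularSetSlice κ η a)ᶜ := rfl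
        rw [h2]
        exact Kernel.singularPart_compl_mutuallySingularSetSlice κ η a
      simp only [Set.preimage_compl]
      simp [this]
    · rw [compl_compl, Measure.compProd_apply (Kernel.measurableSet_mutuallySingularSet κ η)]
      have : ∀ a, η a (Prod.mk a ⁻¹' Kernel.mutuallySingularSet κ η) = 0 := by
        intro a
        have : Prod.mk a ⁻¹' Kernel.mutuallySingularSet κ η
            = Kernel.mutuallySingularSetSlice κ η a := rfl
        rw [this]
        exact Kernel.measure_mutuallySingularSetSlice κ η a
      simp [this]
  · conv_lhs => rw [← Kernel.rnDeriv_add_singularPart κ η]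
    rw [Measure.compProd_add_right, my_compProd_withDensity μ η _ (Kernel.measurable_rnDeriv κ η),
      add_comm]

lemma my_ae_ac_of_compProd (μ : Measure α) [IsFiniteMeasure μ] (κ η : Kernel α β)
    [IsFiniteKernel κ] [IsFiniteKernel η] (h : μ ⊗ₘ κ ≪ μ ⊗ₘ η) :
    ∀ᵐ a ∂μ, κ a ≪ η a := by
  have hS : (μ ⊗ₘ η) (Kernel.mutuallySingularSet κ η) = 0 := by
    rw [Measure.compProd_apply (Kernel.measurableSet_mutuallySingularSet κ η)]
    have : ∀ a, η a (Prod.mk a ⁻¹' Kernel.mutuallySingularSet κ η) = 0 := fun a =>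
      Kernel.measure_mutuallySingularSetSlice κ η a
    simp [this]
  have hκS := h hS
  rw [Measure.compProd_apply (Kernel.measurableSet_mutuallySingularSet κ η),
    lintegral_eq_zero_iff
      (Kernel.measurable_kernel_prodMk_left
        (Kernel.measurableSet_mutuallySingularSet κ η))] at hκS
  filter_upwards [hκS] with a ha
  rw [← Kernel.singularPart_eq_zero_iff_absolutelyContinuous,
    Kernel.singularPart_eq_zero_iff_measure_eq_zero]
  exact ha


section MyCG
variable [MeasurableSpace.CountableOrCountablyGenerated α β]

lemma my_klDiv_compProd (μ : Measure α) [IsProbabilityMeasure μ]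
    (κ η : Kernel α β) [IsMarkovKernel κ] [IsMarkovKernel η] :
    klDiv (μ ⊗ₘ κ) (μ ⊗ₘ η) = ∫⁻ a, klDiv (κ a) (η a) ∂μ := by
  by_cases hac : μ ⊗ₘ κ ≪ μ ⊗ₘ η
  · -- AC case
    have hae : ∀ᵐ a ∂μ, κ a ≪ η a := my_ae_ac_of_compProd μ κ η hac
    set g : α × β → ℝ := fun p => Real.log (Kernel.rnDeriv κ η p.1 p.2).toReal with hg_def
    have hg_meas : Measurable g := (Kernel.measurable_rnDeriv κ η).ennreal_toReal.log
    have h_llr : llr (μ ⊗ₘ κ) (μ ⊗ₘ η) =ᵐ[μ ⊗ₘ κ] g := by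
      have h0 := my_rnDeriv_compProd μ κ η
      filter_upwards [hac.ae_le h0] with p hp
      simp only [llr_def, hg_def]
      rw [hp]
    have h_llr_fiber : ∀ᵐ a ∂μ, llr (κ a) (η a) =ᵐ[κ a] fun b => g (a, b) := by
      filter_upwards [hae] with a ha
      filter_upwards [ha.ae_le (Kernel.rnDeriv_eq_rnDeriv_measure (κ := κ) (η := η) (a := a))]
        with b hb
      simp only [llr_def, hg_def]
      rw [hb]
    by_cases hint : Integrable g (μ ⊗ₘ κ)
    · -- integrable case
      have hint_llr : Integrable (llr (μ ⊗ₘ κ) (μ ⊗ₘ η)) (μ ⊗ₘ κ) := hint.congr h_llr.symm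
      obtain ⟨hint1, hint2⟩ :=
        (Measure.integrable_compProd_iff hint.aestronglyMeasurable).mp hint
      set F : α → ℝ := fun a => ∫ b, g (a, b) ∂κ a with hF_def
      have hF_int : Integrable F μ := by
        refine hint2.mono' (hg_meas.stronglyMeasurable.integral_kernel_prod_right').aestronglyMeasurable ?_
        filter_upwards [hint1] with a _
        exact norm_integral_le_integral_norm _
      have h_fiber : ∀ᵐ a ∂μ, klDiv (κ a) (η a) = ENNReal.ofReal (F a) ∧ 0 ≤ F a := by
        filter_upwards [hae, h_llr_fiber, hint1] with a ha hll hInt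
        have hInt' : Integrable (llr (κ a) (η a)) (κ a) := hInt.congr hll.symm
        have hF_eq : ∫ b, llr (κ a) (η a) b ∂κ a = F a := integral_congr_ae hll
        refine ⟨?_, ?_⟩
        · rw [klDiv, if_pos ⟨ha, hInt'⟩, hF_eq]
        · rw [← hF_eq]
          exact my_integral_llr_nonneg _ _ ha hInt'
      rw [klDiv, if_pos ⟨hac, hint_llr⟩]
      rw [lintegral_congr_ae (h_fiber.mono fun a h => h.1)]
      rw [integral_congr_ae h_llr, Measure.integral_compProd hint]
      exact ofReal_integral_eq_lintegral_ofReal hF_int (h_fiber.mono fun a h => h.2)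
    · -- non-integrable case: both sides ⊤
      have h_not : ¬ Integrable (llr (μ ⊗ₘ κ) (μ ⊗ₘ η)) (μ ⊗ₘ κ) := fun h => hint (h.congr h_llr)
      rw [klDiv, if_neg (fun h => h_not h.2)]
      symm
      rw [Measure.integrable_compProd_iff hg_meas.aestronglyMeasurable] at hint
      by_cases hfib : ∀ᵐ a ∂μ, Integrable (fun b => g (a, b)) (κ a)
      · -- the fiber integrals are not integrable
        have hB : ¬ Integrable (fun a => ∫ b, ‖g (a, b)‖ ∂κ a) μ := fun h => hint ⟨hfib, h⟩
        set H : α → ℝ := fun a => ∫ b, ‖g (a, b)‖ ∂κ a with hH_def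
        have hH_meas : StronglyMeasurable H :=
          hg_meas.norm.stronglyMeasurable.integral_kernel_prod_right'
        have hH_nonneg : ∀ a, 0 ≤ H a := fun a => integral_nonneg fun b => norm_nonneg _
        have hH_top : ∫⁻ a, ENNReal.ofReal (H a) ∂μ = ⊤ := by
          by_contra h_ne
          refine hB ⟨hH_meas.aestronglyMeasurable, ?_⟩
          rw [hasFiniteIntegral_iff_norm]
          have : ∀ a, ENNReal.ofReal ‖H a‖ = ENNReal.ofReal (H a) := fun a => by
            rw [Real.norm_eq_abs, abs_of_nonneg (hH_nonneg a)]
          simp only [this]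
          exact lt_top_iff_ne_top.mpr h_ne
        have h_fiber : ∀ᵐ a ∂μ,
            ENNReal.ofReal (H a) ≤ klDiv (κ a) (η a) + ENNReal.ofReal (2 * Real.exp (-1)) := by
          filter_upwards [hae, h_llr_fiber, hfib] with a ha hll hInt
          have hInt' : Integrable (llr (κ a) (η a)) (κ a) := hInt.congr hll.symm
          have h3a := my_integral_abs_llr_le (κ a) (η a) ha hInt'
          have hH_eq : H a = ∫ b, |llr (κ a) (η a) b| ∂κ a := by
            refine integral_congr_ae ?_
            filter_upwards [hll] with b hb
            rw [Real.norm_eq_abs, hb]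
          rw [klDiv, if_pos ⟨ha, hInt'⟩, hH_eq]
          calc ENNReal.ofReal (∫ b, |llr (κ a) (η a) b| ∂κ a)
              ≤ ENNReal.ofReal (∫ b, llr (κ a) (η a) b ∂κ a + 2 * Real.exp (-1)) :=
                ENNReal.ofReal_le_ofReal h3a
            _ ≤ ENNReal.ofReal (∫ b, llr (κ a) (η a) b ∂κ a)
                + ENNReal.ofReal (2 * Real.exp (-1)) := ENNReal.ofReal_add_le
        have hle := lintegral_mono_ae h_fiber
        rw [hH_top, lintegral_add_right _ measurable_const, lintegral_const] at hle
        simp only [measure_univ, mul_one, top_le_iff] at hle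
        by_contra h_ne
        rw [ENNReal.add_eq_top] at hle
        rcases hle with h | h
        · exact h_ne h
        · exact (ENNReal.ofReal_ne_top) h
      · -- a positive measure set of fibers is not integrable
        set s : Set α := {a | ∫⁻ b, ‖g (a, b)‖₊ ∂κ a = ⊤} with hs_def
        have hs_meas : MeasurableSet s := by
          have : Measurable fun a => ∫⁻ b, (‖g (a, b)‖₊ : ℝ≥0∞) ∂κ a :=
            Measurable.lintegral_kernel_prod_right' hg_meas.nnnorm.coe_nnreal_ennreal
          exact this (measurableSet_singleton ⊤)
        have hs_int : ∀ a, a ∈ s ↔ ¬ Integrable (fun b => g (a, b)) (κ a) := by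
          intro a
          rw [hs_def, Set.mem_setOf_eq]
          constructor
          · intro htop hInt
            exact (lt_top_iff_ne_top.mp hInt.2) htop
          · intro hInt
            by_contra h
            exact hInt ⟨(hg_meas.comp measurable_prodMk_left).aestronglyMeasurable,
              lt_top_iff_ne_top.mpr h⟩
        have hs_pos : μ s ≠ 0 := by
          intro h0
          refine hfib ?_
          rw [ae_iff]
          convert h0 using 2
          ext a
          rw [Set.mem_setOf_eq, ← hs_int a]
        have h_fiber : ∀ᵐ a ∂μ, s.indicator (fun _ => (⊤ : ℝ≥0∞)) a ≤ klDiv (κ a) (η a) := by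
          filter_upwards [h_llr_fiber] with a hll
          by_cases ha : a ∈ s
          · rw [Set.indicator_of_mem ha]
            have : ¬ Integrable (llr (κ a) (η a)) (κ a) := by
              intro hInt
              exact (hs_int a).mp ha (hInt.congr hll)
            rw [klDiv, if_neg (fun h => this h.2)]
          · rw [Set.indicator_of_notMem ha]
            exact zero_le
        have hle := lintegral_mono_ae h_fiber
        rw [lintegral_indicator hs_meas, setLIntegral_const] at hle
        rw [ENNReal.top_mul hs_pos, top_le_iff] at hle
        exact hle
  · -- not AC: both sides ⊤
    rw [klDiv, if_neg (fun h => hac h.1)]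
    symm
    have h' : ¬ ∀ᵐ a ∂μ, κ a ≪ η a := fun h =>
      hac (Measure.AbsolutelyContinuous.compProd_right h)
    set s := {a | ¬ κ a ≪ η a} with hs_def
    have hs_meas : MeasurableSet s := (Kernel.measurableSet_absolutelyContinuous κ η).compl
    have hs_pos : μ s ≠ 0 := fun h0 => h' (by rw [ae_iff]; exact h0)
    have h_fiber : ∀ a, s.indicator (fun _ => (⊤ : ℝ≥0∞)) a ≤ klDiv (κ a) (η a) := by
      intro a
      by_cases ha : a ∈ s
      · rw [Set.indicator_of_mem ha, klDiv, if_neg (fun h => ha h.1)]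
      · rw [Set.indicator_of_notMem ha]
        exact zero_le
    have hle := lintegral_mono (μ := μ) h_fiber
    rw [lintegral_indicator hs_meas, setLIntegral_const, ENNReal.top_mul hs_pos, top_le_iff] at hle
    exact hle


end MyCG

lemma my_klDiv_map_equiv {α β : Type*} [MeasurableSpace α] [MeasurableSpace β] (e : α ≃ᵐ β)
    (μ ν : Measure α) [SigmaFinite μ] [SigmaFinite ν] :
    klDiv (μ.map e) (ν.map e) = klDiv μ ν := by
  have hac_iff : μ.map e ≪ ν.map e ↔ μ ≪ ν := by
    constructor
    · intro h
      have h2 := h.map (f := e.symm) e.symm.measurable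
      simp only [Measure.map_map e.symm.measurable e.measurable,
        MeasurableEquiv.symm_comp_self, Measure.map_id] at h2
      exact h2
    · exact fun h => h.map e.measurable
  by_cases hac : μ ≪ ν
  · have h1 : (fun x => llr (μ.map e) (ν.map e) (e x)) =ᵐ[μ] llr μ ν := by
      have h0 := MeasurableEmbedding.rnDeriv_map e.measurableEmbedding μ ν
      filter_upwards [hac.ae_le h0] with x hx
      simp only [llr_def]
      rw [hx]
    have hint_iff : Integrable (llr (μ.map e) (ν.map e)) (μ.map e) ↔ Integrable (llr μ ν) μ := by
      rw [integrable_map_measure (stronglyMeasurable_llr _ _).aestronglyMeasurable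
        e.measurable.aemeasurable]
      exact integrable_congr h1
    by_cases hi : Integrable (llr μ ν) μ
    · rw [klDiv, klDiv, if_pos ⟨hac_iff.mpr hac, hint_iff.mpr hi⟩, if_pos ⟨hac, hi⟩]
      congr 1
      rw [integral_map_equiv e]
      exact integral_congr_ae h1
    · rw [klDiv, klDiv, if_neg (fun h => hi (hint_iff.mp h.2)), if_neg (fun h => hi h.2)]
  · rw [klDiv, klDiv, if_neg (fun h => hac (hac_iff.mp h.1)), if_neg (fun h => hac h.1)]


end MyAux

/-- KL-divergence characterization of the ε-Markov chain parameter: with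
`ν = P_{Y|X} P_{Z|X} P_X` (first draw `x` from the law of `X`, then independently `y` from
`condDistrib Y X P x` and `z` from `condDistrib Z X P x`, arranged as `(y, x, z)`),
`KL( law(Y,X,Z) ‖ ν ) = ∫ KL( condDistrib Y (X,Z) P (x,z) ‖ condDistrib Y X P x ) d(law(X,Z))`. -/
theorem klDiv_epsilon_markov_characterization
    {Ω E₁ E₂ : Type*} [MeasurableSpace Ω]
    [MeasurableSpace E₁] [StandardBorelSpace E₁]
    [MeasurableSpace E₂] [StandardBorelSpace E₂] [Nonempty E₂]
    (P : Measure Ω) [IsProbabilityMeasure P]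
    (Y : Ω → ℝ) (X : Ω → E₁) (Z : Ω → E₂)
    (hY : Measurable Y) (hX : Measurable X) (hZ : Measurable Z)
    (ν : Measure (ℝ × E₁ × E₂))
    (hν : ν = (P.map X).bind fun x =>
      (condDistrib Y X P x).prod ((Measure.dirac x).prod (condDistrib Z X P x))) :
    klDiv (P.map fun ω => (Y ω, X ω, Z ω)) ν
      = ∫⁻ q, klDiv (condDistrib Y (fun ω => (X ω, Z ω)) P q) (condDistrib Y X P q.1)
          ∂(P.map fun ω => (X ω, Z ω)) := by
  have hXZ : Measurable fun ω => (X ω, Z ω) := hX.prodMk hZ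
  set ρ : Measure (E₁ × E₂) := P.map fun ω => (X ω, Z ω) with hρ
  haveI : IsProbabilityMeasure ρ := Measure.isProbabilityMeasure_map hXZ.aemeasurable
  set κ : Kernel (E₁ × E₂) ℝ := condDistrib Y (fun ω => (X ω, Z ω)) P with hκ
  set η : Kernel (E₁ × E₂) ℝ := (condDistrib Y X P).comap Prod.fst measurable_fst with hη
  haveI : IsMarkovKernel η := by rw [hη]; infer_instance
  set e : (E₁ × E₂) × ℝ ≃ᵐ ℝ × E₁ × E₂ := MeasurableEquiv.prodComm with he
  haveI : IsProbabilityMeasure (P.map fun ω => ((X ω, Z ω), Y ω)) :=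
    Measure.isProbabilityMeasure_map (hXZ.prodMk hY).aemeasurable
  have hdis : ρ ⊗ₘ κ = P.map (fun ω => ((X ω, Z ω), Y ω)) := by
    rw [hκ, condDistrib, hρ, ← Measure.fst_map_prodMk (X := fun ω => (X ω, Z ω)) hY,
      Measure.disintegrate]
  have h1 : (P.map fun ω => (Y ω, X ω, Z ω)) = (ρ ⊗ₘ κ).map e := by
    rw [hdis, Measure.map_map e.measurable (hXZ.prodMk hY)]
    rfl
  haveI : IsProbabilityMeasure (P.map X) := Measure.isProbabilityMeasure_map hX.aemeasurable
  have hρ2 : ρ = (P.map X) ⊗ₘ condDistrib Z X P := by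
    haveI : IsProbabilityMeasure (P.map fun ω => (X ω, Z ω)) :=
      Measure.isProbabilityMeasure_map hXZ.aemeasurable
    rw [condDistrib, ← Measure.fst_map_prodMk (X := X) hZ, Measure.disintegrate, hρ]
  set ξ : Kernel E₁ (ℝ × E₁ × E₂) :=
    (condDistrib Y X P) ×ₖ ((Kernel.deterministic id measurable_id) ×ₖ condDistrib Z X P) with hξ
  have hξ_apply : ∀ x, ξ x =
      (condDistrib Y X P x).prod ((Measure.dirac x).prod (condDistrib Z X P x)) := by
    intro x
    rw [hξ, Kernel.prod_apply, Kernel.prod_apply, Kernel.deterministic_apply]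
    rfl
  have hν' : ν = (P.map X).bind ξ := by
    rw [hν]
    congr 1
    funext x
    rw [hξ_apply]
  have hrect : ∀ s t, MeasurableSet s → MeasurableSet t →
      ((ρ ⊗ₘ η).map e) (s ×ˢ t) = ν (s ×ˢ t) := by
    intro s t hs ht
    have hcommon : ∀ x, (condDistrib Y X P) x s * (condDistrib Z X P) x (Prod.mk x ⁻¹' t)
        = ξ x (s ×ˢ t) := by
      intro x
      rw [hξ_apply, Measure.prod_prod, Measure.dirac_prod,
        Measure.map_apply measurable_prodMk_left ht]
    have hLHS : ((ρ ⊗ₘ η).map e) (s ×ˢ t)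
        = ∫⁻ x, (condDistrib Y X P) x s * (condDistrib Z X P) x (Prod.mk x ⁻¹' t) ∂(P.map X) := by
      rw [Measure.map_apply e.measurable (hs.prod ht)]
      have hpre : ⇑e ⁻¹' (s ×ˢ t) = t ×ˢ s := by
        rw [he]
        exact Set.preimage_swap_prod s t
      rw [hpre, Measure.compProd_apply_prod ht hs, hρ2]
      rw [← lintegral_indicator ht, Measure.lintegral_compProd]
      swap
      · exact ((Kernel.measurable_coe η hs).indicator ht).comp measurable_id
      congr 1
      funext x
      have : ∀ z, t.indicator (fun q => η q s) (x, z)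
          = (Prod.mk x ⁻¹' t).indicator (fun _ => (condDistrib Y X P) x s) z := by
        intro z
        classical
        simp only [Set.indicator_apply, Set.mem_preimage]
        congr 1
      simp only [this]
      rw [lintegral_indicator (measurable_prodMk_left ht), setLIntegral_const, mul_comm]
    rw [hLHS, hν', Measure.bind_apply (hs.prod ht) (Kernel.measurable ξ).aemeasurable]
    congr 1
    funext x
    rw [hcommon]
  have h2 : ν = (ρ ⊗ₘ η).map e := by
    symm
    refine ext_of_generate_finite _ generateFrom_prod.symm isPiSystem_prod ?_ ?_
    · rintro u ⟨s, hs, t, ht, rfl⟩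
      rw [hrect s t hs ht]
    · rw [← Set.univ_prod_univ, hrect _ _ MeasurableSet.univ MeasurableSet.univ]
  rw [h1, h2, my_klDiv_map_equiv e, my_klDiv_compProd]
  refine lintegral_congr fun q => ?_
  rw [hη, Kernel.comap_apply]
end
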